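/- arXiv:math/0003020 — 6 statements merged into one kernel-verified Lean document; each statement's English description precedes it below -/
import Mathlib

section
/- Let X and Y be real Banach spaces such that X contains a closed subspace isomorphic to c₀, let k ≥ 2 be an integer, and let P : X → Y be a continuous k-homogeneous polynomial. Then there is a series ∑ x_i in X which is weakly unconditionally Cauchy but not unconditionally convergent, and such that the series ∑ P(x_i) is unconditionally convergent in Y. -/
open Filter Topology Metric

noncomputable section

/-- The Banach space `c₀` of real sequences converging to zero, with the sup norm. -/
abbrev c0 : Type := ZeroAtInftyContinuousMap ℕ ℝ

/-- The unit vector basis of `c₀`. -/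
def e (n : ℕ) : c0 :=
  { toFun := fun i => if i = n then (1 : ℝ) else 0
    continuous_toFun := continuous_of_discreteTopology
    zero_at_infty' := by
      rw [Filter.cocompact_eq_cofinite]
      refine tendsto_const_nhds.congr' ?_
      have h : {n}ᶜ ∈ (Filter.cofinite : Filter ℕ) := by simp [Filter.cofinite]
      filter_upwards [h] with i hi
      simp only [Set.mem_compl_iff, Set.mem_singleton_iff] at hi
      simp [hi] }

/-- A series `∑ xₙ` is weakly unconditionally Cauchy (w.u.C.) if `∑ |φ (xₙ)| < ∞` for every
continuous linear functional `φ`. -/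
def WUC {X : Type*} [NormedAddCommGroup X] [NormedSpace ℝ X] (x : ℕ → X) : Prop :=
  ∀ φ : X →L[ℝ] ℝ, Summable fun n => |φ (x n)|

/-- A sequence is equivalent to the unit vector basis of `c₀`: there are `0 < c ≤ C` with
`c · maxᵢ |aᵢ| ≤ ‖∑ aᵢ xᵢ‖ ≤ C · maxᵢ |aᵢ|` for all finite scalar families. -/
def IsEquivC0Basis {X : Type*} [NormedAddCommGroup X] [NormedSpace ℝ X] (x : ℕ → X) : Prop :=
  ∃ c C : ℝ, 0 < c ∧ c ≤ C ∧ ∀ (n : ℕ) (a : ℕ → ℝ),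
    c * (⨆ i : Fin n, |a i|) ≤ ‖∑ i ∈ Finset.range n, a i • x i‖ ∧
    ‖∑ i ∈ Finset.range n, a i • x i‖ ≤ C * (⨆ i : Fin n, |a i|)

/-- A map (polynomial) is unconditionally converging if for every w.u.C. series `∑ xₙ` the
sequence of values at the partial sums converges in norm. -/
def UCPoly {X Y : Type*} [NormedAddCommGroup X] [NormedSpace ℝ X]
    [NormedAddCommGroup Y] [NormedSpace ℝ Y] (P : X → Y) : Prop :=
  ∀ x : ℕ → X, WUC x →
    ∃ L : Y, Tendsto (fun n => P (∑ i ∈ Finset.range n, x i)) atTop (𝓝 L)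

/-- An operator is unconditionally converging if it maps w.u.C. series to unconditionally
convergent series. -/
def UCOp {X Y : Type*} [NormedAddCommGroup X] [NormedSpace ℝ X]
    [NormedAddCommGroup Y] [NormedSpace ℝ Y] (T : X → Y) : Prop :=
  ∀ x : ℕ → X, WUC x → Summable fun n => T (x n)

/-- A map (polynomial or operator) is compact if the image of the closed unit ball is
relatively norm compact. -/
def CompactMap {X Y : Type*} [NormedAddCommGroup X] [NormedSpace ℝ X]
    [NormedAddCommGroup Y] [NormedSpace ℝ Y] (P : X → Y) : Prop :=
  IsCompact (closure (P '' Metric.closedBall 0 1))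

/-- A set is relatively weakly compact if its closure in the weak topology is compact. -/
def RelWeakCompact {Y : Type*} [NormedAddCommGroup Y] [NormedSpace ℝ Y] (s : Set Y) : Prop :=
  IsCompact (closure ((toWeakSpace ℝ Y) '' s))

/-- A WUC-set is the image of the closed unit ball of `c₀` under a bounded operator. -/
def IsWUCSet {X : Type*} [NormedAddCommGroup X] [NormedSpace ℝ X] (s : Set X) : Prop :=
  ∃ T : c0 →L[ℝ] X, s = ⇑T '' Metric.closedBall 0 1


lemma e_apply (m i : ℕ) : e m i = if i = m then (1:ℝ) else 0 := rfl

lemma c0_sum_apply (F : Finset ℕ) (f : ℕ → c0) (i : ℕ) : (∑ m ∈ F, f m) i = ∑ m ∈ F, f m i := by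
  classical
  induction F using Finset.induction with
  | empty => simp [ZeroAtInftyContinuousMap.coe_zero]
  | insert _ _ h ih => rw [Finset.sum_insert h, Finset.sum_insert h, ZeroAtInftyContinuousMap.coe_add]; simp [ih]

lemma c0_norm_apply_le (f : c0) (i : ℕ) : |f i| ≤ ‖f‖ := by
  rw [← ZeroAtInftyContinuousMap.norm_toBCF_eq_norm]
  exact f.toBCF.norm_coe_le_norm i

lemma c0_norm_le_of_apply (f : c0) (C : ℝ) (hC : 0 ≤ C) (h : ∀ i, |f i| ≤ C) : ‖f‖ ≤ C := by
  rw [← ZeroAtInftyContinuousMap.norm_toBCF_eq_norm]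
  exact (BoundedContinuousFunction.norm_le hC).2 h

lemma norm_e (m : ℕ) : ‖e m‖ = 1 := by
  apply le_antisymm
  · exact c0_norm_le_of_apply _ _ zero_le_one fun i => by rw [e_apply]; split <;> simp
  · simpa [e_apply] using c0_norm_apply_le (e m) m

lemma summable_abs_coord (ψ : c0 →L[ℝ] ℝ) : Summable fun m => |ψ (e m)| := by
  apply summable_of_sum_le (fun m => abs_nonneg _) (c := ‖ψ‖)
  intro F
  set s : ℕ → ℝ := fun m => if ψ (e m) < 0 then -1 else 1 with hs
  have key : ∑ m ∈ F, |ψ (e m)| = ψ (∑ m ∈ F, s m • e m) := by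
    rw [map_sum]
    refine Finset.sum_congr rfl fun m _ => ?_
    rw [map_smul]
    simp only [hs, smul_eq_mul]
    split <;> rename_i h
    · rw [abs_of_neg h]; ring
    · rw [abs_of_nonneg (not_lt.1 h)]; ring
  rw [key]
  calc ψ (∑ m ∈ F, s m • e m) ≤ ‖ψ (∑ m ∈ F, s m • e m)‖ := le_abs_self _
    _ ≤ ‖ψ‖ * ‖∑ m ∈ F, s m • e m‖ := ψ.le_opNorm _
    _ ≤ ‖ψ‖ * 1 := by
        refine mul_le_mul_of_nonneg_left ?_ (norm_nonneg ψ)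
        apply c0_norm_le_of_apply _ _ zero_le_one
        intro i
        rw [c0_sum_apply]
        by_cases hi : i ∈ F
        · rw [Finset.sum_eq_single i]
          · simp only [ZeroAtInftyContinuousMap.coe_smul, Pi.smul_apply, e_apply, if_pos rfl,
              smul_eq_mul, mul_one, hs]
            split <;> norm_num
          · intro b _ hb
            simp [ZeroAtInftyContinuousMap.coe_smul, e_apply, Ne.symm hb]
          · intro h; exact (h hi).elim
        · rw [Finset.sum_eq_zero, abs_zero]; · exact zero_le_one
          intro b hb
          have : i ≠ b := fun h => hi (h ▸ hb)
          simp [ZeroAtInftyContinuousMap.coe_smul, e_apply, this]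
    _ = ‖ψ‖ := mul_one _

lemma log2_spec1 (n : ℕ) : 2 ^ Nat.log2 (n+1) ≤ n + 1 := by
  rw [Nat.log2_eq_log_two]; exact Nat.pow_log_le_self 2 (Nat.succ_ne_zero n)

lemma log2_spec2 (n : ℕ) : n + 1 < 2 ^ (Nat.log2 (n+1) + 1) := by
  rw [Nat.log2_eq_log_two]; exact Nat.lt_pow_succ_log_self one_lt_two (n+1)

lemma log2_eq (m v : ℕ) (h1 : 2 ^ m ≤ v) (h2 : v < 2 ^ (m+1)) : Nat.log2 v = m := by
  rw [Nat.log2_eq_log_two]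
  exact Nat.log_eq_of_pow_le_of_lt_pow h1 h2

lemma block_summable (g : ℕ → ℝ) (hg : ∀ m, 0 ≤ g m)
    (h : Summable fun m => (2^m : ℝ) * g m) :
    Summable fun n => g (Nat.log2 (n+1)) := by
  set F : ℕ × ℕ → ℝ := fun p => if p.2 < 2^p.1 then g p.1 else 0 with hF
  have hFnn : 0 ≤ F := by intro p; simp only [hF]; split; exacts [hg _, le_refl 0]
  have hrow : ∀ m, ∑ r ∈ Finset.range (2^m), F (m, r) = (2^m : ℝ) * g m := by
    intro m
    rw [Finset.sum_congr rfl (fun r hr => if_pos (Finset.mem_range.1 hr))]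
    simp [mul_comm]
  have hrowsum : ∀ m, Summable fun r => F (m, r) := by
    intro m
    apply summable_of_ne_finset_zero (s := Finset.range (2^m))
    intro r hr
    exact if_neg (fun hc => hr (Finset.mem_range.2 hc))
  have hFs : Summable F := by
    rw [summable_prod_of_nonneg hFnn]
    refine ⟨hrowsum, ?_⟩
    have : ∀ m, ∑' r, F (m, r) = (2^m : ℝ) * g m := by
      intro m
      rw [tsum_eq_sum (s := Finset.range (2^m)) (fun r hr => if_neg (fun hc => hr (Finset.mem_range.2 hc)))]
      exact hrow m
    simpa [this] using h
  have hi : Function.Injective (fun n => (Nat.log2 (n+1), n + 1 - 2^(Nat.log2 (n+1))) : ℕ → ℕ × ℕ) := by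
    intro a b hab
    simp only [Prod.mk.injEq] at hab
    have h1 := log2_spec1 a
    have h2 := log2_spec1 b
    obtain ⟨hl, hs⟩ := hab
    rw [hl] at hs h1
    omega
  have := hFs.comp_injective hi
  refine this.congr fun n => ?_
  simp only [Function.comp, hF]
  rw [if_pos]
  have h1 := log2_spec1 n
  have h2 := log2_spec2 n
  have : (2:ℕ)^(Nat.log2 (n+1) + 1) = 2^(Nat.log2 (n+1)) * 2 := by ring
  omega

lemma pow_identity (k : ℕ) (hk : 2 ≤ k) (K : ℝ) (m : ℕ) :
    (2:ℝ)^m * ((((2:ℝ)^m)⁻¹)^k * K) = (((2:ℝ)^(k-1))⁻¹)^m * K := by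
  rw [← inv_pow, ← inv_pow, ← pow_mul, ← pow_mul]
  have h2 : (2:ℝ) ≠ 0 := two_ne_zero
  field_simp
  have hk' : m * k = m + (k - 1) * m := by
    obtain ⟨k', rfl⟩ : ∃ k', k = k' + 1 := ⟨k - 1, by omega⟩
    rw [Nat.add_sub_cancel]; ring
  rw [hk', pow_add, ← mul_assoc ((2:ℝ)^m), ← mul_pow,
    show (2:ℝ) * (1 / 2) = 1 by norm_num, one_pow, one_mul, mul_comm]


/-- If `X` contains a copy of `c₀` and `k ≥ 2`, every continuous `k`-homogeneous polynomial
`P : X → Y` admits a w.u.C. non-u.c. series `∑ xᵢ` with `∑ P xᵢ` unconditionally convergent. -/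
theorem wuc_not_uc_image_uc {X Y : Type*}
    [NormedAddCommGroup X] [NormedSpace ℝ X] [CompleteSpace X]
    [NormedAddCommGroup Y] [NormedSpace ℝ Y] [CompleteSpace Y]
    (hc0 : ∃ j : c0 →L[ℝ] X, ∃ c : ℝ, 0 < c ∧ ∀ z, c * ‖z‖ ≤ ‖j z‖)
    (k : ℕ) (hk : 2 ≤ k) (A : ContinuousMultilinearMap ℝ (fun _ : Fin k => X) Y) :
    ∃ x : ℕ → X, WUC x ∧ ¬ Summable x ∧ Summable fun i => A fun _ => x i := by
  obtain ⟨j, c, hc, hjc⟩ := hc0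
  set x : ℕ → X := fun n => ((2:ℝ)^(Nat.log2 (n+1)))⁻¹ • j (e (Nat.log2 (n+1))) with hx
  refine ⟨x, ?_, ?_, ?_⟩
  · -- WUC
    intro φ
    set ψ := φ.comp j with hψ
    have habs := summable_abs_coord ψ
    have hsum : Summable fun m : ℕ => (2:ℝ)^m * (((2:ℝ)^m)⁻¹ * |ψ (e m)|) := by
      refine habs.congr fun m => ?_
      field_simp
    have := block_summable (fun m => ((2:ℝ)^m)⁻¹ * |ψ (e m)|)
      (fun m => by positivity) hsum
    refine this.congr fun n => ?_
    simp only [hx, map_smul, smul_eq_mul, abs_mul]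
    rw [abs_of_nonneg (by positivity : (0:ℝ) ≤ ((2:ℝ)^(Nat.log2 (n+1)))⁻¹)]
    rfl
  · -- not summable
    intro hsum
    rw [summable_iff_vanishing] at hsum
    obtain ⟨s, hs⟩ := hsum (Metric.ball 0 c) (ball_mem_nhds 0 hc)
    set B := s.sup id with hB
    set M := B + 1 with hM
    have hMs : ∀ n ∈ s, n < 2^M - 1 := by
      intro n hn
      have h1 : n ≤ B := Finset.le_sup (f := id) hn
      have h2 : M < 2^M := Nat.lt_two_pow_self
      omega
    set t := Finset.Ico (2^M - 1) (2^(M+1) - 1) with ht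
    have hdisj : Disjoint t s := by
      rw [Finset.disjoint_left]
      intro n hnt hns
      rw [ht, Finset.mem_Ico] at hnt
      have := hMs n hns
      omega
    have hmem := hs t hdisj
    have hone : 1 ≤ 2^M := Nat.one_le_two_pow
    have hxconst : ∀ n ∈ t, x n = ((2:ℝ)^M)⁻¹ • j (e M) := by
      intro n hn
      rw [ht, Finset.mem_Ico] at hn
      have h2 : (2:ℕ)^(M+1) = 2^M * 2 := by ring
      have hl : Nat.log2 (n+1) = M := log2_eq M (n+1) (by omega) (by omega)
      simp only [hx, hl]
    have hsumt : ∑ n ∈ t, x n = j (e M) := by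
      rw [Finset.sum_congr rfl hxconst, Finset.sum_const]
      have h2 : (2:ℕ)^(M+1) = 2^M * 2 := by ring
      have hcard : t.card = 2^M := by
        rw [ht, Nat.card_Ico]; omega
      rw [hcard, ← Nat.cast_smul_eq_nsmul ℝ, smul_smul]
      push_cast
      rw [mul_inv_cancel₀ (by positivity), one_smul]
    rw [hsumt, mem_ball_zero_iff] at hmem
    have h1 : c * ‖e M‖ ≤ ‖j (e M)‖ := hjc _
    rw [norm_e, mul_one] at h1
    linarith
  · -- image summable
    set K := ‖A‖ * ‖j‖^k with hK
    have hK0 : 0 ≤ K := by positivity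
    apply Summable.of_norm_bounded (g := fun n => (((2:ℝ)^(Nat.log2 (n+1)))⁻¹)^k * K)
    · refine block_summable (fun m => (((2:ℝ)^m)⁻¹)^k * K) (fun m => by positivity) ?_
      · have hgeo : Summable fun m : ℕ => (((2:ℝ)^(k-1))⁻¹)^m * K := by
          apply Summable.mul_right
          apply summable_geometric_of_lt_one (by positivity)
          rw [inv_lt_one_iff₀]
          right
          have : (2:ℝ)^(1:ℕ) ≤ 2^(k-1) := pow_le_pow_right₀ one_le_two (by omega)
          norm_num at this ⊢
          linarith
        exact hgeo.congr fun m => (pow_identity k hk K m).symm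
    · intro n
      set m := Nat.log2 (n+1) with hm
      have hval : (A fun _ => x n) = (((2:ℝ)^m)⁻¹)^k • A (fun _ => j (e m)) := by
        simp only [hx]
        rw [show (fun _ : Fin k => ((2:ℝ)^m)⁻¹ • j (e m)) =
            (fun i : Fin k => (fun _ : Fin k => ((2:ℝ)^m)⁻¹) i • (fun _ : Fin k => j (e m)) i) from rfl,
          A.map_smul_univ]
        congr 1
        simp [Finset.prod_const]
      rw [hval, norm_smul, Real.norm_eq_abs,
        abs_of_nonneg (by positivity : (0:ℝ) ≤ (((2:ℝ)^m)⁻¹)^k)]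
      refine mul_le_mul_of_nonneg_left ?_ (by positivity)
      calc ‖A fun _ => j (e m)‖ ≤ ‖A‖ * ∏ _i : Fin k, ‖j (e m)‖ := A.le_opNorm _
        _ = ‖A‖ * ‖j (e m)‖^k := by rw [Finset.prod_const]; simp
        _ ≤ ‖A‖ * ‖j‖^k := by
            refine mul_le_mul_of_nonneg_left (pow_le_pow_left₀ (norm_nonneg _) ?_ k) (norm_nonneg A)
            have := j.le_opNorm (e m)
            rwa [norm_e, mul_one] at this
end
end

section
/- Let X be a real Banach space and k ≥ 1 an integer. If a sequence (xₙ) in X is equivalent to the c₀-basis, then the sequence of diagonal tensors (xₙ ⊗ ⋯ ⊗ xₙ) (k factors) in the k-fold algebraic tensor product ⊗^k X is equivalent to the c₀-basis with respect to the projective seminorm: there exist constants 0 < c ≤ C such that c·maxᵢ|aᵢ| ≤ π(∑_{i=1}^n aᵢ · x_i^{⊗k}) ≤ C·maxᵢ|aᵢ| for all n and all scalars a₁,…,aₙ. -/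
open Filter Topology Metric

noncomputable section

open scoped TensorProduct


namespace DiagAux

noncomputable section

def sgn (b : Bool) : ℝ := if b then 1 else -1

lemma sgn_mul_self (b : Bool) : sgn b * sgn b = 1 := by cases b <;> simp [sgn]

lemma abs_sgn (b : Bool) : |sgn b| = 1 := by cases b <;> simp [sgn]

lemma sgn_not (b : Bool) : sgn (!b) = -sgn b := by cases b <;> simp [sgn]

lemma sign_orth {n : ℕ} (u w : Fin n) :
    ∑ g : Fin n → Bool, sgn (g u) * sgn (g w) = if u = w then (2:ℝ)^n else 0 := by
  rcases eq_or_ne u w with rfl | huw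
  · rw [if_pos rfl]
    rw [Finset.sum_congr rfl fun g _ => sgn_mul_self (g u)]
    rw [Finset.sum_const, Finset.card_univ]
    simp [Fintype.card_fun]
  · rw [if_neg huw]
    have hinv : Function.Involutive
        (fun g : Fin n → Bool => Function.update g u (!g u)) := by
      intro g; funext i
      rcases eq_or_ne i u with rfl | hi
      · simp
      · simp [Function.update_of_ne hi]
    have key := Equiv.sum_comp (Function.Involutive.toPerm _ hinv)
      (fun g : Fin n → Bool => sgn (g u) * sgn (g w))
    have key2 : ∀ g : Fin n → Bool,
        sgn (((Function.Involutive.toPerm _ hinv) g) u) * sgn (((Function.Involutive.toPerm _ hinv) g) w)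
          = -(sgn (g u) * sgn (g w)) := by
      intro g
      have h1 : ((Function.Involutive.toPerm _ hinv) g) u = !g u := by
        simp [Function.Involutive.coe_toPerm]
      have h2 : ((Function.Involutive.toPerm _ hinv) g) w = g w := by
        simp [Function.Involutive.coe_toPerm, Function.update_of_ne (Ne.symm huw)]
      rw [h1, h2, sgn_not, neg_mul]
    rw [Finset.sum_congr rfl fun g _ => key2 g] at key
    rw [Finset.sum_neg_distrib] at key
    linarith

variable {m n : ℕ}

/-- The coefficient of `x j` in slot `t` of the sign-averaging representation. -/
def coef (a : Fin n → ℝ) (δ : Fin m → Fin n → Bool) (t : Fin (m+1)) (j : Fin n) : ℝ :=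
  (if h : (t : ℕ) < m then sgn (δ ⟨t, h⟩ j) else 1) *
  (if h : 0 < (t : ℕ) then sgn (δ ⟨(t : ℕ) - 1, by have := t.isLt; omega⟩ j) else a j)

lemma abs_coef_zero_le (a : Fin n → ℝ) (δ : Fin m → Fin n → Bool) (j : Fin n) :
    |coef a δ 0 j| ≤ |a j| := by
  unfold coef
  rw [abs_mul]
  have h2 : ¬ (0 < ((0 : Fin (m+1)) : ℕ)) := by simp
  rw [dif_neg h2]
  have h1 : |if h : ((0 : Fin (m+1)) : ℕ) < m then sgn (δ ⟨(0 : Fin (m+1)), h⟩ j) else 1| ≤ 1 := by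
    split
    · rw [abs_sgn]
    · simp
  calc |if h : ((0 : Fin (m+1)) : ℕ) < m then sgn (δ ⟨(0 : Fin (m+1)), h⟩ j) else 1| * |a j|
      ≤ 1 * |a j| := by
        exact mul_le_mul_of_nonneg_right h1 (abs_nonneg _)
    _ = |a j| := one_mul _

lemma abs_coef_succ_le (a : Fin n → ℝ) (δ : Fin m → Fin n → Bool) (s : Fin m) (j : Fin n) :
    |coef a δ s.succ j| ≤ 1 := by
  unfold coef
  rw [abs_mul]
  have h2 : 0 < ((s.succ : Fin (m+1)) : ℕ) := by simp
  rw [dif_pos h2, abs_sgn, mul_one]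
  split
  · rw [abs_sgn]
  · simp

lemma prod_coef (a : Fin n → ℝ) (δ : Fin m → Fin n → Bool) (p : Fin (m+1) → Fin n) :
    ∏ t, coef a δ t (p t)
      = a (p 0) * ∏ s : Fin m, (sgn (δ s (p s.castSucc)) * sgn (δ s (p s.succ))) := by
  unfold coef
  rw [Finset.prod_mul_distrib]
  have hL : (∏ t : Fin (m+1), if h : (t : ℕ) < m then sgn (δ ⟨t, h⟩ (p t)) else 1)
      = ∏ s : Fin m, sgn (δ s (p s.castSucc)) := by
    rw [Fin.prod_univ_castSucc]
    rw [dif_neg (by simp)]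
    rw [mul_one]
    refine Finset.prod_congr rfl fun s _ => ?_
    rw [dif_pos (by simpa using s.isLt)]
    congr 2
  have hP : (∏ t : Fin (m+1), if h : 0 < (t : ℕ) then
        sgn (δ ⟨(t : ℕ) - 1, by have := t.isLt; omega⟩ (p t)) else a (p t))
      = a (p 0) * ∏ s : Fin m, sgn (δ s (p s.succ)) := by
    rw [Fin.prod_univ_succ]
    rw [dif_neg (by simp)]
    congr 1
  rw [hL, hP, Finset.prod_mul_distrib]
  ring

set_option maxHeartbeats 1000000 in
lemma sum_prod_coef (a : Fin n → ℝ) (p : Fin (m+1) → Fin n) :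
    ∑ δ : Fin m → Fin n → Bool, ∏ t, coef a δ t (p t)
      = if ∀ t, p t = p 0 then (2:ℝ)^(n*m) * a (p 0) else 0 := by
  classical
  rw [Finset.sum_congr rfl fun δ _ => prod_coef a δ p]
  rw [← Finset.mul_sum]
  have hps : ∑ δ : Fin m → Fin n → Bool,
      ∏ s : Fin m, (sgn (δ s (p s.castSucc)) * sgn (δ s (p s.succ)))
        = ∏ s : Fin m, ∑ g : Fin n → Bool, sgn (g (p s.castSucc)) * sgn (g (p s.succ)) :=
    (Fintype.prod_sum (κ := fun _ : Fin m => Fin n → Bool) (fun s g => sgn (g (p s.castSucc)) * sgn (g (p s.succ)))).symm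
  rw [hps]
  rw [Finset.prod_congr rfl fun s _ => sign_orth (p s.castSucc) (p s.succ)]
  by_cases hall : ∀ s : Fin m, p s.castSucc = p s.succ
  · have hconst : ∀ t, p t = p 0 := by
      intro t
      induction t using Fin.induction with
      | zero => rfl
      | succ s ih => rw [← hall s]; exact ih
    rw [if_pos hconst]
    rw [Finset.prod_congr rfl fun s _ => if_pos (hall s), Finset.prod_const, Finset.card_univ,
      Fintype.card_fin, ← pow_mul, mul_comm]
  · obtain ⟨s, hs⟩ := not_forall.mp hall
    rw [Finset.prod_eq_zero (Finset.mem_univ s)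
      (show (if p s.castSucc = p s.succ then (2:ℝ)^n else 0) = 0 from if_neg hs), mul_zero, if_neg]
    intro hconst
    exact hall fun s' => by rw [hconst s'.castSucc, hconst s'.succ]

open PiTensorProduct in
lemma diag_identity {X : Type*} [AddCommGroup X] [Module ℝ X] (m n : ℕ)
    (y : Fin n → X) (a : Fin n → ℝ) :
    ∑ δ : Fin m → Fin n → Bool,
        tprod ℝ (fun t : Fin (m+1) => ∑ j : Fin n, coef a δ t j • y j)
      = (2:ℝ)^(n*m) • ∑ j : Fin n, a j • tprod ℝ (fun _ : Fin (m+1) => y j) := by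
  classical
  have expand : ∀ δ : Fin m → Fin n → Bool,
      tprod ℝ (fun t : Fin (m+1) => ∑ j : Fin n, coef a δ t j • y j)
        = ∑ p : Fin (m+1) → Fin n,
            (∏ t, coef a δ t (p t)) • tprod ℝ (fun t => y (p t)) := by
    intro δ
    rw [MultilinearMap.map_sum (PiTensorProduct.tprod ℝ) (fun t j => coef a δ t j • y j)]
    exact Finset.sum_congr rfl fun p _ => MultilinearMap.map_smul_univ _ _ _
  rw [Finset.sum_congr rfl fun δ _ => expand δ]
  rw [Finset.sum_comm]
  rw [Finset.sum_congr rfl fun p _ => by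
    rw [← Finset.sum_smul, sum_prod_coef a p]]
  have collapse : ∀ p : Fin (m+1) → Fin n,
      (if ∀ t, p t = p 0 then (2:ℝ)^(n*m) * a (p 0) else 0) • tprod ℝ (fun t => y (p t))
        = ∑ j : Fin n, (if p = Function.const _ j then
            ((2:ℝ)^(n*m) * a j) • tprod ℝ (fun _ : Fin (m+1) => y j) else 0) := by
    intro p
    by_cases hconst : ∀ t, p t = p 0
    · rw [if_pos hconst]
      have hcond : ∀ j : Fin n, (p = Function.const (Fin (m+1)) j) ↔ (j = p 0) := by
        intro j
        constructor
        · intro h; rw [h]; rfl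
        · intro h; subst h; funext t; exact hconst t
      simp only [hcond]
      rw [Finset.sum_ite_eq' Finset.univ (p 0)
        (fun j => ((2:ℝ)^(n*m) * a j) • tprod ℝ (fun _ : Fin (m+1) => y j))]
      rw [if_pos (Finset.mem_univ _)]
      have hy : (fun t : Fin (m+1) => y (p t)) = fun _ : Fin (m+1) => y (p 0) :=
        funext fun t => by rw [hconst t]
      rw [hy]
    · rw [if_neg hconst, zero_smul]
      refine (Finset.sum_eq_zero fun j _ => if_neg fun h => hconst fun t => ?_).symm
      rw [h]
      rfl
  rw [Finset.sum_congr rfl fun p _ => collapse p]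
  rw [Finset.sum_comm]
  rw [Finset.sum_congr rfl fun j _ => Finset.sum_ite_eq' Finset.univ (Function.const (Fin (m+1)) j)
      (fun _ => ((2:ℝ)^(n*m) * a j) • tprod ℝ (fun _ : Fin (m+1) => y j))]
  rw [Finset.smul_sum]
  exact Finset.sum_congr rfl fun j _ => by rw [if_pos (Finset.mem_univ _), smul_smul]

end

end DiagAux


open PiTensorProduct in
/-- The diagonal polynomial `γₖ : X → ⊗^k X` takes sequences equivalent to the `c₀`-basis to
sequences equivalent to the `c₀`-basis for the projective seminorm. -/
theorem diagonal_tensor_equiv_c0_basis {X : Type*}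
    [NormedAddCommGroup X] [NormedSpace ℝ X] [CompleteSpace X]
    (k : ℕ) (hk : 1 ≤ k) (x : ℕ → X) (hx : IsEquivC0Basis x) :
    ∃ c C : ℝ, 0 < c ∧ c ≤ C ∧ ∀ (n : ℕ) (a : ℕ → ℝ),
      c * (⨆ i : Fin n, |a i|) ≤
        projectiveSeminorm (∑ i ∈ Finset.range n, a i • tprod ℝ (fun _ : Fin k => x i)) ∧
      projectiveSeminorm (∑ i ∈ Finset.range n, a i • tprod ℝ (fun _ : Fin k => x i)) ≤
        C * (⨆ i : Fin n, |a i|) := by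
  classical
  obtain ⟨c, C, hc, hcC, h⟩ := hx
  have hC : 0 < C := lt_of_lt_of_le hc hcC
  obtain ⟨m, rfl⟩ : ∃ m, k = m + 1 := ⟨k - 1, by omega⟩
  refine ⟨c ^ (m+1), C ^ (m+1), pow_pos hc _, pow_le_pow_left₀ hc.le hcC _, ?_⟩
  intro n a
  rcases Nat.eq_zero_or_pos n with rfl | hn
  · simp [Real.iSup_of_isEmpty]
  haveI : Nonempty (Fin n) := ⟨⟨0, hn⟩⟩
  set M := ⨆ i : Fin n, |a ↑i| with hM
  have hbdd : BddAbove (Set.range fun i : Fin n => |a ↑i|) :=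
    Set.Finite.bddAbove (Set.finite_range _)
  have hM0 : 0 ≤ M :=
    le_trans (abs_nonneg _) (le_ciSup hbdd (Classical.arbitrary (Fin n)))
  set z := ∑ i ∈ Finset.range n, a i • tprod ℝ (fun _ : Fin (m+1) => x i) with hzdef
  have hzfin : z = ∑ j : Fin n, a ↑j • tprod ℝ (fun _ : Fin (m+1) => x ↑j) :=
    Finset.sum_range fun i => a i • tprod ℝ (fun _ : Fin (m+1) => x i)
  -- a helper upper bound
  have hnorm_le : ∀ (g : Fin n → ℝ) (K : ℝ), (∀ i, |g i| ≤ K) →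
      ‖∑ j : Fin n, g j • x ↑j‖ ≤ C * K := by
    intro g K hK
    set gN : ℕ → ℝ := fun i0 => if h0 : i0 < n then g ⟨i0, h0⟩ else 0 with hgN
    have hconv : ∑ i ∈ Finset.range n, gN i • x i = ∑ j : Fin n, g j • x ↑j := by
      rw [Finset.sum_range]
      exact Finset.sum_congr rfl fun i _ => by simp [gN]
    have hsup : (⨆ i : Fin n, |gN ↑i|) ≤ K := ciSup_le fun i => by
      simpa [gN] using hK i
    calc ‖∑ j : Fin n, g j • x ↑j‖ = ‖∑ i ∈ Finset.range n, gN i • x i‖ := by rw [hconv]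
      _ ≤ C * ⨆ i : Fin n, |gN ↑i| := (h n gN).2
      _ ≤ C * K := mul_le_mul_of_nonneg_left hsup hC.le
  constructor
  · -- lower bound
    set y : Fin n → X := fun j => x ↑j with hy
    have hli : LinearIndependent ℝ y := by
      rw [Fintype.linearIndependent_iff]
      intro g hg i
      set gN : ℕ → ℝ := fun i0 => if h0 : i0 < n then g ⟨i0, h0⟩ else 0 with hgN
      have hsum : ∑ i2 ∈ Finset.range n, gN i2 • x i2 = 0 := by
        rw [Finset.sum_range]
        rw [Finset.sum_congr rfl fun i1 (_ : i1 ∈ Finset.univ) => by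
          show gN ↑i1 • x ↑i1 = g i1 • y i1
          simp [gN, hy]]
        exact hg
      have hb := (h n gN).1
      rw [hsum, norm_zero] at hb
      have hsup0 : (⨆ i1 : Fin n, |gN ↑i1|) ≤ 0 := by
        by_contra hpos
        push_neg at hpos
        nlinarith
      have : |g i| ≤ 0 := le_trans (by simp [gN]) (le_trans (le_ciSup
        (Set.Finite.bddAbove (Set.finite_range _)) i) hsup0)
      exact abs_nonpos_iff.mp this
    haveI : FiniteDimensional ℝ (Submodule.span ℝ (Set.range y)) :=
      FiniteDimensional.span_of_finite ℝ (Set.finite_range y)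
    set b := Module.Basis.span hli with hb
    suffices hs : ∀ j : Fin n, |a ↑j| ≤ (c^(m+1))⁻¹ * projectiveSeminorm z by
      have hMle : M ≤ (c^(m+1))⁻¹ * projectiveSeminorm z := ciSup_le hs
      calc c^(m+1) * M ≤ c^(m+1) * ((c^(m+1))⁻¹ * projectiveSeminorm z) :=
            mul_le_mul_of_nonneg_left hMle (pow_pos hc _).le
        _ = projectiveSeminorm z := by
            rw [← mul_assoc, mul_inv_cancel₀ (pow_pos hc _).ne', one_mul]
    intro j
    have hker : ∀ v : Submodule.span ℝ (Set.range y), |b.coord j v| ≤ c⁻¹ * ‖v‖ := by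
      intro v
      have hrepr : (v : X) = ∑ i : Fin n, b.repr v i • y i := by
        conv_lhs => rw [← b.sum_repr v]
        rw [Submodule.coe_sum]
        exact Finset.sum_congr rfl fun i _ => by
          rw [SetLike.val_smul, Module.Basis.span_apply]
      set rN : ℕ → ℝ := fun i0 => if h0 : i0 < n then b.repr v ⟨i0, h0⟩ else 0 with hrN
      have hsum2 : ∑ i ∈ Finset.range n, rN i • x i = (v : X) := by
        rw [Finset.sum_range, hrepr]
        exact Finset.sum_congr rfl fun i _ => by simp [rN, hy]
      have hb2 := (h n rN).1
      rw [hsum2] at hb2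
      have hvn : ‖(v : X)‖ = ‖v‖ := rfl
      rw [hvn] at hb2
      have hj : |b.coord j v| ≤ ⨆ i : Fin n, |rN ↑i| := by
        have := le_ciSup (Set.Finite.bddAbove (Set.finite_range fun i : Fin n => |rN ↑i|)) j
        simpa [rN, Module.Basis.coord_apply] using this
      have hsupv : (⨆ i : Fin n, |rN ↑i|) ≤ c⁻¹ * ‖v‖ := by
        rw [le_inv_mul_iff₀ hc]
        exact hb2
      exact le_trans hj hsupv
    have hf : ∀ v : Submodule.span ℝ (Set.range y),
        ‖(LinearMap.toContinuousLinearMap (b.coord j)) v‖ ≤ c⁻¹ * ‖v‖ := by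
      intro v
      simpa [Real.norm_eq_abs] using hker v
    obtain ⟨φ, hφe, hφn⟩ :=
      exists_extension_norm_eq (Submodule.span ℝ (Set.range y))
        (LinearMap.toContinuousLinearMap (b.coord j))
    have hφnorm : ‖φ‖ ≤ c⁻¹ := by
      rw [hφn]
      exact ContinuousLinearMap.opNorm_le_bound _ (inv_nonneg.2 hc.le) hf
    have hφx : ∀ i : Fin n, φ (y i) = if i = j then 1 else 0 := by
      intro i
      have h1 : y i = ((b i : Submodule.span ℝ (Set.range y)) : X) := by
        rw [hb, Module.Basis.span_apply]
      rw [h1, hφe (b i)]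
      show (LinearMap.toContinuousLinearMap (b.coord j)) (b i) = _
      simp only [LinearMap.coe_toContinuousLinearMap', Module.Basis.coord_apply, Module.Basis.repr_self]
      rw [Finsupp.single_apply]
    set G := ContinuousMultilinearMap.compContinuousLinearMap
      (ContinuousMultilinearMap.mkPiAlgebra ℝ (Fin (m+1)) ℝ) (fun _ => φ) with hG
    have hGnorm : ‖G‖ ≤ c⁻¹ ^ (m+1) := by
      refine le_trans (ContinuousMultilinearMap.norm_compContinuousLinearMap_le _ _) ?_
      calc ‖ContinuousMultilinearMap.mkPiAlgebra ℝ (Fin (m+1)) ℝ‖ * ∏ _t : Fin (m+1), ‖φ‖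
          ≤ 1 * ∏ _t : Fin (m+1), c⁻¹ := by
            refine mul_le_mul ContinuousMultilinearMap.norm_mkPiAlgebra_le
              (Finset.prod_le_prod (fun _ _ => norm_nonneg _) (fun _ _ => hφnorm))
              (Finset.prod_nonneg fun _ _ => norm_nonneg _) zero_le_one
        _ = c⁻¹ ^ (m+1) := by simp
    have heval : lift G.toMultilinearMap z = a ↑j := by
      rw [hzfin, map_sum]
      have hterm : ∀ i : Fin n,
          lift G.toMultilinearMap (a ↑i • tprod ℝ (fun _ : Fin (m+1) => x ↑i))
            = (if i = j then a ↑i else 0) := by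
        intro i
        rw [map_smul, lift.tprod]
        have : G.toMultilinearMap (fun _ : Fin (m+1) => x ↑i)
            = (φ (y i)) ^ (m+1) := by
          show G (fun _ : Fin (m+1) => x ↑i) = _
          rw [hG]
          rw [ContinuousMultilinearMap.compContinuousLinearMap_apply,
            ContinuousMultilinearMap.mkPiAlgebra_apply]
          rw [Finset.prod_const, Finset.card_univ, Fintype.card_fin]
        rw [this, hφx i]
        rcases eq_or_ne i j with rfl | hij
        · simp
        · simp [hij, zero_pow (Nat.succ_ne_zero m)]
      rw [Finset.sum_congr rfl fun i _ => hterm i]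
      rw [Finset.sum_ite_eq' Finset.univ j (fun i : Fin n => a ↑i)]
      rw [if_pos (Finset.mem_univ _)]
    have hle : ‖lift G.toMultilinearMap z‖ ≤ projectiveSeminorm z * ‖G‖ := by
      rw [mul_comm]; exact norm_eval_le_projectiveSeminorm G z
    rw [heval, Real.norm_eq_abs] at hle
    calc |a ↑j| ≤ projectiveSeminorm z * ‖G‖ := hle
      _ ≤ projectiveSeminorm z * (c⁻¹ ^ (m+1)) :=
          mul_le_mul_of_nonneg_left hGnorm (apply_nonneg _ _)
      _ = (c^(m+1))⁻¹ * projectiveSeminorm z := by rw [← inv_pow]; ring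
  · -- upper bound
    set A : Fin n → ℝ := fun j => a ↑j with hA
    have h2 : (0:ℝ) < 2^(n*m) := by positivity
    have hid := DiagAux.diag_identity (X := X) m n (fun j : Fin n => x ↑j) A
    have hzS : z = ((2:ℝ)^(n*m))⁻¹ • ∑ δ : Fin m → Fin n → Bool,
        tprod ℝ (fun t : Fin (m+1) => ∑ j : Fin n, DiagAux.coef A δ t j • x ↑j) := by
      rw [hid, inv_smul_smul₀ h2.ne', hzfin]
    have hδbound : ∀ δ : Fin m → Fin n → Bool,
        projectiveSeminorm (tprod ℝ (fun t : Fin (m+1) =>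
          ∑ j : Fin n, DiagAux.coef A δ t j • x ↑j)) ≤ (C * M) * C^m := by
      intro δ
      refine le_trans (projectiveSeminorm_tprod_le _) ?_
      rw [Fin.prod_univ_succ]
      have h0 : ‖∑ j : Fin n, DiagAux.coef A δ 0 j • x ↑j‖ ≤ C * M := by
        refine hnorm_le _ M fun i => ?_
        exact le_trans (DiagAux.abs_coef_zero_le A δ i) (le_ciSup hbdd i)
      have hsucc : ∀ s : Fin m, ‖∑ j : Fin n, DiagAux.coef A δ s.succ j • x ↑j‖ ≤ C := by
        intro s
        simpa using hnorm_le (fun i => DiagAux.coef A δ s.succ i) 1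
          (fun i => DiagAux.abs_coef_succ_le A δ s i)
      refine mul_le_mul h0 ?_ (Finset.prod_nonneg fun _ _ => norm_nonneg _)
        (mul_nonneg hC.le hM0)
      calc ∏ s : Fin m, ‖∑ j : Fin n, DiagAux.coef A δ s.succ j • x ↑j‖
          ≤ ∏ _s : Fin m, C :=
            Finset.prod_le_prod (fun _ _ => norm_nonneg _) (fun s _ => hsucc s)
        _ = C^m := by simp
    have hcard : (Fintype.card (Fin m → Fin n → Bool) : ℝ) = 2^(n*m) := by
      rw [Fintype.card_fun, Fintype.card_fun]
      push_cast
      rw [Fintype.card_bool, Fintype.card_fin, Fintype.card_fin]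
      push_cast
      rw [← pow_mul]
    have hS_le : projectiveSeminorm (∑ δ : Fin m → Fin n → Bool,
        tprod ℝ (fun t : Fin (m+1) => ∑ j : Fin n, DiagAux.coef A δ t j • x ↑j))
          ≤ (2:ℝ)^(n*m) * ((C * M) * C^m) := by
      refine le_trans (Finset.le_sum_of_subadditive (⇑projectiveSeminorm)
        (map_zero _).le (fun u v => map_add_le_add _ u v) _ _) ?_
      calc ∑ δ : Fin m → Fin n → Bool, projectiveSeminorm
            (tprod ℝ (fun t : Fin (m+1) => ∑ j : Fin n, DiagAux.coef A δ t j • x ↑j))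
          ≤ ∑ _δ : Fin m → Fin n → Bool, (C * M) * C^m :=
            Finset.sum_le_sum fun δ _ => hδbound δ
        _ = (2:ℝ)^(n*m) * ((C * M) * C^m) := by
            rw [Finset.sum_const, Finset.card_univ, nsmul_eq_mul, hcard]
    calc projectiveSeminorm z
        = ((2:ℝ)^(n*m))⁻¹ * projectiveSeminorm (∑ δ : Fin m → Fin n → Bool,
            tprod ℝ (fun t : Fin (m+1) => ∑ j : Fin n, DiagAux.coef A δ t j • x ↑j)) := by
          rw [hzS, map_smul_eq_mul, Real.norm_eq_abs, abs_of_pos (inv_pos.2 h2)]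
      _ ≤ ((2:ℝ)^(n*m))⁻¹ * ((2:ℝ)^(n*m) * ((C * M) * C^m)) :=
          mul_le_mul_of_nonneg_left hS_le (inv_pos.2 h2).le
      _ = C^(m+1) * M := by
          rw [← mul_assoc, inv_mul_cancel₀ h2.ne', one_mul]
          ring
end
end

section
/- Let X and Y be real Banach spaces, k ≥ 1 an integer and P : X → Y a continuous k-homogeneous polynomial. The following are equivalent: (B) every sequence (xₙ) in X equivalent to the c₀-basis has a subsequence (x_{n_i}) such that (P(x_{n_i})) is a sequence in Y equivalent to the c₀-basis; (E) for every sequence (xₙ) in X equivalent to the c₀-basis, the sequence ‖P(xₙ)‖ does not converge to 0. -/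
open Filter Topology Metric

noncomputable section

namespace BEproof
open Finset

def sgn (b : Bool) : ℝ := if b then 1 else -1

lemma abs_sgn (b : Bool) : |sgn b| = 1 := by cases b <;> simp [sgn]

lemma sgn_not (b : Bool) : sgn (!b) = - sgn b := by cases b <;> simp [sgn]

lemma sgn_sq (b : Bool) : sgn b * sgn b = 1 := by cases b <;> simp [sgn]

lemma sum_sgn_mul (n : ℕ) (p q : Fin n) :
    ∑ row : Fin n → Bool, sgn (row p) * sgn (row q)
      = if p = q then ((2:ℝ)^n) else 0 := by
  classical
  rcases eq_or_ne p q with h | h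
  · subst h
    simp only [if_pos rfl, sgn_sq]
    rw [Finset.sum_const]
    simp [Fintype.card_fun]
  · rw [if_neg h]
    refine Finset.sum_involution
      (fun row _ => Function.update row p (!row p)) ?_ ?_ (fun _ _ => Finset.mem_univ _) ?_
    · intro row _
      simp only [Function.update_self, Function.update_of_ne (Ne.symm h)]
      rw [sgn_not]; ring
    · intro row _ hf hgr
      have := congrFun hgr p
      simp only [Function.update_self] at this
      cases hb : row p <;> rw [hb] at this <;> simp at this
    · intro row _
      funext j
      rcases eq_or_ne j p with rfl | hj
      · simp [Function.update_self]
      · simp [Function.update_of_ne hj]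

lemma finSup_nonneg {n : ℕ} (a : ℕ → ℝ) : 0 ≤ ⨆ i : Fin n, |a i| := by
  rcases Nat.eq_zero_or_pos n with h | h
  · subst h; simp [Real.iSup_of_isEmpty]
  · refine le_trans (abs_nonneg (a 0)) ?_
    exact le_ciSup (f := fun i : Fin n => |a (i : ℕ)|)
      (Set.Finite.bddAbove (Set.finite_range _)) ⟨0, h⟩

lemma le_finSup {n : ℕ} (a : ℕ → ℝ) (i : Fin n) : |a i| ≤ ⨆ i : Fin n, |a i| :=
  le_ciSup (f := fun i : Fin n => |a (i : ℕ)|)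
    (Set.Finite.bddAbove (Set.finite_range _)) i

lemma finSup_le {n : ℕ} {a : ℕ → ℝ} {b : ℝ} (hb : 0 ≤ b) (h : ∀ i : Fin n, |a i| ≤ b) :
    (⨆ i : Fin n, |a i|) ≤ b := by
  rcases Nat.eq_zero_or_pos n with hn | hn
  · subst hn; simp only [Real.iSup_of_isEmpty]; exact hb
  · have : Nonempty (Fin n) := ⟨⟨0, hn⟩⟩
    exact ciSup_le h

/-- Key averaging lemma: the diagonal values of a scalar multilinear map along a
sequence with a `c₀` upper estimate are absolutely summable, with explicit bound. -/
lemma lemA {X : Type*} [NormedAddCommGroup X] [NormedSpace ℝ X] {k' : ℕ}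
    (B : ContinuousMultilinearMap ℝ (fun _ : Fin (k'+1) => X) ℝ)
    {C : ℝ} (hC : 0 ≤ C) (x : ℕ → X)
    (hx : ∀ (n : ℕ) (a : ℕ → ℝ), ‖∑ i ∈ Finset.range n, a i • x i‖ ≤ C * ⨆ i : Fin n, |a i|)
    (n : ℕ) :
    ∑ i ∈ Finset.range n, |B (fun _ => x i)| ≤ ‖B‖ * C ^ (k'+1) := by
  classical
  set σ : Fin n → ℝ := fun i => if 0 ≤ B (fun _ => x i) then 1 else -1 with hσ
  have hσabs : ∀ i : Fin n, σ i * B (fun _ => x i) = |B (fun _ => x i)| := by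
    intro i
    by_cases h : 0 ≤ B (fun _ => x i)
    · simp [hσ, h, abs_of_nonneg h]
    · simp [hσ, h, abs_of_neg (lt_of_not_ge h)]
  have hσ1 : ∀ i : Fin n, |σ i| = 1 := by
    intro i; by_cases h : 0 ≤ B (fun _ => x i) <;> simp [hσ, h]
  set c : (Fin k' → Fin n → Bool) → Fin (k'+1) → Fin n → ℝ :=
    fun ε => Fin.snoc (fun l i => sgn (ε l i))
      (fun i => σ i * ∏ l : Fin k', sgn (ε l i)) with hc
  have hcabs : ∀ ε (j : Fin (k'+1)) (i : Fin n), |c ε j i| = 1 := by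
    intro ε j i
    induction j using Fin.lastCases with
    | last =>
      simp only [hc, Fin.snoc_last]
      rw [abs_mul, Finset.abs_prod, hσ1]
      simp [abs_sgn]
    | cast l =>
      simp only [hc, Fin.snoc_castSucc]
      exact abs_sgn _
  have hu : ∀ ε (j : Fin (k'+1)), ‖∑ i : Fin n, c ε j i • x i‖ ≤ C := by
    intro ε j
    set a : ℕ → ℝ := fun i => if h : i < n then c ε j ⟨i, h⟩ else 0 with ha
    have h1 : ∑ i : Fin n, c ε j i • x i = ∑ i ∈ Finset.range n, a i • x i := by
      rw [← Fin.sum_univ_eq_sum_range (fun i => a i • x i) n]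
      refine Finset.sum_congr rfl fun i _ => ?_
      have : a (i : ℕ) = c ε j i := by
        simp only [ha, dif_pos i.isLt, Fin.eta]
      rw [this]
    calc ‖∑ i : Fin n, c ε j i • x i‖ = ‖∑ i ∈ Finset.range n, a i • x i‖ := by rw [h1]
      _ ≤ C * ⨆ i : Fin n, |a i| := hx n a
      _ ≤ C * 1 := by
          refine mul_le_mul_of_nonneg_left ?_ hC
          refine finSup_le one_pos.le fun i => ?_
          have : a (i : ℕ) = c ε j i := by
            simp only [ha, dif_pos i.isLt, Fin.eta]
          rw [this, hcabs]
      _ = C := mul_one C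
  have key : ∀ ε : Fin k' → Fin n → Bool,
      B (fun j => ∑ i : Fin n, c ε j i • x i)
        = ∑ r : Fin (k'+1) → Fin n, (∏ j, c ε j (r j)) * B (fun j => x (r j)) := by
    intro ε
    rw [B.map_sum (fun j i => c ε j i • x i)]
    refine Finset.sum_congr rfl fun r _ => ?_
    rw [B.map_smul_univ (fun j => c ε j (r j)) (fun j => x (r j))]
    rw [smul_eq_mul]
  have horth : ∀ r : Fin (k'+1) → Fin n,
      (∑ ε : Fin k' → Fin n → Bool, ∏ j, c ε j (r j))
        = if ∀ l : Fin k', r l.castSucc = r (Fin.last k')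
          then ((2:ℝ)^n)^k' * σ (r (Fin.last k')) else 0 := by
    intro r
    have h1 : ∀ ε : Fin k' → Fin n → Bool, (∏ j : Fin (k'+1), c ε j (r j))
        = σ (r (Fin.last k')) * ∏ l : Fin k',
            (sgn (ε l (r l.castSucc)) * sgn (ε l (r (Fin.last k')))) := by
      intro ε
      rw [Fin.prod_univ_castSucc]
      simp only [hc, Fin.snoc_castSucc, Fin.snoc_last]
      rw [Finset.prod_mul_distrib]
      ring
    rw [Finset.sum_congr rfl (fun ε _ => h1 ε), ← Finset.mul_sum]
    have h2 : (∑ ε : Fin k' → Fin n → Bool,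
        ∏ l : Fin k', (sgn (ε l (r l.castSucc)) * sgn (ε l (r (Fin.last k')))))
        = ∏ l : Fin k', ∑ row : Fin n → Bool,
            sgn (row (r l.castSucc)) * sgn (row (r (Fin.last k'))) := by
      rw [Finset.prod_univ_sum]
      rw [Fintype.piFinset_univ]
    rw [h2]
    by_cases hall : ∀ l : Fin k', r l.castSucc = r (Fin.last k')
    · rw [if_pos hall]
      have heq : ∀ l : Fin k', (∑ row : Fin n → Bool,
          sgn (row (r l.castSucc)) * sgn (row (r (Fin.last k')))) = (2:ℝ)^n := by
        intro l; rw [sum_sgn_mul, if_pos (hall l)]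
      rw [Finset.prod_congr rfl (fun l _ => heq l), Finset.prod_const]
      simp [mul_comm]
    · rw [if_neg hall]
      push_neg at hall
      obtain ⟨l, hl⟩ := hall
      have hz : (∑ row : Fin n → Bool,
          sgn (row (r l.castSucc)) * sgn (row (r (Fin.last k')))) = 0 := by
        rw [sum_sgn_mul, if_neg hl]
      rw [Finset.prod_eq_zero (Finset.mem_univ l) hz, mul_zero]
  have hfilter : Finset.univ.filter
        (fun r : Fin (k'+1) → Fin n => ∀ l : Fin k', r l.castSucc = r (Fin.last k'))
      = Finset.univ.image (fun i : Fin n => (fun _ : Fin (k'+1) => i)) := by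
    ext r
    simp only [Finset.mem_filter, Finset.mem_univ, true_and, Finset.mem_image]
    constructor
    · intro h
      refine ⟨r (Fin.last k'), ?_⟩
      funext j
      induction j using Fin.lastCases with
      | last => rfl
      | cast l => exact (h l).symm
    · rintro ⟨i, rfl⟩
      exact fun l => rfl
  have hsumeq : (∑ ε : Fin k' → Fin n → Bool, B (fun j => ∑ i : Fin n, c ε j i • x i))
      = ((2:ℝ)^n)^k' * ∑ i ∈ Finset.range n, |B (fun _ => x i)| := by
    calc (∑ ε : Fin k' → Fin n → Bool, B (fun j => ∑ i : Fin n, c ε j i • x i))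
        = ∑ ε : Fin k' → Fin n → Bool, ∑ r : Fin (k'+1) → Fin n,
            (∏ j, c ε j (r j)) * B (fun j => x (r j)) :=
          Finset.sum_congr rfl (fun ε _ => key ε)
      _ = ∑ r : Fin (k'+1) → Fin n, ∑ ε : Fin k' → Fin n → Bool,
            (∏ j, c ε j (r j)) * B (fun j => x (r j)) := Finset.sum_comm
      _ = ∑ r : Fin (k'+1) → Fin n,
            (if ∀ l : Fin k', r l.castSucc = r (Fin.last k')
              then ((2:ℝ)^n)^k' * σ (r (Fin.last k')) else 0) * B (fun j => x (r j)) := by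
          refine Finset.sum_congr rfl fun r _ => ?_
          rw [← Finset.sum_mul, horth r]
      _ = ∑ r ∈ Finset.univ.filter
            (fun r : Fin (k'+1) → Fin n => ∀ l : Fin k', r l.castSucc = r (Fin.last k')),
            ((2:ℝ)^n)^k' * σ (r (Fin.last k')) * B (fun j => x (r j)) := by
          rw [Finset.sum_filter]
          refine Finset.sum_congr rfl fun r _ => ?_
          by_cases h : ∀ l : Fin k', r l.castSucc = r (Fin.last k') <;> simp [h]
      _ = ∑ i : Fin n, ((2:ℝ)^n)^k' * σ i * B (fun _ => x i) := by
          rw [hfilter, Finset.sum_image (fun i _ j _ h => congrFun h (Fin.last k'))]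
      _ = ((2:ℝ)^n)^k' * ∑ i : Fin n, |B (fun _ => x i)| := by
          rw [Finset.mul_sum]
          refine Finset.sum_congr rfl fun i _ => ?_
          rw [mul_assoc, hσabs i]
      _ = ((2:ℝ)^n)^k' * ∑ i ∈ Finset.range n, |B (fun _ => x i)| := by
          rw [Fin.sum_univ_eq_sum_range (fun m => |B (fun _ => x m)|) n]
  have hKpos : (0:ℝ) < ((2:ℝ)^n)^k' := by positivity
  have hS0 : 0 ≤ ∑ i ∈ Finset.range n, |B (fun _ => x i)| :=
    Finset.sum_nonneg fun i _ => abs_nonneg _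
  have hbound : ((2:ℝ)^n)^k' * ∑ i ∈ Finset.range n, |B (fun _ => x i)|
      ≤ ((2:ℝ)^n)^k' * (‖B‖ * C ^ (k'+1)) := by
    rw [← hsumeq]
    calc (∑ ε : Fin k' → Fin n → Bool, B (fun j => ∑ i : Fin n, c ε j i • x i))
        ≤ |∑ ε : Fin k' → Fin n → Bool, B (fun j => ∑ i : Fin n, c ε j i • x i)| :=
          le_abs_self _
      _ ≤ ∑ ε : Fin k' → Fin n → Bool, |B (fun j => ∑ i : Fin n, c ε j i • x i)| :=
          Finset.abs_sum_le_sum_abs _ _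
      _ ≤ ∑ _ε : Fin k' → Fin n → Bool, ‖B‖ * C ^ (k'+1) := by
          refine Finset.sum_le_sum fun ε _ => ?_
          refine le_trans (B.le_opNorm _) ?_
          refine mul_le_mul_of_nonneg_left ?_ (norm_nonneg _)
          calc (∏ j : Fin (k'+1), ‖∑ i : Fin n, c ε j i • x i‖)
              ≤ ∏ _j : Fin (k'+1), C :=
                Finset.prod_le_prod (fun j _ => norm_nonneg _) (fun j _ => hu ε j)
            _ = C ^ (k'+1) := by rw [Finset.prod_const, Finset.card_univ, Fintype.card_fin]
      _ = ((2:ℝ)^n)^k' * (‖B‖ * C ^ (k'+1)) := by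
          rw [Finset.sum_const, Finset.card_univ, nsmul_eq_mul]
          congr 1
          rw [Fintype.card_fun, Fintype.card_fun, Fintype.card_bool, Fintype.card_fin,
            Fintype.card_fin]
          push_cast
          ring
  exact le_of_mul_le_mul_left hbound hKpos

/-- Subsequences preserve the two-sided c₀ estimates, with the same constants. -/
lemma subseq_bounds {X : Type*} [NormedAddCommGroup X] [NormedSpace ℝ X]
    {x : ℕ → X} {c C : ℝ}
    (hbd : ∀ (n : ℕ) (a : ℕ → ℝ),
      c * (⨆ i : Fin n, |a i|) ≤ ‖∑ i ∈ Finset.range n, a i • x i‖ ∧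
      ‖∑ i ∈ Finset.range n, a i • x i‖ ≤ C * (⨆ i : Fin n, |a i|))
    {s : ℕ → ℕ} (hs : StrictMono s) :
    ∀ (n : ℕ) (a : ℕ → ℝ),
      c * (⨆ i : Fin n, |a i|) ≤ ‖∑ i ∈ Finset.range n, a i • x (s i)‖ ∧
      ‖∑ i ∈ Finset.range n, a i • x (s i)‖ ≤ C * (⨆ i : Fin n, |a i|) := by
  classical
  intro n a
  rcases Nat.eq_zero_or_pos n with hn | hn
  · subst hn; simpa [Real.iSup_of_isEmpty] using hbd 0 a
  set m := s (n - 1) + 1 with hm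
  set b : ℕ → ℝ := fun j => ∑ i ∈ Finset.range n, if s i = j then a i else 0 with hbdef
  have hbs : ∀ i < n, b (s i) = a i := by
    intro i hi
    have : ∀ i' ∈ Finset.range n, (if s i' = s i then a i' else 0) =
        (if i' = i then a i' else 0) := by
      intro i' _; simp [hs.injective.eq_iff]
    rw [hbdef]; simp only []
    rw [Finset.sum_congr rfl this, Finset.sum_ite_eq' (Finset.range n) i a]
    simp [Finset.mem_range.mpr hi]
  have hb0 : ∀ j, (∀ i < n, s i ≠ j) → b j = 0 := by
    intro j hj
    rw [hbdef]; simp only []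
    refine Finset.sum_eq_zero fun i hi => ?_
    simp [hj i (Finset.mem_range.mp hi)]
  have himg : (Finset.range n).image s ⊆ Finset.range m := by
    intro j hj
    obtain ⟨i, hi, rfl⟩ := Finset.mem_image.mp hj
    have : i ≤ n - 1 := Nat.le_pred_of_lt (Finset.mem_range.mp hi)
    exact Finset.mem_range.mpr (Nat.lt_succ_of_le (hs.monotone this))
  have hsum : ∑ j ∈ Finset.range m, b j • x j = ∑ i ∈ Finset.range n, a i • x (s i) := by
    rw [← Finset.sum_subset himg]
    · rw [Finset.sum_image (fun i _ j _ h => hs.injective h)]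
      exact Finset.sum_congr rfl fun i hi => by rw [hbs i (Finset.mem_range.mp hi)]
    · intro j _ hj
      have : ∀ i < n, s i ≠ j := by
        intro i hi hij
        exact hj (Finset.mem_image.mpr ⟨i, Finset.mem_range.mpr hi, hij⟩)
      rw [hb0 j this, zero_smul]
  have hsup : (⨆ j : Fin m, |b j|) = ⨆ i : Fin n, |a i| := by
    apply le_antisymm
    · refine finSup_le (finSup_nonneg a) fun j => ?_
      by_cases hj : ∃ i < n, s i = (j : ℕ)
      · obtain ⟨i, hi, hij⟩ := hj
        rw [← hij, hbs i hi]
        exact le_finSup a ⟨i, hi⟩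
      · push_neg at hj
        rw [hb0 j hj]
        simpa using finSup_nonneg a
    · refine finSup_le (finSup_nonneg b) fun i => ?_
      have hsi : s i < m := Finset.mem_range.mp (himg (Finset.mem_image.mpr
        ⟨i, Finset.mem_range.mpr i.isLt, rfl⟩))
      rw [← hbs i i.isLt]
      exact le_finSup b ⟨s i, hsi⟩
  have := hbd m b
  rw [hsum, hsup] at this
  exact this


/-- Mazur-type step: a weakly null sequence bounded below in norm eventually nearly
preserves norms on a fixed finite-dimensional subspace. -/
lemma mazur {Y : Type*} [NormedAddCommGroup Y] [NormedSpace ℝ Y] (y : ℕ → Y)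
    (hw : ∀ φ : Y →L[ℝ] ℝ, Tendsto (fun n => φ (y n)) atTop (𝓝 0))
    {ε : ℝ} (hε : 0 < ε) (hy : ∀ n, ε ≤ ‖y n‖)
    (E : Submodule ℝ Y) [FiniteDimensional ℝ E] {δ : ℝ} (hδ : 0 < δ) :
    ∃ N : ℕ, ∀ n ≥ N, ∀ e ∈ E, ∀ t : ℝ, ‖e‖ ≤ (1 + δ) * ‖e + t • y n‖ := by
  classical
  set θ : ℝ := δ / (2 * (1 + δ)) with hθ
  set η : ℝ := ε * δ / (4 * (1 + δ)) with hη
  have hδ1 : (0:ℝ) < 1 + δ := by linarith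
  have hθpos : 0 < θ := by positivity
  have hηpos : 0 < η := by positivity
  -- compact unit sphere of E, seen inside Y
  set S : Set Y := Subtype.val '' (Metric.sphere (0 : E) 1) with hS
  have hScomp : IsCompact S := (isCompact_sphere (0:E) 1).image continuous_subtype_val
  have hcover : S ⊆ ⋃ u ∈ S, Metric.ball u θ := fun u hu =>
    Set.mem_biUnion hu (Metric.mem_ball_self hθpos)
  obtain ⟨b, hbS, hbfin, hbcover⟩ :=
    hScomp.elim_finite_subcover_image (fun u _ => Metric.isOpen_ball) hcover
  have hSprop : ∀ u ∈ S, u ∈ E ∧ ‖u‖ = 1 := by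
    rintro u ⟨v, hv, rfl⟩
    refine ⟨v.2, ?_⟩
    have : ‖v‖ = 1 := by simpa [Metric.mem_sphere, dist_eq_norm] using hv
    simpa using this
  have hψ : ∀ u ∈ b, ∃ g : Y →L[ℝ] ℝ, ‖g‖ = 1 ∧ g u = ‖u‖ := by
    intro u hu
    have h1 : ‖u‖ = 1 := (hSprop u (hbS hu)).2
    have : u ≠ 0 := by intro h; rw [h] at h1; simp at h1
    exact exists_dual_vector ℝ u (norm_ne_zero_iff.mpr this)
  choose! ψ hψ1 hψ2 using hψ
  have hev : ∀ᶠ n in atTop, ∀ u ∈ b, |ψ u (y n)| < η := by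
    rw [Filter.eventually_all_finite hbfin]
    intro u hu
    have := hw (ψ u)
    have h2 := this.abs
    rw [abs_zero] at h2
    exact h2.eventually_lt_const hηpos
  obtain ⟨N, hN⟩ := Filter.eventually_atTop.mp hev
  refine ⟨N, fun n hn e heE t => ?_⟩
  rcases eq_or_ne e 0 with rfl | he0
  · simp only [norm_zero]; positivity
  -- reduce to unit vectors
  have hne : (0:ℝ) < ‖e‖ := norm_pos_iff.mpr he0
  set e' : Y := ‖e‖⁻¹ • e with he'
  set t' : ℝ := ‖e‖⁻¹ * t with ht'
  have he'E : e' ∈ E := E.smul_mem _ heE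
  have he'1 : ‖e'‖ = 1 := by
    rw [he', norm_smul, norm_inv, norm_norm, inv_mul_cancel₀ hne.ne']
  have hsc : e + t • y n = ‖e‖ • (e' + t' • y n) := by
    rw [smul_add, he', ht', smul_smul, smul_smul, mul_inv_cancel₀ hne.ne', one_smul,
      ← mul_assoc, mul_inv_cancel₀ hne.ne', one_mul]
  have hnormsc : ‖e + t • y n‖ = ‖e‖ * ‖e' + t' • y n‖ := by
    rw [hsc, norm_smul, Real.norm_eq_abs, abs_of_nonneg hne.le]
  clear_value e' t'
  clear he' ht' hsc
  have hunit : 1 ≤ (1 + δ) * ‖e' + t' • y n‖ := by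
    by_cases hts : |t'| ≤ 2 / ε
    · -- use the net
      have he'S : e' ∈ S := by
        refine ⟨⟨e', he'E⟩, ?_, rfl⟩
        simp only [Metric.mem_sphere, dist_eq_norm, sub_zero]
        have : ‖(⟨e', he'E⟩ : E)‖ = ‖e'‖ := rfl
        rw [this, he'1]
      obtain ⟨u, hub, hu⟩ : ∃ u ∈ b, e' ∈ Metric.ball u θ := by
        have := hbcover he'S
        simpa only [Set.mem_iUnion, exists_prop] using this
      have hub' := hub
      have hu1 : ψ u u = ‖u‖ := hψ2 u hub
      have hunorm : ‖u‖ = 1 := (hSprop u (hbS hub)).2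
      have hψn : |ψ u (y n)| < η := hN n hn u hub
      have hdist : ‖e' - u‖ < θ := by
        rw [← dist_eq_norm]; exact Metric.mem_ball.mp hu
      have hψdiff : |ψ u (e' - u)| ≤ ‖e' - u‖ := by
        calc |ψ u (e' - u)| = ‖ψ u (e' - u)‖ := rfl
          _ ≤ ‖ψ u‖ * ‖e' - u‖ := (ψ u).le_opNorm _
          _ = ‖e' - u‖ := by rw [hψ1 u hub, one_mul]
      have hval : ψ u (e' + t' • y n) = ψ u u + ψ u (e' - u) + t' * ψ u (y n) := by
        rw [map_add, map_smul]
        have : ψ u e' = ψ u u + ψ u (e' - u) := by rw [← map_add]; congr 1; abel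
        rw [this, smul_eq_mul]
      have hnorml : ψ u (e' + t' • y n) ≤ ‖e' + t' • y n‖ := by
        calc ψ u (e' + t' • y n) ≤ |ψ u (e' + t' • y n)| := le_abs_self _
          _ ≤ ‖ψ u‖ * ‖e' + t' • y n‖ := (ψ u).le_opNorm _
          _ = ‖e' + t' • y n‖ := by rw [hψ1 u hub, one_mul]
      have hlow : 1 - θ - (2/ε) * η ≤ ψ u (e' + t' • y n) := by
        rw [hval, hu1, hunorm]
        have h1 : -θ ≤ ψ u (e' - u) := by
          have := neg_abs_le (ψ u (e' - u))
          linarith [hψdiff, hdist]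
        have h2 : -((2/ε) * η) ≤ t' * ψ u (y n) := by
          have habs : |t' * ψ u (y n)| ≤ (2/ε) * η := by
            rw [abs_mul]
            apply mul_le_mul hts hψn.le (abs_nonneg _) (by positivity)
          linarith [neg_abs_le (t' * ψ u (y n))]
        linarith
      have hval2 : 1 - θ - (2/ε) * η = 1 / (1 + δ) := by
        rw [hθ, hη]
        field_simp
        ring
      rw [hval2] at hlow
      have : 1 / (1 + δ) ≤ ‖e' + t' • y n‖ := le_trans hlow hnorml
      calc (1:ℝ) = (1 + δ) * (1 / (1 + δ)) := by field_simp
        _ ≤ (1 + δ) * ‖e' + t' • y n‖ := by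
            exact mul_le_mul_of_nonneg_left this hδ1.le
    · -- |t'| large
      push_neg at hts
      have h1 : 2 ≤ |t'| * ‖y n‖ := by
        calc (2:ℝ) = (2/ε) * ε := by field_simp
          _ ≤ |t'| * ‖y n‖ := by
              apply mul_le_mul hts.le (hy n) hε.le (abs_nonneg _)
      have h2 : ‖t' • y n‖ - ‖e'‖ ≤ ‖e' + t' • y n‖ := by
        have := norm_sub_norm_le (t' • y n) (-e')
        have h3 : ‖t' • y n - -e'‖ = ‖e' + t' • y n‖ := by rw [sub_neg_eq_add]; congr 1; abel
        rw [h3] at this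
        simpa using this
      rw [norm_smul, Real.norm_eq_abs, he'1] at h2
      have : 1 ≤ ‖e' + t' • y n‖ := by linarith
      nlinarith
  rw [hnormsc]
  nlinarith [hne.le, hunit]


lemma prod_one_add_le {f : ℕ → ℝ} (h0 : ∀ j, 0 ≤ f j) :
    ∀ F : Finset ℕ, (∑ j ∈ F, f j ≤ 1/2) → ∏ j ∈ F, (1 + f j) ≤ 1 + 2 * ∑ j ∈ F, f j := by
  classical
  intro F
  induction F using Finset.induction_on with
  | empty => simp
  | @insert a F ha ih =>
    intro hsum
    rw [Finset.prod_insert ha, Finset.sum_insert ha]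
    rw [Finset.sum_insert ha] at hsum
    have hFs : ∑ j ∈ F, f j ≤ 1/2 := by
      have := h0 a; linarith
    have hF0 : 0 ≤ ∑ j ∈ F, f j := Finset.sum_nonneg fun j _ => h0 j
    have h1 := ih hFs
    have h2 : (0:ℝ) ≤ 1 + f a := by linarith [h0 a]
    calc (1 + f a) * ∏ j ∈ F, (1 + f j) ≤ (1 + f a) * (1 + 2 * ∑ j ∈ F, f j) := by
          apply mul_le_mul_of_nonneg_left h1 h2
      _ ≤ 1 + 2 * (f a + ∑ j ∈ F, f j) := by nlinarith [h0 a]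

lemma geom_tail_le (m n : ℕ) (hm : 1 ≤ m) :
    ∑ j ∈ Finset.Ico m n, ((1:ℝ)/4)^j ≤ 1/2 := by
  have hsub : Finset.Ico m n ⊆ Finset.Ico 1 n := by
    apply Finset.Ico_subset_Ico hm le_rfl
  have h1 : ∑ j ∈ Finset.Ico m n, ((1:ℝ)/4)^j ≤ ∑ j ∈ Finset.Ico 1 n, ((1:ℝ)/4)^j :=
    Finset.sum_le_sum_of_subset_of_nonneg hsub (fun j _ _ => by positivity)
  have h2 : ∑ j ∈ Finset.Ico 1 n, ((1:ℝ)/4)^j = ∑ j ∈ Finset.range (n-1), ((1:ℝ)/4)^(1+j) := by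
    rw [Finset.sum_Ico_eq_sum_range]
  have h3 : ∑ j ∈ Finset.range (n-1), ((1:ℝ)/4)^(1+j) ≤ 1/2 := by
    have hsummable : Summable (fun j : ℕ => ((1:ℝ)/4)^(1+j)) := by
      apply Summable.comp_injective ?_ (add_right_injective 1)
      exact summable_geometric_of_lt_one (by norm_num) (by norm_num)
    calc ∑ j ∈ Finset.range (n-1), ((1:ℝ)/4)^(1+j)
        ≤ ∑' j : ℕ, ((1:ℝ)/4)^(1+j) := by
          apply hsummable.sum_le_tsum _ (fun j _ => by positivity)
      _ = (1/4) * ∑' j : ℕ, ((1:ℝ)/4)^j := by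
          rw [← tsum_mul_left]
          congr 1 with j
          rw [pow_add, pow_one]
      _ = (1/4) * (1 - 1/4)⁻¹ := by
          rw [tsum_geometric_of_lt_one (by norm_num) (by norm_num)]
      _ ≤ 1/2 := by norm_num
  linarith [h1, h2 ▸ h3]

lemma prod_Ico_le_two (m n : ℕ) (hm : 1 ≤ m) :
    ∏ j ∈ Finset.Ico m n, (1 + ((1:ℝ)/4)^j) ≤ 2 := by
  have h := prod_one_add_le (f := fun j => ((1:ℝ)/4)^j) (fun j => by positivity)
    (Finset.Ico m n) (geom_tail_le m n hm)
  have := geom_tail_le m n hm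
  linarith

/-- Bessaga–Pełczyński style selection: a weakly null sequence bounded below in norm
has a subsequence whose partial sums satisfy a uniform projection bound. -/
lemma selection {Y : Type*} [NormedAddCommGroup Y] [NormedSpace ℝ Y] (y : ℕ → Y)
    (hw : ∀ φ : Y →L[ℝ] ℝ, Tendsto (fun n => φ (y n)) atTop (𝓝 0))
    {ε : ℝ} (hε : 0 < ε) (hy : ∀ n, ε ≤ ‖y n‖) :
    ∃ s : ℕ → ℕ, StrictMono s ∧ ∀ (m n : ℕ) (a : ℕ → ℝ), m ≤ n →
      ‖∑ i ∈ Finset.range m, a i • y (s i)‖ ≤ 2 * ‖∑ i ∈ Finset.range n, a i • y (s i)‖ := by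
  classical
  have hM : ∀ i m : ℕ, ∃ N : ℕ, ∀ n ≥ N,
      ∀ e ∈ Submodule.span ℝ (y '' Set.Iic m), ∀ t : ℝ,
        ‖e‖ ≤ (1 + ((1:ℝ)/4)^(i+1)) * ‖e + t • y n‖ := by
    intro i m
    have : FiniteDimensional ℝ (Submodule.span ℝ (y '' Set.Iic m)) :=
      FiniteDimensional.span_of_finite ℝ ((Set.finite_Iic m).image y)
    exact mazur y hw hε hy _ (by positivity)
  choose Nf hNf using hM
  set s : ℕ → ℕ := fun n => Nat.rec 0 (fun i prev => max (prev + 1) (Nf i prev)) n with hsdef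
  have hs_succ : ∀ i, s (i+1) = max (s i + 1) (Nf i (s i)) := fun i => rfl
  have hs : StrictMono s := by
    apply strictMono_nat_of_lt_succ
    intro i
    rw [hs_succ]
    exact lt_of_lt_of_le (Nat.lt_succ_self _) (le_max_left _ _)
  refine ⟨s, hs, ?_⟩
  -- Mazur property along the subsequence
  have hmz : ∀ i : ℕ, ∀ e ∈ Submodule.span ℝ (y '' Set.Iic (s i)), ∀ t : ℝ,
      ‖e‖ ≤ (1 + ((1:ℝ)/4)^(i+1)) * ‖e + t • y (s (i+1))‖ := by
    intro i e he t
    exact hNf i (s i) (s (i+1)) (le_trans (le_max_right _ _) (hs_succ i).ge) e he t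
  intro m n a hmn
  rcases Nat.eq_zero_or_pos m with rfl | hm
  · simp only [Finset.range_zero, Finset.sum_empty, norm_zero]
    positivity
  -- single peeling step
  have hpeel : ∀ p : ℕ, 1 ≤ p →
      ‖∑ i ∈ Finset.range p, a i • y (s i)‖
        ≤ (1 + ((1:ℝ)/4)^p) * ‖∑ i ∈ Finset.range (p+1), a i • y (s i)‖ := by
    intro p hp
    have hmem : (∑ i ∈ Finset.range p, a i • y (s i)) ∈
        Submodule.span ℝ (y '' Set.Iic (s (p-1))) := by
      apply Submodule.sum_mem
      intro i hi
      apply Submodule.smul_mem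
      apply Submodule.subset_span
      exact ⟨s i, ⟨hs.monotone (Nat.le_pred_of_lt (Finset.mem_range.mp hi)), rfl⟩⟩
    have h1 := hmz (p-1) _ hmem (a p)
    rw [Nat.sub_add_cancel hp] at h1
    rw [Finset.sum_range_succ]
    exact h1
  -- iterate
  have hiter : ∀ n' : ℕ, m ≤ n' →
      ‖∑ i ∈ Finset.range m, a i • y (s i)‖
        ≤ (∏ j ∈ Finset.Ico m n', (1 + ((1:ℝ)/4)^j)) * ‖∑ i ∈ Finset.range n', a i • y (s i)‖ := by
    intro n'
    induction n' with
    | zero => intro h; omega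
    | succ n' ih =>
      intro h
      rcases Nat.lt_or_ge m (n'+1) with hlt | hge
      · have hmn' : m ≤ n' := Nat.lt_succ_iff.mp hlt
        have h1 := ih hmn'
        have h2 := hpeel n' (le_trans hm hmn')
        have hprodnn : (0:ℝ) ≤ ∏ j ∈ Finset.Ico m n', (1 + ((1:ℝ)/4)^j) :=
          Finset.prod_nonneg fun j _ => by positivity
        calc ‖∑ i ∈ Finset.range m, a i • y (s i)‖
            ≤ (∏ j ∈ Finset.Ico m n', (1 + ((1:ℝ)/4)^j)) * ‖∑ i ∈ Finset.range n', a i • y (s i)‖ := h1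
          _ ≤ (∏ j ∈ Finset.Ico m n', (1 + ((1:ℝ)/4)^j)) *
              ((1 + ((1:ℝ)/4)^n') * ‖∑ i ∈ Finset.range (n'+1), a i • y (s i)‖) :=
              mul_le_mul_of_nonneg_left h2 hprodnn
          _ = (∏ j ∈ Finset.Ico m (n'+1), (1 + ((1:ℝ)/4)^j)) *
              ‖∑ i ∈ Finset.range (n'+1), a i • y (s i)‖ := by
              rw [Finset.prod_Ico_succ_top hmn']
              ring
      · have : m = n' + 1 := le_antisymm h hge
        subst this
        simp
  have h1 := hiter n hmn
  have h2 := prod_Ico_le_two m n hm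
  have h3 : (0:ℝ) ≤ ‖∑ i ∈ Finset.range n, a i • y (s i)‖ := norm_nonneg _
  calc ‖∑ i ∈ Finset.range m, a i • y (s i)‖
      ≤ (∏ j ∈ Finset.Ico m n, (1 + ((1:ℝ)/4)^j)) * ‖∑ i ∈ Finset.range n, a i • y (s i)‖ := h1
    _ ≤ 2 * ‖∑ i ∈ Finset.range n, a i • y (s i)‖ := mul_le_mul_of_nonneg_right h2 h3


variable {X Y : Type*} [NormedAddCommGroup X] [NormedSpace ℝ X]
  [NormedAddCommGroup Y] [NormedSpace ℝ Y]

lemma sum_abs_phi_le {k' : ℕ}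
    (A : ContinuousMultilinearMap ℝ (fun _ : Fin (k'+1) => X) Y)
    {C : ℝ} (hC : 0 ≤ C) (x : ℕ → X)
    (hx : ∀ (n : ℕ) (a : ℕ → ℝ), ‖∑ i ∈ Finset.range n, a i • x i‖ ≤ C * ⨆ i : Fin n, |a i|)
    (φ : Y →L[ℝ] ℝ) (n : ℕ) :
    ∑ i ∈ Finset.range n, |φ (A fun _ => x i)| ≤ ‖φ‖ * ‖A‖ * C ^ (k'+1) := by
  have h := lemA (φ.compContinuousMultilinearMap A) hC x hx n
  have hB : ∀ i : ℕ, (φ.compContinuousMultilinearMap A) (fun _ => x i)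
      = φ (A fun _ => x i) := fun i => rfl
  calc ∑ i ∈ Finset.range n, |φ (A fun _ => x i)|
      = ∑ i ∈ Finset.range n, |(φ.compContinuousMultilinearMap A) (fun _ => x i)| :=
        Finset.sum_congr rfl fun i _ => by rw [hB]
    _ ≤ ‖φ.compContinuousMultilinearMap A‖ * C ^ (k'+1) := h
    _ ≤ (‖φ‖ * ‖A‖) * C ^ (k'+1) := by
        apply mul_le_mul_of_nonneg_right
          (φ.norm_compContinuousMultilinearMap_le A) (by positivity)
    _ = ‖φ‖ * ‖A‖ * C ^ (k'+1) := by ring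

lemma weakly_null {k' : ℕ}
    (A : ContinuousMultilinearMap ℝ (fun _ : Fin (k'+1) => X) Y)
    {C : ℝ} (hC : 0 ≤ C) (x : ℕ → X)
    (hx : ∀ (n : ℕ) (a : ℕ → ℝ), ‖∑ i ∈ Finset.range n, a i • x i‖ ≤ C * ⨆ i : Fin n, |a i|)
    (φ : Y →L[ℝ] ℝ) :
    Tendsto (fun n => φ (A fun _ => x n)) atTop (𝓝 0) := by
  have hsum : Summable (fun n => |φ (A fun _ => x n)|) :=
    summable_of_sum_range_le (fun n => abs_nonneg _) (fun n => sum_abs_phi_le A hC x hx φ n)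
  exact squeeze_zero_norm (fun n => (Real.norm_eq_abs _).le) hsum.tendsto_atTop_zero

lemma upper_bound {k' : ℕ}
    (A : ContinuousMultilinearMap ℝ (fun _ : Fin (k'+1) => X) Y)
    {C : ℝ} (hC : 0 ≤ C) (x : ℕ → X)
    (hx : ∀ (n : ℕ) (a : ℕ → ℝ), ‖∑ i ∈ Finset.range n, a i • x i‖ ≤ C * ⨆ i : Fin n, |a i|)
    (n : ℕ) (a : ℕ → ℝ) :
    ‖∑ i ∈ Finset.range n, a i • (A fun _ => x i)‖
      ≤ (‖A‖ * C ^ (k'+1)) * ⨆ i : Fin n, |a i| := by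
  have hsup := finSup_nonneg (n := n) a
  apply NormedSpace.norm_le_dual_bound ℝ _ (by positivity)
  intro φ
  calc ‖φ (∑ i ∈ Finset.range n, a i • (A fun _ => x i))‖
      = |∑ i ∈ Finset.range n, a i * φ (A fun _ => x i)| := by
        rw [map_sum]
        congr 1
        exact Finset.sum_congr rfl fun i _ => by rw [map_smul, smul_eq_mul]
    _ ≤ ∑ i ∈ Finset.range n, |a i * φ (A fun _ => x i)| := Finset.abs_sum_le_sum_abs _ _
    _ ≤ ∑ i ∈ Finset.range n, (⨆ i : Fin n, |a i|) * |φ (A fun _ => x i)| := by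
        refine Finset.sum_le_sum fun i hi => ?_
        rw [abs_mul]
        exact mul_le_mul_of_nonneg_right (le_finSup a ⟨i, Finset.mem_range.mp hi⟩)
          (abs_nonneg _)
    _ = (⨆ i : Fin n, |a i|) * ∑ i ∈ Finset.range n, |φ (A fun _ => x i)| := by
        rw [Finset.mul_sum]
    _ ≤ (⨆ i : Fin n, |a i|) * (‖φ‖ * ‖A‖ * C ^ (k'+1)) :=
        mul_le_mul_of_nonneg_left (sum_abs_phi_le A hC x hx φ n) hsup
    _ = ‖A‖ * C ^ (k'+1) * (⨆ i : Fin n, |a i|) * ‖φ‖ := by ring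


end BEproof

open BEproof in
/-- Equivalence of conditions (B) and (E) of the main theorem of Section 3. -/
theorem subseq_equiv_iff_norm_not_tendsto_zero {X Y : Type*}
    [NormedAddCommGroup X] [NormedSpace ℝ X] [CompleteSpace X]
    [NormedAddCommGroup Y] [NormedSpace ℝ Y] [CompleteSpace Y]
    (k : ℕ) (hk : 1 ≤ k) (A : ContinuousMultilinearMap ℝ (fun _ : Fin k => X) Y)
    (P : X → Y) (hP : P = fun x => A fun _ => x) :
    (∀ x : ℕ → X, IsEquivC0Basis x →
      ∃ s : ℕ → ℕ, StrictMono s ∧ IsEquivC0Basis fun i => P (x (s i))) ↔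
    (∀ x : ℕ → X, IsEquivC0Basis x →
      ¬ Tendsto (fun n => ‖P (x n)‖) atTop (𝓝 0)) := by
  
  subst hP
  obtain ⟨k', rfl⟩ : ∃ k', k = k' + 1 := ⟨k - 1, by omega⟩
  constructor
  · -- (B) → (E)
    intro hB x hx hT
    obtain ⟨s, hs, c, C, hc, hcC, hb⟩ := hB x hx
    have hlow : ∀ i : ℕ, c ≤ ‖(fun v => A fun _ => v) (x (s i))‖ := by
      intro i
      have h := (hb (i+1) (fun j => if j = i then 1 else 0)).1
      have hsum : ∑ j ∈ Finset.range (i+1), (if j = i then (1:ℝ) else 0) •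
          ((fun v => A fun _ => v) (x (s j))) = (fun v => A fun _ => v) (x (s i)) := by
        rw [Finset.sum_eq_single i (fun j _ hj => by simp [hj])
          (fun h => absurd (Finset.self_mem_range_succ i) h)]
        simp
      have hsup : (⨆ j : Fin (i+1), |if (j:ℕ) = i then (1:ℝ) else 0|) = 1 := by
        apply le_antisymm
        · refine finSup_le (a := fun j => if j = i then (1:ℝ) else 0) one_pos.le fun j => ?_
          by_cases h : (j:ℕ) = i <;> simp [h]
        · have := le_finSup (fun j => if j = i then (1:ℝ) else 0) ⟨i, Nat.lt_succ_self i⟩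
          simpa using this
      rw [hsum, hsup, mul_one] at h
      exact h
    have htend : Tendsto (fun i => ‖(fun v => A fun _ => v) (x (s i))‖) atTop (𝓝 0) :=
      hT.comp hs.tendsto_atTop
    have := htend.eventually_lt_const hc
    rw [Filter.eventually_atTop] at this
    obtain ⟨N, hN⟩ := this
    exact absurd (hlow N) (not_le.mpr (hN N le_rfl))
  · -- (E) → (B)
    intro hE x hx
    obtain ⟨c, C, hc, hcC, hb⟩ := hx
    have hC : (0:ℝ) ≤ C := le_trans hc.le hcC
    -- Step 1: some ε > 0 with eventual lower bound
    have hstep1 : ∃ ε > 0, ∃ N : ℕ, ∀ n ≥ N, ε ≤ ‖A fun _ => x n‖ := by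
      by_contra hcon
      push_neg at hcon
      have hfreq : ∀ i : ℕ, ∃ᶠ n in atTop, ‖A fun _ => x n‖ < 1 / (i+1) := by
        intro i
        rw [Filter.frequently_atTop]
        intro N
        obtain ⟨n, hn, hlt⟩ := hcon (1/(i+1)) (by positivity) N
        exact ⟨n, hn, hlt⟩
      obtain ⟨φ, hφ, hφlt⟩ := Filter.extraction_forall_of_frequently hfreq
      have hxφ : IsEquivC0Basis fun i => x (φ i) :=
        ⟨c, C, hc, hcC, subseq_bounds hb hφ⟩
      refine hE _ hxφ ?_
      apply squeeze_zero (fun i => norm_nonneg _) (fun i => (hφlt i).le)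
      have : Tendsto (fun i : ℕ => 1 / ((i:ℝ)+1)) atTop (𝓝 0) :=
        tendsto_one_div_add_atTop_nhds_zero_nat
      exact_mod_cast this
    obtain ⟨ε, hε, N₀, hN₀⟩ := hstep1
    -- shifted sequence
    set x' : ℕ → X := fun i => x (i + N₀) with hx'
    have hshift : StrictMono (fun i : ℕ => i + N₀) := by
      intro a b h; show a + N₀ < b + N₀; omega
    have hb' := subseq_bounds hb hshift
    have hby : ∀ n, ε ≤ ‖A fun _ => x' n‖ := fun n => hN₀ (n + N₀) (by omega)
    have hupper' : ∀ (n : ℕ) (a : ℕ → ℝ),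
        ‖∑ i ∈ Finset.range n, a i • x' i‖ ≤ C * ⨆ i : Fin n, |a i| :=
      fun n a => (hb' n a).2
    have hw : ∀ φ : Y →L[ℝ] ℝ, Tendsto (fun n => φ (A fun _ => x' n)) atTop (𝓝 0) :=
      weakly_null A hC x' hupper'
    obtain ⟨s, hsmono, hsel⟩ := selection (fun n => A fun _ => x' n) hw hε hby
    set s' : ℕ → ℕ := fun i => s i + N₀ with hs'
    have hs'mono : StrictMono s' := by
      intro a b h; show s a + N₀ < s b + N₀
      exact Nat.add_lt_add_right (hsmono h) N₀
    refine ⟨s', hs'mono, ?_⟩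
    have hxs' : ∀ i, x (s' i) = x' (s i) := fun i => rfl
    -- c₀ bounds for the image sequence
    have hbs' := subseq_bounds hb hs'mono
    have hupper'' : ∀ (n : ℕ) (a : ℕ → ℝ),
        ‖∑ i ∈ Finset.range n, a i • x (s' i)‖ ≤ C * ⨆ i : Fin n, |a i| :=
      fun n a => (hbs' n a).2
    have hub : ∀ (n : ℕ) (a : ℕ → ℝ),
        ‖∑ i ∈ Finset.range n, a i • ((fun v => A fun _ => v) (x (s' i)))‖
          ≤ (‖A‖ * C ^ (k'+1)) * ⨆ i : Fin n, |a i| :=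
      fun n a => upper_bound A hC (fun i => x (s' i)) hupper'' n a
    have hlb : ∀ (n : ℕ) (a : ℕ → ℝ),
        (ε/4) * (⨆ i : Fin n, |a i|)
          ≤ ‖∑ i ∈ Finset.range n, a i • ((fun v => A fun _ => v) (x (s' i)))‖ := by
      intro n a
      set Sn := ‖∑ i ∈ Finset.range n, a i • (A fun _ => x' (s i))‖ with hSn
      have hSn0 : 0 ≤ Sn := norm_nonneg _
      have hi : ∀ i : Fin n, |a i| ≤ (4/ε) * Sn := by
        intro i
        have h1 := hsel (i+1) n a i.isLt
        have h2 := hsel i n a (le_of_lt i.isLt)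
        have h3 : ‖∑ j ∈ Finset.range (i+1), a j • (A fun _ => x' (s j))
            - ∑ j ∈ Finset.range i, a j • (A fun _ => x' (s j))‖
            ≤ 4 * Sn := by
          refine le_trans (norm_sub_le _ _) ?_
          rw [← hSn] at h1 h2
          linarith
        rw [Finset.sum_range_succ, add_sub_cancel_left] at h3
        rw [norm_smul, Real.norm_eq_abs] at h3
        have h4 : ε * |a i| ≤ 4 * Sn := by
          calc ε * |a i| ≤ ‖A fun _ => x' (s i)‖ * |a i| :=
                mul_le_mul_of_nonneg_right (hby (s i)) (abs_nonneg _)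
            _ = |a i| * ‖A fun _ => x' (s i)‖ := by ring
            _ ≤ 4 * Sn := h3
        rw [div_mul_eq_mul_div, le_div_iff₀ hε]
        linarith
      have hsup : (⨆ i : Fin n, |a i|) ≤ (4/ε) * Sn := by
        refine finSup_le ?_ hi
        positivity
      calc (ε/4) * (⨆ i : Fin n, |a i|) ≤ (ε/4) * ((4/ε) * Sn) :=
            mul_le_mul_of_nonneg_left hsup (by positivity)
        _ = Sn := by field_simp
        _ = ‖∑ i ∈ Finset.range n, a i • ((fun v => A fun _ => v) (x (s' i)))‖ := rfl
    -- assemble constants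
    have hCk : (0:ℝ) ≤ ‖A‖ * C ^ (k'+1) := by positivity
    refine ⟨ε/4, ‖A‖ * C ^ (k'+1) + ε, by positivity, by linarith, fun n a => ?_⟩
    constructor
    · exact hlb n a
    · refine le_trans (hub n a) ?_
      apply mul_le_mul_of_nonneg_right (by linarith) (finSup_nonneg a)
end
end

section
/- Let X and Y be real Banach spaces, k ≥ 1 an integer and P : X → Y a continuous k-homogeneous polynomial. Suppose that for every sequence (xₙ) in X equivalent to the c₀-basis, the sequence (P(∑_{i=1}^n x_i))ₙ is not relatively compact in Y. Then P is an Orlicz–Pettis polynomial: for every real Banach space Z and every bounded linear operator T : Z → X, if the polynomial P∘T is unconditionally converging, then T is an unconditionally converging operator. -/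
open Filter Topology Metric

noncomputable section

section Aux

variable {X : Type*} [NormedAddCommGroup X] [NormedSpace ℝ X]

lemma wuc_partial_bound (x : ℕ → X) (hx : WUC x) :
    ∃ C : ℝ, 0 < C ∧ ∀ (n : ℕ) (ι : ℕ → ℕ) (a : ℕ → ℝ) (M : ℝ), 0 ≤ M →
      Set.InjOn ι (Finset.range n) → (∀ i ∈ Finset.range n, |a i| ≤ M) →
      ‖∑ i ∈ Finset.range n, a i • x (ι i)‖ ≤ C * M := by
  classical
  set ι₀ := {q : ℕ × (ℕ → ℕ) × (ℕ → ℝ) //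
    Set.InjOn q.2.1 (Finset.range q.1) ∧ ∀ i ∈ Finset.range q.1, |q.2.2 i| ≤ 1} with hι₀
  set g : ι₀ → (StrongDual ℝ X →L[ℝ] ℝ) := fun q =>
    NormedSpace.inclusionInDoubleDual ℝ X
      (∑ i ∈ Finset.range q.1.1, q.1.2.2 i • x (q.1.2.1 i)) with hg
  have hpt : ∀ ψ : StrongDual ℝ X, ∃ C, ∀ q : ι₀, ‖g q ψ‖ ≤ C := by
    intro ψ
    refine ⟨∑' n, |ψ (x n)|, fun q => ?_⟩
    have h1 : g q ψ = ∑ i ∈ Finset.range q.1.1, q.1.2.2 i * ψ (x (q.1.2.1 i)) := by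
      simp [hg, map_sum]
    rw [h1]
    calc ‖∑ i ∈ Finset.range q.1.1, q.1.2.2 i * ψ (x (q.1.2.1 i))‖
        ≤ ∑ i ∈ Finset.range q.1.1, ‖q.1.2.2 i * ψ (x (q.1.2.1 i))‖ := norm_sum_le _ _
      _ ≤ ∑ i ∈ Finset.range q.1.1, |ψ (x (q.1.2.1 i))| := by
          refine Finset.sum_le_sum fun i hi => ?_
          rw [Real.norm_eq_abs, abs_mul]
          exact mul_le_of_le_one_left (abs_nonneg _) (q.2.2 i hi)
      _ = ∑ m ∈ (Finset.range q.1.1).image q.1.2.1, |ψ (x m)| :=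
          (Finset.sum_image (f := fun m => |ψ (x m)|)
            (fun i hi j hj h => q.2.1 hi hj h)).symm
      _ ≤ ∑' n, |ψ (x n)| := Summable.sum_le_tsum _ (fun i _ => abs_nonneg _) (hx ψ)
  obtain ⟨C, hC⟩ := banach_steinhaus hpt
  refine ⟨max C 1, lt_of_lt_of_le one_pos (le_max_right _ _), fun n ι a M hM hinj ha => ?_⟩
  rcases eq_or_lt_of_le hM with hM0 | hM0
  · have hz : ∀ i ∈ Finset.range n, a i • x (ι i) = 0 := by
      intro i hi
      have h1 := ha i hi
      rw [← hM0] at h1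
      rw [abs_eq_zero.mp (le_antisymm h1 (abs_nonneg _)), zero_smul]
    rw [Finset.sum_eq_zero hz, norm_zero, ← hM0, mul_zero]
  · set a' : ℕ → ℝ := fun i => a i / M with ha'
    have ha'le : ∀ i ∈ Finset.range n, |a' i| ≤ 1 := by
      intro i hi
      rw [ha']
      rw [abs_div, abs_of_pos hM0, div_le_one hM0]
      exact ha i hi
    have key : ‖∑ i ∈ Finset.range n, a' i • x (ι i)‖ ≤ C := by
      have h2 : ‖g ⟨(n, ι, a'), hinj, ha'le⟩‖ = ‖∑ i ∈ Finset.range n, a' i • x (ι i)‖ :=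
        (NormedSpace.inclusionInDoubleDualLi ℝ (E := X)).norm_map _
      rw [← h2]; exact hC _
    have hsum : ∑ i ∈ Finset.range n, a i • x (ι i)
        = M • ∑ i ∈ Finset.range n, a' i • x (ι i) := by
      rw [Finset.smul_sum]
      refine Finset.sum_congr rfl fun i hi => ?_
      rw [ha', smul_smul, mul_div_cancel₀ _ hM0.ne']
    rw [hsum, norm_smul, Real.norm_eq_abs, abs_of_pos hM0, mul_comm]
    calc ‖∑ i ∈ Finset.range n, a' i • x (ι i)‖ * M ≤ C * M := by
          exact mul_le_mul_of_nonneg_right key hM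
      _ ≤ max C 1 * M := mul_le_mul_of_nonneg_right (le_max_left _ _) hM

lemma wuc_weakly_null (x : ℕ → X) (hx : WUC x) (ψ : X →L[ℝ] ℝ) :
    Tendsto (fun n => ψ (x n)) atTop (𝓝 0) := by
  have := (summable_abs_iff.mp (hx ψ)).tendsto_atTop_zero
  exact this

lemma exists_perp_functional (F : Submodule ℝ X) [FiniteDimensional ℝ F] (v : X) {d : ℝ}
    (hd : 0 < d) (h : d ≤ Metric.infDist v (F : Set X)) :
    ∃ ψ : X →L[ℝ] ℝ, ‖ψ‖ ≤ 1 ∧ (∀ u ∈ F, ψ u = 0) ∧ d ≤ ψ v := by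
  haveI : IsClosed (F : Set X) := Submodule.closed_of_finiteDimensional F
  have hnorm : ‖(Submodule.Quotient.mk v : X ⧸ F)‖ = Metric.infDist v (F : Set X) :=
    QuotientAddGroup.norm_mk v
  have hne : (Submodule.Quotient.mk v : X ⧸ F) ≠ 0 := by
    intro h0
    rw [← norm_eq_zero] at h0
    rw [hnorm] at h0
    linarith
  obtain ⟨g, hg1, hgv⟩ := exists_dual_vector ℝ (Submodule.Quotient.mk v : X ⧸ F) (norm_ne_zero_iff.mpr hne)
  set q : X →L[ℝ] X ⧸ F := LinearMap.mkContinuous F.mkQ 1 (fun m => by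
    simpa using Submodule.Quotient.norm_mk_le F m) with hq
  have hqapp : ∀ m : X, q m = Submodule.Quotient.mk m := fun m => rfl
  refine ⟨g.comp q, ?_, ?_, ?_⟩
  · refine ContinuousLinearMap.opNorm_le_bound _ zero_le_one fun m => ?_
    rw [one_mul]
    calc ‖(g.comp q) m‖ = ‖g (q m)‖ := rfl
      _ ≤ ‖g‖ * ‖q m‖ := g.le_opNorm _
      _ = ‖q m‖ := by rw [hg1, one_mul]
      _ ≤ ‖m‖ := by rw [hqapp]; exact Submodule.Quotient.norm_mk_le F m
  · intro u hu
    have : q u = 0 := by rw [hqapp]; exact (Submodule.Quotient.mk_eq_zero F).mpr hu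
    simp [ContinuousLinearMap.comp_apply, this]
  · have : (g.comp q) v = g (Submodule.Quotient.mk v) := rfl
    rw [this, hgv, hnorm]
    exact h

lemma exists_far {x : ℕ → X} {C ε : ℝ} (hε : 0 < ε) (hC : ∀ n, ‖x n‖ ≤ C)
    (hweak : ∀ ψ : X →L[ℝ] ℝ, Tendsto (fun n => ψ (x n)) atTop (𝓝 0))
    (hnorm : ∀ n, ε ≤ ‖x n‖)
    (F : Submodule ℝ X) [FiniteDimensional ℝ F] (N : ℕ) :
    ∃ j, N ≤ j ∧ ε / 3 ≤ Metric.infDist (x j) (F : Set X) := by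
  by_contra hcon
  push_neg at hcon
  have hFne : (F : Set X).Nonempty := ⟨0, F.zero_mem⟩
  have hch : ∀ k : ℕ, ∃ f : F, dist (x (N + k)) (f : X) < ε / 3 := by
    intro k
    obtain ⟨y, hyF, hy⟩ :=
      (Metric.infDist_lt_iff hFne).mp (hcon (N + k) (Nat.le_add_right _ _))
    exact ⟨⟨y, hyF⟩, hy⟩
  choose f hf using hch
  have hfb : ∀ k, f k ∈ Metric.closedBall (0 : F) (C + ε / 3) := by
    intro k
    rw [Metric.mem_closedBall, dist_zero_right]
    have h1 : ‖(f k : X)‖ ≤ ‖x (N + k)‖ + ε / 3 := by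
      have h2 := hf k
      rw [dist_eq_norm] at h2
      calc ‖(f k : X)‖ = ‖x (N + k) - (x (N + k) - (f k : X))‖ := by
            rw [sub_sub_cancel]
        _ ≤ ‖x (N + k)‖ + ‖x (N + k) - (f k : X)‖ := norm_sub_le _ _
        _ ≤ ‖x (N + k)‖ + ε / 3 := by linarith
    calc ‖f k‖ = ‖(f k : X)‖ := rfl
      _ ≤ ‖x (N + k)‖ + ε / 3 := h1
      _ ≤ C + ε / 3 := by linarith [hC (N + k)]
  have hcpt : IsCompact (Metric.closedBall (0 : F) (C + ε / 3)) := isCompact_closedBall _ _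
  obtain ⟨flim, _, φ, hφmono, hφtend⟩ := hcpt.tendsto_subseq hfb
  have hcoe : Tendsto (fun k => ((f (φ k)) : X)) atTop (𝓝 (flim : X)) :=
    (continuous_subtype_val.tendsto _).comp hφtend
  have hidx : Tendsto (fun k => N + φ k) atTop atTop :=
    tendsto_atTop_mono (fun k => (hφmono.le_apply).trans (Nat.le_add_left _ _)) tendsto_id
  have hsmall : ‖(flim : X)‖ ≤ ε / 3 := by
    by_cases h0 : (flim : X) = 0
    · rw [h0, norm_zero]; positivity
    · obtain ⟨ψ, hψ1, hψv⟩ := exists_dual_vector ℝ (flim : X) (norm_ne_zero_iff.mpr h0)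
      have h1 : Tendsto (fun k => ψ ((f (φ k)) : X)) atTop (𝓝 (ψ (flim : X))) :=
        (ψ.continuous.tendsto _).comp hcoe
      have h2 : Tendsto (fun k => ψ (x (N + φ k))) atTop (𝓝 0) := (hweak ψ).comp hidx
      have ht : Tendsto (fun k => ψ (((f (φ k)) : X) - x (N + φ k))) atTop
          (𝓝 ‖(flim : X)‖) := by
        have := h1.sub h2
        rw [sub_zero] at this
        simp only [map_sub]
        have hv : ψ (flim : X) = ‖(flim : X)‖ := by exact_mod_cast hψv
        rw [← hv]
        exact this
      refine le_of_tendsto ht (Filter.Eventually.of_forall fun k => ?_)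
      have h3 := hf (φ k)
      rw [dist_eq_norm] at h3
      calc ψ (((f (φ k)) : X) - x (N + φ k)) ≤ |ψ (((f (φ k)) : X) - x (N + φ k))| := le_abs_self _
        _ ≤ ‖ψ‖ * ‖((f (φ k)) : X) - x (N + φ k)‖ := ψ.le_opNorm _
        _ = ‖x (N + φ k) - ((f (φ k)) : X)‖ := by rw [hψ1, one_mul, norm_sub_rev]
        _ ≤ ε / 3 := h3.le
  obtain ⟨K, hK⟩ := Metric.tendsto_atTop.mp hcoe (ε / 12) (by positivity)
  have h4 := hf (φ K)
  rw [dist_eq_norm] at h4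
  have h5 := hK K le_rfl
  rw [dist_eq_norm] at h5
  have h6 : ‖x (N + φ K)‖ ≤ ‖x (N + φ K) - ((f (φ K)) : X)‖ +
      ‖((f (φ K)) : X) - (flim : X)‖ + ‖(flim : X)‖ := by
    calc ‖x (N + φ K)‖ = ‖(x (N + φ K) - ((f (φ K)) : X)) + (((f (φ K)) : X) - (flim : X))
        + (flim : X)‖ := by rw [sub_add_sub_cancel, sub_add_cancel]
      _ ≤ _ := by
          refine (norm_add_le _ _).trans ?_
          gcongr
          exact norm_add_le _ _
  have h7 := hnorm (N + φ K)
  linarith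

lemma key_selection (x : ℕ → X) (hx : WUC x) {ε : ℝ} (hε : 0 < ε)
    (hnorm : ∀ n, ε ≤ ‖x n‖) :
    ∃ σ : ℕ → ℕ, StrictMono σ ∧ IsEquivC0Basis (x ∘ σ) := by
  classical
  obtain ⟨C, hC0, hCb⟩ := wuc_partial_bound x hx
  have hxC : ∀ n, ‖x n‖ ≤ C := by
    intro n
    have h1 : Set.InjOn (fun _ : ℕ => n) (Finset.range 1) := by
      intro i hi j hj _
      simp only [Finset.coe_range, Set.mem_Iio] at hi hj
      omega
    have := hCb 1 (fun _ => n) (fun _ => 1) 1 zero_le_one h1 (fun i _ => by norm_num)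
    simpa using this
  have hweak := wuc_weakly_null x hx
  set P : ℕ × (X →L[ℝ] ℝ) → Prop := fun p => ‖p.2‖ ≤ 1 ∧ ε / 3 ≤ p.2 (x p.1) with hP
  set r : ℕ × (X →L[ℝ] ℝ) → ℕ × (X →L[ℝ] ℝ) → Prop := fun p q =>
    p.1 < q.1 ∧ q.2 (x p.1) = 0 ∧ (∑' m, |p.2 (x (m + q.1))|) ≤ ε / 12 with hr
  have hstep : ∀ s : Finset (ℕ × (X →L[ℝ] ℝ)), (∀ p ∈ s, P p) →
      ∃ y, P y ∧ ∀ p ∈ s, r p y := by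
    intro s _
    have htail : ∀ p : ℕ × (X →L[ℝ] ℝ), ∃ M : ℕ, ∀ t, M ≤ t →
        (∑' m, |p.2 (x (m + t))|) ≤ ε / 12 := by
      intro p
      have hsum : Summable fun m => |p.2 (x m)| := hx p.2
      have heq : ∀ t : ℕ, (∑' m, |p.2 (x (m + t))|) =
          (∑' m, |p.2 (x m)|) - ∑ i ∈ Finset.range t, |p.2 (x i)| := by
        intro t
        rw [← Summable.sum_add_tsum_nat_add t hsum]
        ring
      have ht : Tendsto (fun t => ∑' m, |p.2 (x (m + t))|) atTop (𝓝 0) := by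
        simp_rw [heq]
        have h2 := (tendsto_const_nhds
          (x := ∑' m, |p.2 (x m)|) (f := atTop (α := ℕ))).sub hsum.hasSum.tendsto_sum_nat
        simpa using h2
      have hev : ∀ᶠ t in atTop, (∑' m, |p.2 (x (m + t))|) ≤ ε / 12 :=
        ht.eventually (eventually_le_nhds (by positivity))
      exact eventually_atTop.mp hev
    choose Mth hMth using htail
    set N : ℕ := max ((s.sup fun p => p.1) + 1) (s.sup fun p => Mth p) with hN
    set Fsp : Submodule ℝ X :=
      Submodule.span ℝ (x '' ((s.image Prod.fst : Finset ℕ) : Set ℕ)) with hFsp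
    haveI : FiniteDimensional ℝ Fsp :=
      FiniteDimensional.span_of_finite ℝ ((s.image Prod.fst).finite_toSet.image x)
    obtain ⟨j, hjN, hjfar⟩ := exists_far hε hxC hweak hnorm Fsp N
    obtain ⟨ψ, hψ1, hψ0, hψv⟩ := exists_perp_functional Fsp (x j) (by positivity) hjfar
    refine ⟨(j, ψ), ⟨hψ1, hψv⟩, fun p hp => ⟨?_, ?_, ?_⟩⟩
    · have h2 : p.1 ≤ s.sup fun p => p.1 := Finset.le_sup hp
      have h3 : (s.sup fun p => p.1) + 1 ≤ N := le_max_left _ _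
      omega
    · apply hψ0
      apply Submodule.subset_span
      refine ⟨p.1, ?_, rfl⟩
      simp only [Finset.coe_image, Set.mem_image, Finset.mem_coe]
      exact ⟨p, hp, rfl⟩
    · refine hMth p j ?_
      calc Mth p ≤ s.sup fun p => Mth p := Finset.le_sup hp
        _ ≤ N := le_max_right _ _
        _ ≤ j := hjN
  obtain ⟨f, hfP, hfr⟩ := exists_seq_of_forall_finset_exists P r hstep
  refine ⟨fun n => (f n).1, fun m n h => (hfr m n h).1, ?_⟩
  set σ : ℕ → ℕ := fun n => (f n).1 with hσdef
  have hσ : StrictMono σ := fun m n h => (hfr m n h).1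
  refine ⟨ε / 4, max C (ε / 4), by positivity, le_max_right _ _, ?_⟩
  intro n a
  simp only [Function.comp_apply]
  rcases Nat.eq_zero_or_pos n with rfl | hn
  · simp [Real.iSup_of_isEmpty]
  · set M := ⨆ i : Fin n, |a i| with hM
    haveI hne : Nonempty (Fin n) := Fin.pos_iff_nonempty.mp hn
    have hbdd : BddAbove (Set.range fun i : Fin n => |a i|) :=
      (Set.finite_range _).bddAbove
    have hMle : ∀ i : Fin n, |a i| ≤ M := fun i => le_ciSup hbdd i
    have hM0 : 0 ≤ M := le_trans (abs_nonneg _) (hMle ⟨0, hn⟩)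
    constructor
    · -- lower bound
      obtain ⟨j, hj⟩ := Finite.exists_max fun i : Fin n => |a i|
      have hMj : M = |a j| := le_antisymm (ciSup_le hj) (le_ciSup hbdd j)
      set v := ∑ i ∈ Finset.range n, a i • x (σ i) with hv
      set ψ := (f (j : ℕ)).2 with hψdef
      have hjn : (j : ℕ) < n := j.2
      have happ : ψ v = ∑ i ∈ Finset.range n, a i * ψ (x (σ i)) := by
        rw [hv, map_sum]
        exact Finset.sum_congr rfl fun i _ => by rw [map_smul, smul_eq_mul]
      have hvanish : ∀ i ∈ Finset.range n, i ∉ Finset.Ico (j : ℕ) n →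
          a i * ψ (x (σ i)) = 0 := by
        intro i hi hni
        have hij : i < (j : ℕ) := by
          simp only [Finset.mem_range] at hi
          simp only [Finset.mem_Ico, not_and, not_lt] at hni
          omega
        rw [(hfr i (j : ℕ) hij).2.1, mul_zero]
      have hsplit : ψ v = a (j : ℕ) * ψ (x (σ (j : ℕ))) +
          ∑ i ∈ Finset.Ico ((j : ℕ) + 1) n, a i * ψ (x (σ i)) := by
        have hsub : Finset.Ico ((j : ℕ)) n ⊆ Finset.range n := by
          rw [Finset.range_eq_Ico]
          exact Finset.Ico_subset_Ico (Nat.zero_le _) le_rfl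
        rw [happ, ← Finset.sum_subset hsub (fun i hi hni => hvanish i hi hni)]
        exact Finset.sum_eq_sum_Ico_succ_bot hjn _
      have hψnorm : ‖ψ‖ ≤ 1 := (hfP (j : ℕ)).1
      have hψval : ε / 3 ≤ ψ (x (σ (j : ℕ))) := (hfP (j : ℕ)).2
      -- tail bound
      have htailb : ∑ i ∈ Finset.Ico ((j : ℕ) + 1) n, |ψ (x (σ i))| ≤ ε / 12 := by
        have hrj := (hfr (j : ℕ) ((j : ℕ) + 1) (lt_add_one _)).2.2
        have hσle : ∀ i ∈ Finset.Ico ((j : ℕ) + 1) n, σ ((j : ℕ) + 1) ≤ σ i := by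
          intro i hi
          exact hσ.monotone (Finset.mem_Ico.mp hi).1
        have hinj : Set.InjOn (fun i => σ i - σ ((j : ℕ) + 1))
            (Finset.Ico ((j : ℕ) + 1) n) := by
          intro i hi i' hi' hii
          have h1 := hσle i hi
          have h2 := hσle i' hi'
          have hii' : σ i - σ ((j : ℕ) + 1) = σ i' - σ ((j : ℕ) + 1) := hii
          have h3 : σ i = σ i' := by omega
          exact hσ.injective h3
        have himg : ∑ i ∈ Finset.Ico ((j : ℕ) + 1) n, |ψ (x (σ i))| =
            ∑ m ∈ (Finset.Ico ((j : ℕ) + 1) n).image (fun i => σ i - σ ((j : ℕ) + 1)),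
              |ψ (x (m + σ ((j : ℕ) + 1)))| := by
          rw [Finset.sum_image (f := fun m => |ψ (x (m + σ ((j : ℕ) + 1)))|) hinj]
          refine Finset.sum_congr rfl fun i hi => ?_
          rw [Nat.sub_add_cancel (hσle i hi)]
        rw [himg]
        calc ∑ m ∈ (Finset.Ico ((j : ℕ) + 1) n).image (fun i => σ i - σ ((j : ℕ) + 1)),
              |ψ (x (m + σ ((j : ℕ) + 1)))|
            ≤ ∑' m, |ψ (x (m + σ ((j : ℕ) + 1)))| := by
              refine Summable.sum_le_tsum _ (fun m _ => abs_nonneg _) ?_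
              exact (hx ψ).comp_injective (add_left_injective (σ ((j : ℕ) + 1)))
          _ ≤ ε / 12 := hrj
      have htail2 : |∑ i ∈ Finset.Ico ((j : ℕ) + 1) n, a i * ψ (x (σ i))| ≤ M * (ε / 12) := by
        calc |∑ i ∈ Finset.Ico ((j : ℕ) + 1) n, a i * ψ (x (σ i))|
            ≤ ∑ i ∈ Finset.Ico ((j : ℕ) + 1) n, |a i * ψ (x (σ i))| :=
              Finset.abs_sum_le_sum_abs _ _
          _ ≤ ∑ i ∈ Finset.Ico ((j : ℕ) + 1) n, M * |ψ (x (σ i))| := by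
              refine Finset.sum_le_sum fun i hi => ?_
              rw [abs_mul]
              have him : i < n := (Finset.mem_Ico.mp hi).2
              exact mul_le_mul_of_nonneg_right (hMle ⟨i, him⟩) (abs_nonneg _)
          _ = M * ∑ i ∈ Finset.Ico ((j : ℕ) + 1) n, |ψ (x (σ i))| := by
              rw [Finset.mul_sum]
          _ ≤ M * (ε / 12) := mul_le_mul_of_nonneg_left htailb hM0
      have hhead : M * (ε / 3) ≤ |a (j : ℕ) * ψ (x (σ (j : ℕ)))| := by
        rw [abs_mul]
        have h1 : |ψ (x (σ (j : ℕ)))| = ψ (x (σ (j : ℕ))) :=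
          abs_of_pos (lt_of_lt_of_le (by positivity) hψval)
        rw [h1]
        rw [← hMj]
        exact mul_le_mul_of_nonneg_left hψval hM0
      have htri : |a (j : ℕ) * ψ (x (σ (j : ℕ)))| ≤ |ψ v| +
          |∑ i ∈ Finset.Ico ((j : ℕ) + 1) n, a i * ψ (x (σ i))| := by
        have h := abs_add_le (ψ v) (-(∑ i ∈ Finset.Ico ((j : ℕ) + 1) n, a i * ψ (x (σ i))))
        rw [abs_neg] at h
        have h2 : ψ v + -(∑ i ∈ Finset.Ico ((j : ℕ) + 1) n, a i * ψ (x (σ i))) =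
            a (j : ℕ) * ψ (x (σ (j : ℕ))) := by
          rw [hsplit]; ring
        rwa [h2] at h
      have habs : M * (ε / 4) ≤ |ψ v| := by linarith
      have hfin : |ψ v| ≤ ‖v‖ := by
        calc |ψ v| ≤ ‖ψ‖ * ‖v‖ := ψ.le_opNorm v
          _ ≤ 1 * ‖v‖ := mul_le_mul_of_nonneg_right hψnorm (norm_nonneg _)
          _ = ‖v‖ := one_mul _
      calc ε / 4 * M = M * (ε / 4) := by ring
        _ ≤ |ψ v| := habs
        _ ≤ ‖v‖ := hfin
    · -- upper bound
      have := hCb n σ a M hM0 (fun i _ k _ h => hσ.injective h)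
        (fun i hi => hMle ⟨i, Finset.mem_range.mp hi⟩)
      calc ‖∑ i ∈ Finset.range n, a i • x (σ i)‖ ≤ C * M := this
        _ ≤ max C (ε / 4) * M := mul_le_mul_of_nonneg_right (le_max_left _ _) hM0


end Aux

/-- Condition (D) implies that `P` is an Orlicz–Pettis polynomial. -/
theorem orlicz_pettis_of_partial_sums_not_relcompact {X : Type u} {Y : Type v}
    [NormedAddCommGroup X] [NormedSpace ℝ X] [CompleteSpace X]
    [NormedAddCommGroup Y] [NormedSpace ℝ Y] [CompleteSpace Y]
    (k : ℕ) (hk : 1 ≤ k) (A : ContinuousMultilinearMap ℝ (fun _ : Fin k => X) Y)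
    (P : X → Y) (hP : P = fun x => A fun _ => x)
    (hD : ∀ x : ℕ → X, IsEquivC0Basis x →
      ¬ IsCompact (closure (Set.range fun n => P (∑ i ∈ Finset.range n, x i)))) :
    ∀ (Z : Type w) [NormedAddCommGroup Z] [NormedSpace ℝ Z] [CompleteSpace Z]
      (T : Z →L[ℝ] X), UCPoly (fun z => P (T z)) → UCOp ⇑T := by
  intro Z _ _ _ T hucp
  intro z hz
  by_contra hns
  rw [summable_iff_vanishing] at hns
  push_neg at hns
  obtain ⟨e0, he0, hbl⟩ := hns
  obtain ⟨ε, hε, hball⟩ := Metric.mem_nhds_iff.mp he0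
  have hbig : ∀ N : ℕ, ∃ t : Finset ℕ, (∀ m ∈ t, N ≤ m) ∧ ε ≤ ‖∑ n ∈ t, T (z n)‖ := by
    intro N
    obtain ⟨t, htd, hte⟩ := hbl (Finset.range N)
    refine ⟨t, ?_, ?_⟩
    · intro m hm
      by_contra hmN
      push_neg at hmN
      exact (Finset.disjoint_left.mp htd hm) (Finset.mem_range.mpr hmN)
    · by_contra hlt
      push_neg at hlt
      exact hte (hball (by rwa [Metric.mem_ball, dist_zero_right]))
  have hstep : ∀ s : Finset (Finset ℕ),
      (∀ t ∈ s, ε ≤ ‖∑ n ∈ t, T (z n)‖) → ∃ t, (ε ≤ ‖∑ n ∈ t, T (z n)‖) ∧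
        ∀ t' ∈ s, ∀ m ∈ t', ∀ n ∈ t, m < n := by
    intro s _
    obtain ⟨t, ht1, ht2⟩ := hbig ((s.sup fun t => t.sup id) + 1)
    refine ⟨t, ht2, fun t' ht' m hm n hn => ?_⟩
    have h1 : m ≤ s.sup fun t => t.sup id :=
      le_trans (Finset.le_sup (f := id) hm) (Finset.le_sup ht')
    have h2 := ht1 n hn
    omega
  obtain ⟨B, hBP, hBr⟩ := exists_seq_of_forall_finset_exists
    (fun t : Finset ℕ => ε ≤ ‖∑ n ∈ t, T (z n)‖)
    (fun t t' => ∀ m ∈ t, ∀ n ∈ t', m < n) hstep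
  have hdisj : ∀ k l, k ≠ l → Disjoint (B k) (B l) := by
    intro k l hkl
    rcases hkl.lt_or_gt with h | h
    · rw [Finset.disjoint_left]; intro m hm hm'
      exact absurd (hBr k l h m hm m hm') (lt_irrefl m)
    · rw [Finset.disjoint_left]; intro m hm hm'
      exact absurd (hBr l k h m hm' m hm) (lt_irrefl m)
  set w : ℕ → Z := fun k => ∑ n ∈ B k, z n with hw
  have hwWUC : WUC w := by
    intro φ
    have hnn : ∀ k, |φ (w k)| ≤ ∑ n ∈ B k, |φ (z n)| := by
      intro k
      rw [hw]
      simp only [map_sum]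
      exact Finset.abs_sum_le_sum_abs _ _
    refine Summable.of_nonneg_of_le (fun k => abs_nonneg _) hnn ?_
    refine summable_of_sum_range_le (c := ∑' n, |φ (z n)|)
      (fun k => Finset.sum_nonneg fun _ _ => abs_nonneg _) ?_
    intro K
    rw [← Finset.sum_biUnion (fun k _ l _ hkl => hdisj k l hkl)]
    exact Summable.sum_le_tsum _ (fun _ _ => abs_nonneg _) (hz φ)
  have hTw : ∀ k, ε ≤ ‖T (w k)‖ := by
    intro k
    rw [hw]
    simp only [map_sum]
    exact hBP k
  set xx : ℕ → X := fun k => T (w k) with hxx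
  have hxxWUC : WUC xx := by
    intro ψ
    have := hwWUC (ψ.comp T)
    simpa using this
  obtain ⟨σ, hσ, hequiv⟩ := key_selection xx hxxWUC hε hTw
  have hwσ : WUC (fun k => w (σ k)) := fun φ => (hwWUC φ).comp_injective hσ.injective
  obtain ⟨L, hL⟩ := hucp (fun k => w (σ k)) hwσ
  have hLP : Tendsto (fun n => P (∑ i ∈ Finset.range n, xx (σ i))) atTop (𝓝 L) := by
    refine hL.congr fun n => ?_
    show P (T (∑ i ∈ Finset.range n, w (σ i))) = P (∑ i ∈ Finset.range n, xx (σ i))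
    rw [map_sum]
  have hcompact : IsCompact (closure
      (Set.range fun n => P (∑ i ∈ Finset.range n, (xx ∘ σ) i))) := by
    have h1 := hLP.isCompact_insert_range
    exact h1.of_isClosed_subset isClosed_closure
      (closure_minimal (Set.range_subset_iff.mpr fun n =>
        Set.mem_insert_of_mem _ ⟨n, rfl⟩) h1.isClosed)
  exact hD (xx ∘ σ) hequiv hcompact
end
end

section
/- Let X and Y be real Banach spaces, k ≥ 1 an integer and P : X → Y a continuous k-homogeneous polynomial. Suppose that for every sequence (xₙ) in X equivalent to the c₀-basis, the sequence ‖P(xₙ)‖ does not converge to 0. Then P is an Orlicz–Pettis polynomial: for every real Banach space Z and every bounded linear operator T : Z → X, if the polynomial P∘T is unconditionally converging, then T is an unconditionally converging operator. -/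
open Filter Topology Metric

noncomputable section

lemma my_sum_range_add {M : Type*} [AddCommMonoid M] (f : ℕ → M) (a b : ℕ) :
    ∑ i ∈ Finset.range (a+b), f i
      = (∑ i ∈ Finset.range a, f i) + ∑ i ∈ Finset.range b, f (a+i) := by
  induction b with
  | zero => simp
  | succ b ih => rw [← Nat.add_assoc, Finset.sum_range_succ, ih, Finset.sum_range_succ, add_assoc]

noncomputable def Salt (k : ℕ) (f : ℕ → ℝ) : ℝ :=
  ∑ j ∈ Finset.range (k+1), (-1:ℝ)^j * (k.choose j) * f j

lemma Salt_rec (k : ℕ) (f : ℕ → ℝ) :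
    Salt (k+1) f = Salt k f - Salt k (fun j => f (j+1)) := by
  have h1 : Salt (k+1) f
      = (∑ j ∈ Finset.range (k+1), (-1:ℝ)^(j+1) * ((k+1).choose (j+1)) * f (j+1))
        + (-1:ℝ)^0 * ((k+1).choose 0) * f 0 := by
    rw [Salt, Finset.sum_range_succ']
  have h2 : ∀ j : ℕ, ((k+1).choose (j+1) : ℝ) = (k.choose j : ℝ) + (k.choose (j+1) : ℝ) := by
    intro j; rw [Nat.choose_succ_succ]; push_cast; ring
  rw [h1]
  have h3 : ∑ j ∈ Finset.range (k+1), (-1:ℝ)^(j+1) * ((k+1).choose (j+1)) * f (j+1)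
      = (∑ j ∈ Finset.range (k+1), (-1:ℝ)^(j+1) * (k.choose j) * f (j+1))
        + ∑ j ∈ Finset.range (k+1), (-1:ℝ)^(j+1) * (k.choose (j+1)) * f (j+1) := by
    rw [← Finset.sum_add_distrib]
    refine Finset.sum_congr rfl fun j _ => ?_
    rw [h2]; ring
  rw [h3]
  have h4 : (∑ j ∈ Finset.range (k+1), (-1:ℝ)^(j+1) * (k.choose (j+1)) * f (j+1))
        + (-1:ℝ)^0 * ((k+1).choose 0) * f 0
      = Salt k f := by
    rw [Salt, Finset.sum_range_succ' (fun j => (-1:ℝ)^j * (k.choose j) * f j) k]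
    simp [Finset.sum_range_succ]
  have h5 : (∑ j ∈ Finset.range (k+1), (-1:ℝ)^(j+1) * (k.choose j) * f (j+1))
      = - Salt k (fun j => f (j+1)) := by
    rw [Salt, ← Finset.sum_neg_distrib]
    refine Finset.sum_congr rfl fun j _ => ?_
    rw [pow_succ]; ring
  rw [Salt] at h4 ⊢
  rw [← h4, h5]; ring

lemma Salt_pow_lt : ∀ k : ℕ, ∀ d : ℕ, d < k → Salt k (fun j => (j:ℝ)^d) = 0 := by
  intro k
  induction k with
  | zero => intro d hd; omega
  | succ k ih =>
    intro d hd
    have expand : Salt k (fun j => ((j:ℝ)+1)^d)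
        = ∑ e ∈ Finset.range (d+1), (d.choose e : ℝ) * Salt k (fun j => (j:ℝ)^e) := by
      unfold Salt
      have hb : ∀ j : ℕ, ((j:ℝ)+1)^d = ∑ e ∈ Finset.range (d+1), (j:ℝ)^e * (d.choose e : ℝ) := by
        intro j
        have := add_pow (j:ℝ) 1 d
        simpa using this
      calc ∑ j ∈ Finset.range (k+1), (-1:ℝ)^j * (k.choose j) * ((j:ℝ)+1)^d
          = ∑ j ∈ Finset.range (k+1), ∑ e ∈ Finset.range (d+1),
              (d.choose e : ℝ) * ((-1:ℝ)^j * (k.choose j) * (j:ℝ)^e) := by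
            refine Finset.sum_congr rfl fun j _ => ?_
            rw [hb, Finset.mul_sum]
            refine Finset.sum_congr rfl fun e _ => ?_
            ring
        _ = ∑ e ∈ Finset.range (d+1), (d.choose e : ℝ) * Salt k (fun j => (j:ℝ)^e) := by
            rw [Finset.sum_comm]
            refine Finset.sum_congr rfl fun e _ => ?_
            rw [Salt, Finset.mul_sum]
    have hcongr : Salt k (fun j => ((j:ℕ):ℝ)^d) = Salt k (fun j => (j:ℝ)^d) := rfl
    have key : Salt (k+1) (fun j => (j:ℝ)^d)
        = Salt k (fun j => (j:ℝ)^d) - Salt k (fun j => ((j:ℝ)+1)^d) := by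
      rw [Salt_rec]
      congr 1
      unfold Salt
      refine Finset.sum_congr rfl fun j _ => ?_
      push_cast
      ring
    rw [key, expand]
    rcases Nat.lt_or_ge d k with hdk | hdk
    · rw [ih d hdk]
      rw [Finset.sum_eq_zero, sub_zero]
      intro e he
      rw [ih e (lt_of_lt_of_le (Finset.mem_range.mp he) (by omega)), mul_zero]
    · have hdke : d = k := by omega
      subst hdke
      rw [Finset.sum_range_succ, Finset.sum_eq_zero, Nat.choose_self]
      · simp
      · intro e he
        rw [ih e (Finset.mem_range.mp he), mul_zero]

lemma Salt_pow_self : ∀ k : ℕ, Salt k (fun j => (j:ℝ)^k) = (-1:ℝ)^k * (k.factorial : ℝ) := by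
  intro k
  induction k with
  | zero => simp [Salt]
  | succ k ih =>
    have expand : Salt k (fun j => ((j:ℝ)+1)^(k+1))
        = ∑ e ∈ Finset.range (k+2), ((k+1).choose e : ℝ) * Salt k (fun j => (j:ℝ)^e) := by
      unfold Salt
      have hb : ∀ j : ℕ, ((j:ℝ)+1)^(k+1)
          = ∑ e ∈ Finset.range (k+2), (j:ℝ)^e * ((k+1).choose e : ℝ) := by
        intro j
        have := add_pow (j:ℝ) 1 (k+1)
        simpa using this
      calc ∑ j ∈ Finset.range (k+1), (-1:ℝ)^j * (k.choose j) * ((j:ℝ)+1)^(k+1)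
          = ∑ j ∈ Finset.range (k+1), ∑ e ∈ Finset.range (k+2),
              ((k+1).choose e : ℝ) * ((-1:ℝ)^j * (k.choose j) * (j:ℝ)^e) := by
            refine Finset.sum_congr rfl fun j _ => ?_
            rw [hb, Finset.mul_sum]
            refine Finset.sum_congr rfl fun e _ => ?_
            ring
        _ = ∑ e ∈ Finset.range (k+2), ((k+1).choose e : ℝ) * Salt k (fun j => (j:ℝ)^e) := by
            rw [Finset.sum_comm]
            refine Finset.sum_congr rfl fun e _ => ?_
            rw [Salt, Finset.mul_sum]
    have key : Salt (k+1) (fun j => (j:ℝ)^(k+1))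
        = Salt k (fun j => (j:ℝ)^(k+1)) - Salt k (fun j => ((j:ℝ)+1)^(k+1)) := by
      rw [Salt_rec]
      congr 1
      unfold Salt
      refine Finset.sum_congr rfl fun j _ => ?_
      push_cast
      ring
    rw [key, expand, Finset.sum_range_succ, Finset.sum_range_succ]
    rw [Finset.sum_eq_zero (fun e he => by
      rw [Salt_pow_lt k e (Finset.mem_range.mp he), mul_zero])]
    rw [ih, Nat.choose_succ_self_right, Nat.choose_self]
    rw [Nat.factorial_succ]
    push_cast
    ring

lemma exists_blocks {X : Type*} [NormedAddCommGroup X] {f : ℕ → X} {ε : ℝ}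
    (H : ∀ s : Finset ℕ, ∃ t : Finset ℕ, Disjoint t s ∧ ε ≤ ‖∑ i ∈ t, f i‖) :
    ∃ B : ℕ → Finset ℕ, (∀ i j, i < j → Disjoint (B i) (B j)) ∧
      ∀ j, ε ≤ ‖∑ i ∈ B j, f i‖ := by
  classical
  let acc : ℕ → Finset ℕ := fun j => Nat.rec (∅ : Finset ℕ)
    (fun _ s => s ∪ (H s).choose) j
  refine ⟨fun j => (H (acc j)).choose, ?_, fun j => (H (acc j)).choose_spec.2⟩
  have hsub : ∀ j, (H (acc j)).choose ⊆ acc (j+1) := fun j => Finset.subset_union_right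
  have hmono : ∀ i j, i ≤ j → acc i ⊆ acc j := by
    intro i j hij
    induction j with
    | zero => simp_all
    | succ j ih =>
      rcases Nat.lt_or_ge i (j+1) with h | h
      · exact (ih (by omega)).trans Finset.subset_union_left
      · have : i = j+1 := by omega
        subst this; rfl
  intro i j hij
  have h1 : (H (acc i)).choose ⊆ acc j :=
    (hsub i).trans (hmono (i+1) j hij)
  exact (Finset.disjoint_of_subset_right h1 (H (acc j)).choose_spec.1).symm

lemma wuc_blocks {X : Type*} [NormedAddCommGroup X] [NormedSpace ℝ X]
    {z : ℕ → X} (hz : WUC z) {B : ℕ → Finset ℕ}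
    (hB : ∀ i j, i < j → Disjoint (B i) (B j)) :
    WUC (fun j => ∑ i ∈ B j, z i) := by
  intro φ
  have hF : Summable fun j => ∑ i ∈ B j, |φ (z i)| := by
    apply summable_of_sum_range_le (c := ∑' i, |φ (z i)|)
    · intro j; positivity
    · intro m
      have hdisj : (↑(Finset.range m) : Set ℕ).PairwiseDisjoint B := by
        intro i _ j _ hij
        rcases Nat.lt_or_ge i j with h | h
        · exact hB i j h
        · exact (hB j i (by omega)).symm
      rw [← Finset.sum_biUnion hdisj]
      exact Summable.sum_le_tsum _ (fun i _ => abs_nonneg _) (hz φ)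
  refine Summable.of_nonneg_of_le (fun j => abs_nonneg _) (fun j => ?_) hF
  simpa using Finset.abs_sum_le_sum_abs (fun i => φ (z i)) (B j)

lemma exists_ustar_limit {X : Type*} [NormedAddCommGroup X] [NormedSpace ℝ X]
    (𝒰 : Ultrafilter ℕ) (φ : ℕ → X →L[ℝ] ℝ) (hφ : ∀ n, ‖φ n‖ ≤ 1) :
    ∃ Φ : X →L[ℝ] ℝ, (∀ x, |Φ x| ≤ ‖x‖) ∧
      ∀ x, Tendsto (fun n => φ n (x)) (𝒰 : Filter ℕ) (𝓝 (Φ x)) := by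
  have hbd : ∀ x : X, ∀ n, φ n x ∈ Set.Icc (-‖x‖) ‖x‖ := by
    intro x n
    have h1 : |φ n x| ≤ ‖x‖ := by
      calc |φ n x| = ‖φ n x‖ := (Real.norm_eq_abs _).symm
        _ ≤ ‖φ n‖ * ‖x‖ := (φ n).le_opNorm x
        _ ≤ 1 * ‖x‖ := by
            have := hφ n; nlinarith [norm_nonneg x]
        _ = ‖x‖ := one_mul _
    exact abs_le.mp h1
  have hex : ∀ x : X, ∃ L, Tendsto (fun n => φ n x) (𝒰 : Filter ℕ) (𝓝 L) := by
    intro x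
    obtain ⟨L, _, hL⟩ := (isCompact_Icc (a := -‖x‖) (b := ‖x‖)).ultrafilter_le_nhds
      (𝒰.map (fun n => φ n x)) (by
        refine le_principal_iff.mpr ?_
        exact Filter.mem_map.mpr (Filter.Eventually.of_forall (fun n => hbd x n)))
    exact ⟨L, hL⟩
  choose F hF using hex
  have hadd : ∀ x y, F (x + y) = F x + F y := by
    intro x y
    refine tendsto_nhds_unique ?_ ((hF x).add (hF y))
    have : (fun n => φ n (x + y)) = fun n => φ n x + φ n y := by
      funext n; exact map_add (φ n) x y
    rw [← this]; exact hF (x + y)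
  have hsmul : ∀ (c : ℝ) x, F (c • x) = c * F x := by
    intro c x
    refine tendsto_nhds_unique ?_ ((hF x).const_mul c)
    have : (fun n => φ n (c • x)) = fun n => c * φ n x := by
      funext n; rw [map_smul]; rfl
    rw [← this]; exact hF (c • x)
  have hbound : ∀ x, |F x| ≤ ‖x‖ := by
    intro x
    have h1 : Tendsto (fun n => |φ n x|) (𝒰 : Filter ℕ) (𝓝 |F x|) := (hF x).abs
    exact le_of_tendsto h1 (Filter.Eventually.of_forall fun n => abs_le.mpr (hbd x n))
  refine ⟨LinearMap.mkContinuous ⟨⟨F, hadd⟩, hsmul⟩ 1 (fun x => by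
    simpa using hbound x), fun x => by simpa using hbound x, hF⟩

lemma exists_c0_subseq {X : Type*} [NormedAddCommGroup X] [NormedSpace ℝ X]
    (w : ℕ → X) (hw : WUC w) {ε : ℝ} (hε : 0 < ε) (hlb : ∀ N, ε ≤ ‖w N‖) :
    ∃ n : ℕ → ℕ, Function.Injective n ∧ IsEquivC0Basis (fun j => w (n j)) := by
  classical
  -- uniform bound on signed partial sums, via Banach–Steinhaus in the bidual
  have hM0 : ∃ M : ℝ, ∀ t u : Finset ℕ, ‖(∑ i ∈ t, w i) - ∑ i ∈ u, w i‖ ≤ M := by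
    have hpb : ∀ f : StrongDual ℝ X, ∃ C, ∀ p : Finset ℕ × Finset ℕ,
        ‖NormedSpace.inclusionInDoubleDual ℝ X ((∑ i ∈ p.1, w i) - ∑ i ∈ p.2, w i) f‖ ≤ C := by
      intro f
      refine ⟨2 * ∑' i, |f (w i)|, fun p => ?_⟩
      rw [NormedSpace.dual_def, map_sub]
      have hb : ∀ s : Finset ℕ, ‖f (∑ i ∈ s, w i)‖ ≤ ∑' i, |f (w i)| := by
        intro s
        rw [map_sum, Real.norm_eq_abs]
        refine (Finset.abs_sum_le_sum_abs _ _).trans ?_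
        exact Summable.sum_le_tsum _ (fun _ _ => abs_nonneg _) (hw f)
      calc ‖f (∑ i ∈ p.1, w i) - f (∑ i ∈ p.2, w i)‖
          ≤ ‖f (∑ i ∈ p.1, w i)‖ + ‖f (∑ i ∈ p.2, w i)‖ := norm_sub_le _ _
        _ ≤ (∑' i, |f (w i)|) + (∑' i, |f (w i)|) := add_le_add (hb _) (hb _)
        _ = 2 * ∑' i, |f (w i)| := by ring
    obtain ⟨M, hM⟩ := banach_steinhaus hpb
    have hMnn : 0 ≤ M := le_trans (norm_nonneg _) (hM (∅, ∅))
    refine ⟨M, fun t u => ?_⟩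
    refine NormedSpace.norm_le_dual_bound ℝ _ hMnn (fun f => ?_)
    have h2 := (NormedSpace.inclusionInDoubleDual ℝ X
      ((∑ i ∈ t, w i) - ∑ i ∈ u, w i)).le_opNorm f
    rw [NormedSpace.dual_def] at h2
    exact h2.trans (mul_le_mul_of_nonneg_right (hM (t, u)) (norm_nonneg f))
  obtain ⟨M, hM⟩ := hM0
  -- norming functionals
  have hwne : ∀ N, w N ≠ 0 := by
    intro N h
    have := hlb N
    rw [h, norm_zero] at this; linarith
  have hφex : ∀ N, ∃ g : X →L[ℝ] ℝ, ‖g‖ = 1 ∧ g (w N) = ‖w N‖ :=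
    fun N => exists_dual_vector ℝ (w N) (norm_ne_zero_iff.mpr (hwne N))
  choose φ hφ1 hφw using hφex
  -- weak-star cluster functional
  let 𝒰 : Ultrafilter ℕ := Ultrafilter.of atTop
  have h𝒰 : (𝒰 : Filter ℕ) ≤ atTop := Ultrafilter.of_le _
  obtain ⟨Φ, hΦb, hΦt⟩ := exists_ustar_limit 𝒰 φ (fun N => le_of_eq (hφ1 N))
  -- weak nullity
  have hnull : ∀ ψ : X →L[ℝ] ℝ, Tendsto (fun N => ψ (w N)) atTop (𝓝 0) := by
    intro ψ
    exact squeeze_zero_norm (fun N => le_of_eq (Real.norm_eq_abs _)) (hw ψ).tendsto_atTop_zero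
  set δ : ℕ → ℝ := fun j => ε/8 * (1/4)^j with hδdef
  have hδpos : ∀ j, 0 < δ j := fun j => by positivity
  -- the inductive step
  have spec : ∀ s : Finset ℕ, ∃ N : ℕ, N ∉ s ∧ |Φ (w N)| ≤ ε/8 ∧
      ∀ m ∈ s, |φ m (w N) - Φ (w N)| ≤ δ s.card ∧ |φ N (w m) - Φ (w m)| ≤ δ s.card := by
    intro s
    have E1 : ∀ᶠ N in atTop, N ∉ s := by
      refine eventually_atTop.mpr ⟨s.sup id + 1, fun N hN hNs => ?_⟩
      have := Finset.le_sup (f := id) hNs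
      simp only [id] at this; omega
    have E2 : ∀ᶠ N in atTop, |Φ (w N)| ≤ ε/8 := by
      have h := Metric.tendsto_nhds.mp (hnull Φ) (ε/8) (by positivity)
      filter_upwards [h] with N hN
      rw [Real.dist_0_eq_abs] at hN; linarith
    have E3 : ∀ᶠ N in atTop, ∀ m ∈ s, |φ m (w N) - Φ (w N)| ≤ δ s.card := by
      rw [Filter.eventually_all_finset]
      intro m hm
      have h := Metric.tendsto_nhds.mp (hnull (φ m - Φ)) (δ s.card) (hδpos _)
      filter_upwards [h] with N hN
      rw [Real.dist_0_eq_abs] at hN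
      simp only [ContinuousLinearMap.sub_apply] at hN
      linarith
    have E4 : ∀ᶠ N in (𝒰 : Filter ℕ), ∀ m ∈ s, |φ N (w m) - Φ (w m)| ≤ δ s.card := by
      rw [Filter.eventually_all_finset]
      intro m hm
      have h := Metric.tendsto_nhds.mp (hΦt (w m)) (δ s.card) (hδpos _)
      filter_upwards [h] with N hN
      rw [Real.dist_eq] at hN; linarith
    have big := (((E1.and E2).and E3).filter_mono h𝒰).and E4
    obtain ⟨N, hN⟩ := big.exists
    exact ⟨N, hN.1.1.1, hN.1.1.2, fun m hm => ⟨hN.1.2 m hm, hN.2 m hm⟩⟩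
  -- construct the subsequence
  let chosen : ℕ → Finset ℕ := fun j => Nat.rec ∅ (fun _ s => insert (spec s).choose s) j
  let n : ℕ → ℕ := fun j => (spec (chosen j)).choose
  have hchosen_succ : ∀ j, chosen (j+1) = insert (n j) (chosen j) := fun j => rfl
  have hnotmem : ∀ j, n j ∉ chosen j := fun j => ((spec (chosen j)).choose_spec).1
  have hmono : ∀ i j, i ≤ j → chosen i ⊆ chosen j := by
    intro i j hij
    induction j with
    | zero => simp_all
    | succ j ih =>
      rcases Nat.lt_or_ge i (j+1) with h | h
      · refine (ih (by omega)).trans ?_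
        rw [hchosen_succ]
        exact Finset.subset_insert _ _
      · have : i = j+1 := by omega
        subst this; rfl
  have hmem : ∀ i j, i < j → n i ∈ chosen j := by
    intro i j h
    refine hmono (i+1) j h ?_
    rw [hchosen_succ]
    exact Finset.mem_insert_self _ _
  have hcard : ∀ j, (chosen j).card = j := by
    intro j
    induction j with
    | zero => rfl
    | succ j ih => rw [hchosen_succ, Finset.card_insert_of_notMem (hnotmem j), ih]
  have hinj : Function.Injective n := by
    intro i j hij
    by_contra hne
    rcases Nat.lt_or_ge i j with h | h
    · exact hnotmem j (hij ▸ hmem i j h)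
    · exact hnotmem i (hij ▸ hmem j i (by omega))
  have hcondΦ : ∀ j, |Φ (w (n j))| ≤ ε/8 := fun j => ((spec (chosen j)).choose_spec).2.1
  have hcond : ∀ i j, i < j →
      |φ (n i) (w (n j)) - Φ (w (n j))| ≤ δ j ∧ |φ (n j) (w (n i)) - Φ (w (n i))| ≤ δ j := by
    intro i j h
    have h2 := ((spec (chosen j)).choose_spec).2.2 (n i) (hmem i j h)
    have hc : δ ((chosen j).card) = δ j := by rw [hcard]
    exact ⟨h2.1.trans (le_of_eq hc), h2.2.trans (le_of_eq hc)⟩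
  -- upper bound
  have hMε : ε ≤ M := by
    refine le_trans (hlb 0) ?_
    have := hM {0} ∅
    simpa using this
  have upper : ∀ (m : ℕ) (a : ℕ → ℝ),
      ‖∑ i ∈ Finset.range m, a i • w (n i)‖ ≤ M * ⨆ i : Fin m, |a i| := by
    intro m a
    rcases Nat.eq_zero_or_pos m with rfl | hm
    · simp [Real.iSup_of_isEmpty]
    have : Nonempty (Fin m) := Fin.pos_iff_nonempty.mp hm
    have hbdd : BddAbove (Set.range fun i : Fin m => |a i|) :=
      Set.Finite.bddAbove (Set.finite_range _)
    have hsup_nn : 0 ≤ ⨆ i : Fin m, |a i| :=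
      le_trans (abs_nonneg _) (le_ciSup hbdd ⟨0, hm⟩)
    have hale : ∀ i, i < m → |a i| ≤ ⨆ i : Fin m, |a i| :=
      fun i hi => le_ciSup hbdd ⟨i, hi⟩
    have hMnn : 0 ≤ M := le_trans (le_of_lt hε) hMε
    rw [mul_comm]
    refine NormedSpace.norm_le_dual_bound ℝ _ (mul_nonneg hsup_nn hMnn) (fun f => ?_)
    have key : ∑ i ∈ Finset.range m, |f (w (n i))| ≤ M * ‖f‖ := by
      set t := (Finset.range m).filter (fun i => 0 ≤ f (w (n i))) with ht
      set u := (Finset.range m).filter (fun i => ¬ 0 ≤ f (w (n i))) with hu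
      have himg : ∀ s : Finset ℕ, ∑ i ∈ s, w (n i) = ∑ N ∈ s.image n, w N := by
        intro s
        rw [Finset.sum_image (fun a _ b _ h => hinj h)]
      have hv : ∑ i ∈ Finset.range m, |f (w (n i))|
          = f ((∑ i ∈ t, w (n i)) - ∑ i ∈ u, w (n i)) := by
        rw [map_sub, map_sum, map_sum]
        rw [← Finset.sum_filter_add_sum_filter_not (Finset.range m)
          (fun i => 0 ≤ f (w (n i))) (fun i => |f (w (n i))|)]
        congr 1
        · exact Finset.sum_congr rfl fun i hi => abs_of_nonneg (Finset.mem_filter.mp hi).2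
        · rw [← Finset.sum_neg_distrib]
          exact Finset.sum_congr rfl fun i hi =>
            abs_of_neg (lt_of_not_ge (Finset.mem_filter.mp hi).2)
      rw [hv]
      have hnorm : ‖(∑ i ∈ t, w (n i)) - ∑ i ∈ u, w (n i)‖ ≤ M := by
        rw [himg t, himg u]
        exact hM _ _
      calc f ((∑ i ∈ t, w (n i)) - ∑ i ∈ u, w (n i))
          ≤ ‖f‖ * ‖(∑ i ∈ t, w (n i)) - ∑ i ∈ u, w (n i)‖ := by
            refine le_trans (le_abs_self _) ?_
            rw [← Real.norm_eq_abs]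
            exact f.le_opNorm _
        _ ≤ ‖f‖ * M := mul_le_mul_of_nonneg_left hnorm (norm_nonneg f)
        _ = M * ‖f‖ := mul_comm _ _
    rw [map_sum, Real.norm_eq_abs]
    calc |∑ i ∈ Finset.range m, f (a i • w (n i))|
        ≤ ∑ i ∈ Finset.range m, |a i| * |f (w (n i))| := by
          refine (Finset.abs_sum_le_sum_abs _ _).trans ?_
          refine Finset.sum_le_sum fun i _ => ?_
          rw [map_smul, smul_eq_mul, abs_mul]
      _ ≤ ∑ i ∈ Finset.range m, (⨆ i : Fin m, |a i|) * |f (w (n i))| := by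
          refine Finset.sum_le_sum fun i hi => ?_
          exact mul_le_mul_of_nonneg_right (hale i (Finset.mem_range.mp hi)) (abs_nonneg _)
      _ = (⨆ i : Fin m, |a i|) * ∑ i ∈ Finset.range m, |f (w (n i))| := by
          rw [Finset.mul_sum]
      _ ≤ (⨆ i : Fin m, |a i|) * (M * ‖f‖) := mul_le_mul_of_nonneg_left key hsup_nn
      _ = (⨆ i : Fin m, |a i|) * M * ‖f‖ := by ring
  -- lower bound
  have hΦnorm : ‖Φ‖ ≤ 1 := by
    refine ContinuousLinearMap.opNorm_le_bound Φ (by norm_num) (fun x => ?_)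
    rw [Real.norm_eq_abs, one_mul]
    exact hΦb x
  have geom : ∀ m : ℕ, ∑ i ∈ Finset.range m, δ i ≤ ε/4 := by
    intro m
    have h1 : ∀ i : ℕ, δ i ≤ ε/8 * (1/2)^i := by
      intro i
      have : ((1:ℝ)/4)^i ≤ (1/2)^i := by
        apply pow_le_pow_left₀ (by norm_num) (by norm_num)
      simp only [hδdef]
      nlinarith
    calc ∑ i ∈ Finset.range m, δ i ≤ ∑ i ∈ Finset.range m, ε/8 * (1/2)^i :=
          Finset.sum_le_sum fun i _ => h1 i
      _ = ε/8 * ∑ i ∈ Finset.range m, (1/2:ℝ)^i := by rw [Finset.mul_sum]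
      _ ≤ ε/8 * 2 := by
          have := sum_geometric_two_le m
          nlinarith
      _ = ε/4 := by ring
  have hjdelta : ∀ j : ℕ, (j:ℝ) * δ j ≤ ε/8 := by
    intro j
    have h2 : (j:ℝ) ≤ 4^j := by
      have := (Nat.lt_two_pow_self (n := j)).le
      have h3 : (2:ℕ)^j ≤ 4^j := Nat.pow_le_pow_left (by norm_num) j
      exact_mod_cast le_trans this h3
    have h4 : (0:ℝ) < 4^j := by positivity
    have h5 : (j:ℝ) * (1/4)^j ≤ 1 := by
      rw [one_div, inv_pow]
      rw [mul_inv_le_iff₀ h4, one_mul]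
      exact h2
    simp only [hδdef]
    nlinarith
  have lower : ∀ (m : ℕ) (a : ℕ → ℝ),
      (ε/4) * (⨆ i : Fin m, |a i|) ≤ ‖∑ i ∈ Finset.range m, a i • w (n i)‖ := by
    intro m a
    rcases Nat.eq_zero_or_pos m with rfl | hm
    · simp [Real.iSup_of_isEmpty]
    have : Nonempty (Fin m) := Fin.pos_iff_nonempty.mp hm
    obtain ⟨j, hjmem, hjmax⟩ := Finset.exists_max_image (Finset.range m)
      (fun i => |a i|) ⟨0, Finset.mem_range.mpr hm⟩
    have hjm : j < m := Finset.mem_range.mp hjmem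
    have hsup_le : (⨆ i : Fin m, |a i|) ≤ |a j| :=
      ciSup_le (fun i => hjmax i (Finset.mem_range.mpr i.2))
    set ψ : X →L[ℝ] ℝ := φ (n j) - Φ with hψ
    set U := ∑ i ∈ Finset.range m, a i • w (n i) with hU
    have hψnorm : ‖ψ‖ ≤ 2 := by
      calc ‖φ (n j) - Φ‖ ≤ ‖φ (n j)‖ + ‖Φ‖ := norm_sub_le _ _
        _ ≤ 1 + 1 := add_le_add (le_of_eq (hφ1 _)) hΦnorm
        _ = 2 := by norm_num
    have hψU : |ψ U| ≤ 2 * ‖U‖ := by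
      have := ψ.le_opNorm U
      rw [Real.norm_eq_abs] at this
      nlinarith [norm_nonneg U]
    -- main term
    have hmain : ε - ε/8 ≤ ψ (w (n j)) := by
      have h1 : ψ (w (n j)) = ‖w (n j)‖ - Φ (w (n j)) := by
        rw [hψ, ContinuousLinearMap.sub_apply, hφw]
      have h2 := abs_le.mp (hcondΦ j)
      have h3 := hlb (n j)
      rw [h1]; linarith [h2.1, h2.2]
    -- cross terms
    have hcross : ∀ i, i ∈ Finset.range m → i ≠ j → |ψ (w (n i))| ≤ if i < j then δ j else δ i := by
      intro i hi hne
      rcases Nat.lt_or_ge i j with h | h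
      · rw [if_pos h]
        have := (hcond i j h).2
        rw [hψ, ContinuousLinearMap.sub_apply]
        exact this
      · have hji : j < i := by omega
        rw [if_neg (by omega)]
        have := (hcond j i hji).1
        rw [hψ, ContinuousLinearMap.sub_apply]
        exact this
    have hcross_sum : ∑ i ∈ (Finset.range m).erase j, |ψ (w (n i))| ≤ 3*ε/8 := by
      have hsplit : (Finset.range m).erase j ⊆ Finset.range j ∪ Finset.Ico (j+1) m := by
        intro i hi
        have h1 := Finset.mem_erase.mp hi
        have h2 := Finset.mem_range.mp h1.2
        rcases Nat.lt_or_ge i j with h | h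
        · exact Finset.mem_union_left _ (Finset.mem_range.mpr h)
        · exact Finset.mem_union_right _ (Finset.mem_Ico.mpr ⟨by omega, h2⟩)
      have hdisj : Disjoint (Finset.range j) (Finset.Ico (j+1) m) := by
        refine Finset.disjoint_left.mpr fun i hi1 hi2 => ?_
        have := Finset.mem_range.mp hi1
        have := (Finset.mem_Ico.mp hi2).1
        omega
      calc ∑ i ∈ (Finset.range m).erase j, |ψ (w (n i))|
          ≤ ∑ i ∈ (Finset.range m).erase j, (if i < j then δ j else δ i) := by
            refine Finset.sum_le_sum fun i hi => ?_
            have h1 := Finset.mem_erase.mp hi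
            exact hcross i h1.2 h1.1
        _ ≤ ∑ i ∈ Finset.range j ∪ Finset.Ico (j+1) m, (if i < j then δ j else δ i) := by
            refine Finset.sum_le_sum_of_subset_of_nonneg hsplit fun i _ _ => ?_
            split <;> exact (hδpos _).le
        _ = (∑ i ∈ Finset.range j, (if i < j then δ j else δ i))
            + ∑ i ∈ Finset.Ico (j+1) m, (if i < j then δ j else δ i) := Finset.sum_union hdisj
        _ ≤ ε/8 + ε/4 := by
            have hA : (∑ i ∈ Finset.range j, (if i < j then δ j else δ i)) = (j:ℝ) * δ j := by
              rw [Finset.sum_congr rfl (fun i hi => if_pos (Finset.mem_range.mp hi))]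
              rw [Finset.sum_const, Finset.card_range, nsmul_eq_mul]
            have hB : (∑ i ∈ Finset.Ico (j+1) m, (if i < j then δ j else δ i))
                ≤ ∑ i ∈ Finset.range m, δ i := by
              rw [Finset.sum_congr rfl (fun i hi => if_neg (by
                have := (Finset.mem_Ico.mp hi).1; omega))]
              refine Finset.sum_le_sum_of_subset_of_nonneg ?_ (fun i _ _ => (hδpos _).le)
              intro i hi
              exact Finset.mem_range.mpr (Finset.mem_Ico.mp hi).2
            have := geom m
            have := hjdelta j
            linarith
        _ = 3*ε/8 := by ring
    -- put it together
    have happ : ψ U = a j * ψ (w (n j)) + ∑ i ∈ (Finset.range m).erase j, a i * ψ (w (n i)) := by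
      rw [hU, map_sum]
      rw [← Finset.add_sum_erase _ _ hjmem]
      congr 1
      · rw [map_smul]; rfl
      · exact Finset.sum_congr rfl fun i _ => by rw [map_smul]; rfl
    have herr : |∑ i ∈ (Finset.range m).erase j, a i * ψ (w (n i))| ≤ |a j| * (3*ε/8) := by
      calc |∑ i ∈ (Finset.range m).erase j, a i * ψ (w (n i))|
          ≤ ∑ i ∈ (Finset.range m).erase j, |a i * ψ (w (n i))| :=
            Finset.abs_sum_le_sum_abs _ _
        _ ≤ ∑ i ∈ (Finset.range m).erase j, |a j| * |ψ (w (n i))| := by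
            refine Finset.sum_le_sum fun i hi => ?_
            rw [abs_mul]
            exact mul_le_mul_of_nonneg_right
              (hjmax i (Finset.mem_of_mem_erase hi)) (abs_nonneg _)
        _ = |a j| * ∑ i ∈ (Finset.range m).erase j, |ψ (w (n i))| := by rw [Finset.mul_sum]
        _ ≤ |a j| * (3*ε/8) := mul_le_mul_of_nonneg_left hcross_sum (abs_nonneg _)
    have hmain2 : |a j| * (ε - ε/8) ≤ |a j * ψ (w (n j))| := by
      rw [abs_mul]
      refine mul_le_mul_of_nonneg_left ?_ (abs_nonneg _)
      refine le_trans hmain (le_abs_self _)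
    have hlow : |a j| * (ε/2) ≤ |ψ U| := by
      rw [happ]
      have h1 := abs_add_le (a j * ψ (w (n j))) (∑ i ∈ (Finset.range m).erase j, a i * ψ (w (n i)))
      have h2 : |a j * ψ (w (n j))| ≤ |a j * ψ (w (n j)) + ∑ i ∈ (Finset.range m).erase j, a i * ψ (w (n i))| + |∑ i ∈ (Finset.range m).erase j, a i * ψ (w (n i))| := by
        have h3 := abs_add_le (a j * ψ (w (n j)) + ∑ i ∈ (Finset.range m).erase j, a i * ψ (w (n i))) (-(∑ i ∈ (Finset.range m).erase j, a i * ψ (w (n i))))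
        simp only [add_neg_cancel_right, abs_neg] at h3
        exact h3
      have hsplit8 : |a j| * (ε - ε/8) = |a j| * (ε/2) + |a j| * (3*ε/8) := by ring
      linarith
    calc (ε/4) * (⨆ i : Fin m, |a i|) ≤ (ε/4) * |a j| := by
          refine mul_le_mul_of_nonneg_left hsup_le (by positivity)
      _ ≤ ‖U‖ := by linarith [hψU, hlow, norm_nonneg U, abs_nonneg (a j)]
  refine ⟨n, hinj, ?_⟩
  refine ⟨ε/4, M, by positivity, by linarith, ?_⟩
  intro m a
  exact ⟨lower m a, upper m a⟩

lemma poly_alt_sum {X Y : Type*} [NormedAddCommGroup X] [NormedSpace ℝ X]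
    [NormedAddCommGroup Y] [NormedSpace ℝ Y] (k : ℕ) (hk : 1 ≤ k)
    (A : ContinuousMultilinearMap ℝ (fun _ : Fin k => X) Y) (u b : X) :
    ∑ j ∈ Finset.range (k+1), ((-1:ℝ)^j * (k.choose j : ℝ)) • A (fun _ => u + j • b)
      = ((-1:ℝ)^k * (k.factorial : ℝ)) • A (fun _ => b) := by
  classical
  have hexp : ∀ c : ℝ, A (fun _ => u + c • b)
      = ∑ s : Finset (Fin k), c ^ s.card • A (s.piecewise (fun _ => b) (fun _ => u)) := by
    intro c
    have h0 : (fun _ : Fin k => u + c • b)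
        = (fun _ : Fin k => c • b) + (fun _ : Fin k => u) := by
      funext i; simp [add_comm]
    have h1 := A.toMultilinearMap.map_add_univ (fun _ : Fin k => c • b) (fun _ : Fin k => u)
    rw [ContinuousMultilinearMap.coe_coe] at h1
    rw [h0, h1]
    refine Finset.sum_congr rfl fun s _ => ?_
    have h2 : s.piecewise (fun _ : Fin k => c • b) (fun _ : Fin k => u)
        = s.piecewise (fun i => c • (s.piecewise (fun _ : Fin k => b) (fun _ : Fin k => u)) i)
            (s.piecewise (fun _ : Fin k => b) (fun _ : Fin k => u)) := by
      funext i
      by_cases hi : i ∈ s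
      · rw [Finset.piecewise_eq_of_mem _ _ _ hi, Finset.piecewise_eq_of_mem _ _ _ hi,
          Finset.piecewise_eq_of_mem _ _ _ hi]
      · rw [Finset.piecewise_eq_of_notMem _ _ _ hi, Finset.piecewise_eq_of_notMem _ _ _ hi,
          Finset.piecewise_eq_of_notMem _ _ _ hi]
    have h3 := A.toMultilinearMap.map_piecewise_smul (fun _ : Fin k => c)
      (s.piecewise (fun _ : Fin k => b) (fun _ : Fin k => u)) s
    rw [ContinuousMultilinearMap.coe_coe] at h3
    rw [h2, h3, Finset.prod_const]
  have hsmulcast : ∀ (j : ℕ), (fun _ : Fin k => u + j • b) = (fun _ : Fin k => u + (j:ℝ) • b) := by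
    intro j
    funext i
    rw [Nat.cast_smul_eq_nsmul]
  calc ∑ j ∈ Finset.range (k+1), ((-1:ℝ)^j * (k.choose j : ℝ)) • A (fun _ => u + j • b)
      = ∑ j ∈ Finset.range (k+1), ∑ s : Finset (Fin k),
          (((-1:ℝ)^j * (k.choose j : ℝ)) * (j:ℝ) ^ s.card) •
            A (s.piecewise (fun _ => b) (fun _ => u)) := by
        refine Finset.sum_congr rfl fun j _ => ?_
        rw [hsmulcast j, hexp ((j:ℕ):ℝ), Finset.smul_sum]
        refine Finset.sum_congr rfl fun s _ => ?_
        rw [smul_smul]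
    _ = ∑ s : Finset (Fin k), (Salt k (fun j => (j:ℝ)^s.card)) •
          A (s.piecewise (fun _ => b) (fun _ => u)) := by
        rw [Finset.sum_comm]
        refine Finset.sum_congr rfl fun s _ => ?_
        rw [Salt, ← Finset.sum_smul]
    _ = ((-1:ℝ)^k * (k.factorial : ℝ)) • A (fun _ => b) := by
        rw [Finset.sum_eq_single Finset.univ]
        · rw [Finset.card_univ, Fintype.card_fin, Salt_pow_self, Finset.piecewise_univ]
        · intro s _ hs
          have hlt : s.card < k := by
            have h4 : s ⊂ Finset.univ := Finset.ssubset_univ_iff.mpr hs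
            have := Finset.card_lt_card h4
            rwa [Finset.card_univ, Fintype.card_fin] at this
          rw [Salt_pow_lt k s.card hlt, zero_smul]
        · intro h
          exact absurd (Finset.mem_univ _) h

lemma sum_range_mul_block {M : Type*} [AddCommMonoid M] (f : ℕ → M) (K m : ℕ) :
    ∑ i ∈ Finset.range (K * m), f i
      = ∑ j ∈ Finset.range m, ∑ i ∈ Finset.range K, f (K * j + i) := by
  induction m with
  | zero => simp
  | succ m ih => rw [Nat.mul_succ, my_sum_range_add, ih, Finset.sum_range_succ]

/-- Condition (E) implies that `P` is an Orlicz–Pettis polynomial. -/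
theorem orlicz_pettis_of_norms_not_tendsto_zero {X : Type u} {Y : Type v}
    [NormedAddCommGroup X] [NormedSpace ℝ X] [CompleteSpace X]
    [NormedAddCommGroup Y] [NormedSpace ℝ Y] [CompleteSpace Y]
    (k : ℕ) (hk : 1 ≤ k) (A : ContinuousMultilinearMap ℝ (fun _ : Fin k => X) Y)
    (P : X → Y) (hP : P = fun x => A fun _ => x)
    (hE : ∀ x : ℕ → X, IsEquivC0Basis x →
      ¬ Tendsto (fun n => ‖P (x n)‖) atTop (𝓝 0)) :
    ∀ (Z : Type w) [NormedAddCommGroup Z] [NormedSpace ℝ Z] [CompleteSpace Z]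
      (T : Z →L[ℝ] X), UCPoly (fun z => P (T z)) → UCOp ⇑T := by
  intro Z _ _ _ T hQ
  intro z hz
  by_contra hns
  rw [summable_iff_vanishing_norm] at hns
  push_neg at hns
  obtain ⟨ε, hε, H⟩ := hns
  obtain ⟨B, hBdisj, hBnorm⟩ := exists_blocks (f := fun i => T (z i)) (ε := ε)
    (fun s => by
      obtain ⟨t0, ht1, ht2⟩ := H s
      exact ⟨t0, ht1, ht2⟩)
  set v : ℕ → Z := fun j => ∑ i ∈ B j, z i with hv
  have hvW : WUC v := wuc_blocks hz hBdisj
  set w : ℕ → X := fun j => T (v j) with hwdef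
  have hwW : WUC w := by
    intro f
    have := hvW (f.comp T)
    simpa using this
  have hwlb : ∀ j, ε ≤ ‖w j‖ := by
    intro j
    have h1 := hBnorm j
    have h2 : ∑ i ∈ B j, T (z i) = w j := (map_sum T z (B j)).symm
    rwa [h2] at h1
  obtain ⟨n, hninj, hc0⟩ := exists_c0_subseq w hwW hε hwlb
  set y : ℕ → Z := fun j => v (n j) with hy
  have hyW : ∀ f : Z →L[ℝ] ℝ, Summable fun j => |f (y j)| := by
    intro f
    exact (hvW f).comp_injective hninj
  -- decompose k
  obtain ⟨k', rfl⟩ : ∃ k', k = k' + 1 := ⟨k - 1, by omega⟩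
  set K : ℕ := 2 * k' + 1 with hK
  have hKpos : 0 < K := by omega
  -- the auxiliary series
  set t : ℕ → Z := fun N => if N % K < k' + 1 then y (N / K) else - y (N / K) with ht
  have htabs : ∀ (f : Z →L[ℝ] ℝ) (N : ℕ), |f (t N)| = |f (y (N / K))| := by
    intro f N
    rw [ht]
    simp only
    split
    · rfl
    · rw [map_neg, abs_neg]
  have htW : WUC t := by
    intro f
    have hsum : Summable fun N => |f (y (N / K))| := by
      apply summable_of_sum_range_le (c := (K : ℝ) * ∑' j, |f (y j)|)
        (fun N => abs_nonneg _)
      intro m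
      have h1 : ∑ N ∈ Finset.range m, |f (y (N / K))|
          ≤ ∑ N ∈ Finset.range (K * m), |f (y (N / K))| := by
        refine Finset.sum_le_sum_of_subset_of_nonneg ?_ (fun i _ _ => abs_nonneg _)
        refine Finset.range_subset_range.mpr ?_
        calc m = 1 * m := (one_mul m).symm
          _ ≤ K * m := Nat.mul_le_mul_right m hKpos
      have h2 : ∑ N ∈ Finset.range (K * m), |f (y (N / K))|
          = ∑ j ∈ Finset.range m, ∑ i ∈ Finset.range K, |f (y ((K * j + i) / K))| :=
        sum_range_mul_block (fun N => |f (y (N / K))|) K m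
      have h3 : ∀ j, ∑ i ∈ Finset.range K, |f (y ((K * j + i) / K))| = (K:ℝ) * |f (y j)| := by
        intro j
        rw [Finset.sum_congr rfl (fun i hi => by
          rw [Nat.mul_add_div hKpos, Nat.div_eq_of_lt (Finset.mem_range.mp hi), Nat.add_zero])]
        rw [Finset.sum_const, Finset.card_range, nsmul_eq_mul]
      calc ∑ N ∈ Finset.range m, |f (y (N / K))|
          ≤ ∑ N ∈ Finset.range (K * m), |f (y (N / K))| := h1
        _ = ∑ j ∈ Finset.range m, (K:ℝ) * |f (y j)| := by
            rw [h2]; exact Finset.sum_congr rfl fun j _ => h3 j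
        _ = (K:ℝ) * ∑ j ∈ Finset.range m, |f (y j)| := by rw [Finset.mul_sum]
        _ ≤ (K:ℝ) * ∑' j, |f (y j)| := by
            refine mul_le_mul_of_nonneg_left ?_ (by positivity)
            exact Summable.sum_le_tsum _ (fun _ _ => abs_nonneg _) (hyW f)
    exact (summable_congr (fun N => (htabs f N))).mpr hsum
  obtain ⟨L, hL⟩ := hQ t htW
  -- partial sums of the auxiliary series
  have hti : ∀ m i, i < K → t (K * m + i) = if i < k' + 1 then y m else - y m := by
    intro m i hiK
    rw [ht]
    simp only
    rw [Nat.mul_add_mod, Nat.mod_eq_of_lt hiK, Nat.mul_add_div hKpos,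
      Nat.div_eq_of_lt hiK]
    simp
  have hblock : ∀ m, ∑ i ∈ Finset.range K, t (K * m + i) = y m := by
    intro m
    have hsplit : K = (k' + 1) + k' := by omega
    rw [Finset.sum_congr rfl (fun i hi => hti m i (Finset.mem_range.mp hi))]
    rw [hsplit, my_sum_range_add]
    have hA : ∑ i ∈ Finset.range (k' + 1), (if i < k' + 1 then y m else - y m)
        = (k' + 1) • y m := by
      rw [Finset.sum_congr rfl (fun i hi => if_pos (Finset.mem_range.mp hi))]
      rw [Finset.sum_const, Finset.card_range]
    have hB2 : ∑ i ∈ Finset.range k', (if (k' + 1) + i < k' + 1 then y m else - y m)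
        = k' • (- y m) := by
      rw [Finset.sum_congr rfl (fun i _ => if_neg (by omega))]
      rw [Finset.sum_const, Finset.card_range]
    rw [hA, hB2, succ_nsmul, smul_neg]
    abel
  have hfull : ∀ m, ∑ i ∈ Finset.range (K * m), t i = ∑ j ∈ Finset.range m, y j := by
    intro m
    rw [sum_range_mul_block]
    exact Finset.sum_congr rfl fun j _ => hblock j
  have hps : ∀ m r, r ≤ k' + 1 → ∑ i ∈ Finset.range (K * m + r), t i
      = (∑ i ∈ Finset.range m, y i) + r • y m := by
    intro m r hr
    rw [my_sum_range_add, hfull]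
    congr 1
    rw [Finset.sum_congr rfl (fun i hi => by
      have hir := Finset.mem_range.mp hi
      rw [hti m i (by omega : i < K), if_pos (by omega)])]
    rw [Finset.sum_const, Finset.card_range]
  -- limits along arithmetic progressions
  have hLj : ∀ j, j ≤ k' + 1 →
      Tendsto (fun m => P (T ((∑ i ∈ Finset.range m, y i) + j • y m))) atTop (𝓝 L) := by
    intro j hj
    have hc : Tendsto (fun m => K * m + j) atTop atTop := by
      refine tendsto_atTop_mono (fun m => ?_) tendsto_id
      calc (id m : ℕ) = 1 * m := (one_mul m).symm
        _ ≤ K * m := Nat.mul_le_mul_right m hKpos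
        _ ≤ K * m + j := Nat.le_add_right _ _
    have h5 := hL.comp hc
    refine h5.congr (fun m => ?_)
    simp only [Function.comp]
    rw [hps m j hj]
  -- the alternating combination
  set α : ℝ := (-1:ℝ)^(k'+1) * ((k'+1).factorial : ℝ) with hα
  have hαne : α ≠ 0 := by
    rw [hα]
    refine mul_ne_zero (pow_ne_zero _ (by norm_num)) ?_
    exact_mod_cast (Nat.factorial_pos (k'+1)).ne'
  set G : ℕ → Y := fun m => ∑ j ∈ Finset.range (k' + 2),
    ((-1:ℝ)^j * ((k'+1).choose j : ℝ)) •
      P (T ((∑ i ∈ Finset.range m, y i) + j • y m)) with hG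
  have hGlim : Tendsto G atTop (𝓝 (∑ j ∈ Finset.range (k' + 2),
      ((-1:ℝ)^j * ((k'+1).choose j : ℝ)) • L)) := by
    refine tendsto_finset_sum _ (fun j hj => ?_)
    have hjr := Finset.mem_range.mp hj
    exact (hLj j (by omega)).const_smul _
  have hsum0 : (∑ j ∈ Finset.range (k' + 2), ((-1:ℝ)^j * ((k'+1).choose j : ℝ)) • L) = 0 := by
    rw [← Finset.sum_smul]
    have h6 : ∑ j ∈ Finset.range (k' + 2), (-1:ℝ)^j * ((k'+1).choose j : ℝ)
        = Salt (k'+1) (fun j => (j:ℝ)^0) := by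
      rw [Salt]
      refine Finset.sum_congr rfl fun j _ => ?_
      rw [pow_zero, mul_one]
    rw [h6, Salt_pow_lt (k'+1) 0 (by omega), zero_smul]
  have hGval : ∀ m, G m = α • P (T (y m)) := by
    intro m
    rw [hG]
    simp only
    have h7 : ∀ j : ℕ, P (T ((∑ i ∈ Finset.range m, y i) + j • y m))
        = A (fun _ => T (∑ i ∈ Finset.range m, y i) + j • T (y m)) := by
      intro j
      rw [hP]
      simp only
      congr 1
      funext i
      rw [map_add, map_nsmul]
    rw [Finset.sum_congr rfl (fun j _ => by rw [h7 j])]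
    have h8 := poly_alt_sum (k'+1) (by omega) A
      (T (∑ i ∈ Finset.range m, y i)) (T (y m))
    rw [hP, hα]
    exact h8
  rw [hsum0] at hGlim
  have h11 : Tendsto (fun m => P (T (y m))) atTop (𝓝 0) := by
    have h12 := hGlim.const_smul α⁻¹
    rw [smul_zero] at h12
    refine h12.congr (fun m => ?_)
    rw [hGval m, smul_smul, inv_mul_cancel₀ hαne, one_smul]
  have h13 : Tendsto (fun m => ‖P (T (y m))‖) atTop (𝓝 0) :=
    tendsto_zero_iff_norm_tendsto_zero.mp h11
  exact hE (fun j => w (n j)) hc0 h13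
end
end

section
/- There exists a continuous 2-homogeneous polynomial P : c₀ → c₀ such that P(eₙ) = 0 for every n ∈ ℕ (so the sequence ‖P(eₙ)‖ converges to 0 although (eₙ) is equivalent to the c₀-basis), and yet P is an Orlicz–Pettis polynomial: for every real Banach space Z and every bounded linear operator T : Z → c₀, if the polynomial P∘T is unconditionally converging then T is an unconditionally converging operator. -/
open Filter Topology Metric

noncomputable section

lemma c0_apply_le_norm (f : c0) (k : ℕ) : |f k| ≤ ‖f‖ :=
  f.toBCF.norm_coe_le_norm k

lemma c0_norm_le {f : c0} {C : ℝ} (hC : 0 ≤ C) (h : ∀ k, |f k| ≤ C) : ‖f‖ ≤ C := by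
  rw [← ZeroAtInftyContinuousMap.norm_toBCF_eq_norm]
  exact (BoundedContinuousFunction.norm_le hC).mpr h

lemma c0_tendsto (f : c0) : Tendsto (fun k => f k) atTop (𝓝 0) := by
  have := f.zero_at_infty'
  rwa [Filter.cocompact_eq_cofinite, Nat.cofinite_eq_atTop] at this

lemma unpair_inj : Function.Injective Nat.unpair := by
  intro a b h
  rw [← Nat.pair_unpair a, ← Nat.pair_unpair b, h]

def iIdx (m : ℕ) : ℕ := (Nat.unpair m).1
def jIdx (m : ℕ) : ℕ := (Nat.unpair m).1 + (Nat.unpair m).2 + 1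

lemma iIdx_lt_jIdx (m : ℕ) : iIdx m < jIdx m := by simp [iIdx, jIdx]

def mIdx (k l : ℕ) : ℕ := Nat.pair k (l - k - 1)

lemma iIdx_mIdx (k l : ℕ) : iIdx (mIdx k l) = k := by simp [iIdx, mIdx]
lemma jIdx_mIdx {k l : ℕ} (h : k < l) : jIdx (mIdx k l) = l := by simp [jIdx, mIdx]; omega

lemma mIdx_inj {k l k' l' : ℕ} (h : k < l) (h' : k' < l') (heq : mIdx k l = mIdx k' l') :
    k = k' ∧ l = l' := by
  have h1 := congrArg iIdx heq
  have h2 := congrArg jIdx heq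
  rw [iIdx_mIdx, iIdx_mIdx] at h1
  rw [jIdx_mIdx h, jIdx_mIdx h'] at h2
  exact ⟨h1, h2⟩

def bilinFun (x y : c0) : c0 :=
  { toFun := fun m => x (iIdx m) * y (jIdx m)
    continuous_toFun := continuous_of_discreteTopology
    zero_at_infty' := by
      rw [Filter.cocompact_eq_cofinite]
      rw [Metric.tendsto_nhds]
      intro ε hε
      rw [Filter.eventually_cofinite]
      have hx := Metric.tendsto_nhds.mp (c0_tendsto x)
      have hy := Metric.tendsto_nhds.mp (c0_tendsto y)
      obtain ⟨N1, hN1⟩ := (Filter.eventually_atTop).mp (hx (ε / (‖y‖ + 1)) (by positivity))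
      obtain ⟨N2, hN2⟩ := (Filter.eventually_atTop).mp (hy (ε / (‖x‖ + 1)) (by positivity))
      have key : {m | ¬ dist (x (iIdx m) * y (jIdx m)) 0 < ε} ⊆
          Nat.unpair ⁻¹' (Set.Iio N1 ×ˢ Set.Iio N2) := by
        intro m hm
        simp only [Set.mem_setOf_eq, dist_zero_right, Real.norm_eq_abs, not_lt] at hm
        by_contra hcon
        simp only [Set.mem_preimage, Set.mem_prod, Set.mem_Iio, not_and_or, not_lt] at hcon
        have : |x (iIdx m) * y (jIdx m)| < ε := by
          rw [abs_mul]
          rcases hcon with hc | hc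
          · have h1 : dist (x (iIdx m)) 0 < ε / (‖y‖ + 1) := hN1 _ hc
            rw [dist_zero_right, Real.norm_eq_abs] at h1
            calc |x (iIdx m)| * |y (jIdx m)| ≤ |x (iIdx m)| * (‖y‖ + 1) := by
                  refine mul_le_mul_of_nonneg_left ?_ (abs_nonneg _)
                  linarith [c0_apply_le_norm y (jIdx m)]
              _ < ε / (‖y‖ + 1) * (‖y‖ + 1) := by
                  refine mul_lt_mul_of_pos_right h1 (by positivity)
              _ = ε := by field_simp
          · have hj : N2 ≤ jIdx m := by unfold jIdx; omega
            have h1 : dist (y (jIdx m)) 0 < ε / (‖x‖ + 1) := hN2 _ hj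
            rw [dist_zero_right, Real.norm_eq_abs] at h1
            calc |x (iIdx m)| * |y (jIdx m)| ≤ (‖x‖ + 1) * |y (jIdx m)| := by
                  refine mul_le_mul_of_nonneg_right ?_ (abs_nonneg _)
                  linarith [c0_apply_le_norm x (iIdx m)]
              _ < (‖x‖ + 1) * (ε / (‖x‖ + 1)) := by
                  refine mul_lt_mul_of_pos_left h1 (by positivity)
              _ = ε := by field_simp
        linarith
      exact Set.Finite.subset (Set.Finite.preimage (Set.injOn_of_injective unpair_inj)
        ((Set.finite_Iio N1).prod (Set.finite_Iio N2))) key }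

@[simp] lemma bilinFun_apply (x y : c0) (m : ℕ) : bilinFun x y m = x (iIdx m) * y (jIdx m) := rfl

lemma bilinFun_norm (x y : c0) : ‖bilinFun x y‖ ≤ ‖x‖ * ‖y‖ := by
  refine c0_norm_le (by positivity) fun m => ?_
  simp only [bilinFun_apply, abs_mul]
  exact mul_le_mul (c0_apply_le_norm x _) (c0_apply_le_norm y _) (abs_nonneg _) (norm_nonneg _)

def Amap : ContinuousMultilinearMap ℝ (fun _ : Fin 2 => c0) c0 :=
  MultilinearMap.mkContinuous
    { toFun := fun v => bilinFun (v 0) (v 1)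
      map_update_add' := by
        intro _ m i a b
        fin_cases i <;> ext k <;>
          simp [Function.update, bilinFun, add_mul, mul_add,
            ZeroAtInftyContinuousMap.coe_add, Pi.add_apply]
      map_update_smul' := by
        intro _ m i c a
        fin_cases i <;> ext k <;>
          simp [Function.update, bilinFun, ZeroAtInftyContinuousMap.coe_smul,
            mul_assoc, mul_left_comm] }
    1 (by
      intro v
      simp only [MultilinearMap.coe_mk, one_mul, Fin.prod_univ_two]
      exact bilinFun_norm (v 0) (v 1))

def evalCLM (k : ℕ) : c0 →L[ℝ] ℝ :=
  LinearMap.mkContinuous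
    { toFun := fun f => f k
      map_add' := fun f g => rfl
      map_smul' := fun c f => rfl }
    1 (fun f => by simpa using c0_apply_le_norm f k)

@[simp] lemma evalCLM_apply (k : ℕ) (f : c0) : evalCLM k f = f k := rfl

/-- finite sums within the tail are bounded by the tail tsum -/
lemma sum_le_tail {g : ℕ → ℝ} (hg : ∀ n, 0 ≤ g n) (hs : Summable g) {M : ℕ}
    {t : Finset ℕ} (ht : ∀ n ∈ t, M ≤ n) : ∑ n ∈ t, g n ≤ ∑' n, g (n + M) := by
  have hinj : Set.InjOn (fun n => n - M) t := by
    intro a ha b hb h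
    have := ht a ha; have := ht b hb
    simp only at h; omega
  have : ∑ n ∈ t, g n = ∑ i ∈ t.image (fun n => n - M), g (i + M) := by
    rw [Finset.sum_image (fun a ha b hb h => hinj ha hb h)]
    refine Finset.sum_congr rfl fun n hn => ?_
    have := ht n hn
    congr 1; omega
  rw [this]
  exact Summable.sum_le_tsum _ (fun i _ => hg _) ((summable_nat_add_iff M).mpr hs)

lemma tail_eq {g : ℕ → ℝ} (hs : Summable g) {N M : ℕ} (h : N ≤ M) :
    ∑' n, g (n + N) = (∑ n ∈ Finset.Ico N M, g n) + ∑' n, g (n + M) := by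
  have hsN : Summable fun n => g (n + N) := (summable_nat_add_iff N).mpr hs
  have := (Summable.sum_add_tsum_nat_add (f := fun n => g (n + N)) (M - N) hsN).symm
  rw [this]
  congr 1
  · rw [Finset.sum_Ico_eq_sum_range]
    exact Finset.sum_congr rfl fun i _ => by congr 1; omega
  · exact tsum_congr fun i => by congr 1; omega

lemma tail_mono {g : ℕ → ℝ} (hg : ∀ n, 0 ≤ g n) (hs : Summable g) {N M : ℕ} (h : N ≤ M) :
    ∑' n, g (n + M) ≤ ∑' n, g (n + N) := by
  rw [tail_eq hs h]
  have : 0 ≤ ∑ n ∈ Finset.Ico N M, g n := Finset.sum_nonneg fun n _ => hg n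
  linarith

/-- Sufficient criterion for summability in c0. -/
lemma summable_c0 {y : ℕ → c0} (hcol : ∀ k, Summable fun n => |y n k|)
    (hvan : ∀ ε > (0:ℝ), ∃ N : ℕ, ∀ k, (∑' n, |y (n + N) k|) ≤ ε) : Summable y := by
  rw [summable_iff_vanishing]
  intro s hs
  rw [Metric.mem_nhds_iff] at hs
  obtain ⟨ε, hε, hball⟩ := hs
  obtain ⟨N, hN⟩ := hvan (ε / 2) (by positivity)
  refine ⟨Finset.range N, fun t htd => ?_⟩
  apply hball
  rw [Metric.mem_ball, dist_zero_right]
  have ht : ∀ n ∈ t, N ≤ n := by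
    intro n hn
    by_contra hc
    exact (Finset.disjoint_left.mp htd hn) (Finset.mem_range.mpr (by omega))
  have hb : ∀ k, |(∑ n ∈ t, y n) k| ≤ ε / 2 := by
    intro k
    calc |(∑ n ∈ t, y n) k| = |∑ n ∈ t, y n k| := by
          rw [← evalCLM_apply, map_sum]; rfl
      _ ≤ ∑ n ∈ t, |y n k| := Finset.abs_sum_le_sum_abs _ _
      _ ≤ ∑' n, |y (n + N) k| := sum_le_tail (fun n => abs_nonneg _) (hcol k) ht
      _ ≤ ε / 2 := hN k
  have := c0_norm_le (by positivity) hb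
  linarith

lemma glide_step {y : ℕ → c0} {δ : ℝ} (hδpos : 0 < δ)
    (hcol : ∀ k, Summable fun n => |y n k|)
    (hbig : ∀ N, ∃ k, δ < ∑' n, |y (n + N) k|) (N K : ℕ) :
    ∃ k N', K < k ∧ N < N' ∧ (∑ n ∈ Finset.range N, |y n k|) ≤ δ / 8 ∧
      δ / 2 ≤ ∑ n ∈ Finset.Ico N N', |y n k| ∧ (∑' n, |y (n + N') k|) ≤ δ / 8 := by
  -- tails as a function
  have htail0 : ∀ k, Tendsto (fun M => ∑' n, |y (n + M) k|) atTop (𝓝 0) := by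
    intro k
    simpa using _root_.tendsto_sum_nat_add fun n => |y n k|
  -- witnesses with large tail exist beyond any bound
  have hub : ∀ K₂ : ℕ, ∃ k, K₂ ≤ k ∧ δ < ∑' n, |y (n + N) k| := by
    intro K₂
    by_contra hc
    push_neg at hc
    have hM : ∀ k, ∃ Mk, ∀ M ≥ Mk, (∑' n, |y (n + M) k|) ≤ δ := by
      intro k
      have := (htail0 k).eventually (eventually_le_nhds hδpos)
      simpa using (eventually_atTop.mp (this.mono (by intro M hM; simpa using hM)))
    choose Mf hMf using hM
    set M₀ := max N ((Finset.range K₂).sup Mf) with hM₀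
    obtain ⟨k, hk⟩ := hbig M₀
    have : (∑' n, |y (n + M₀) k|) ≤ δ := by
      by_cases hkK : k < K₂
      · refine hMf k M₀ ?_
        exact le_max_of_le_right (Finset.le_sup (Finset.mem_range.mpr hkK))
      · push_neg at hkK
        refine le_trans (tail_mono (fun n => abs_nonneg _) (hcol k) (le_max_left _ _)) ?_
        exact hc k hkK
    linarith
  -- head small for large k
  have hhead : Tendsto (fun k => ∑ n ∈ Finset.range N, |y n k|) atTop (𝓝 0) := by
    have : ∀ n ∈ Finset.range N, Tendsto (fun k => |y n k|) atTop (𝓝 0) := by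
      intro n _
      simpa using (c0_tendsto (y n)).abs
    simpa using tendsto_finset_sum (Finset.range N) this
  obtain ⟨K₁, hK₁⟩ := eventually_atTop.mp
    (hhead.eventually (eventually_le_nhds (by positivity : (0:ℝ) < δ / 8)))
  obtain ⟨k, hkge, hktail⟩ := hub (max (K + 1) K₁)
  obtain ⟨N₂, hN₂⟩ := eventually_atTop.mp
    ((htail0 k).eventually (eventually_le_nhds (by positivity : (0:ℝ) < δ / 8)))
  refine ⟨k, max (N + 1) N₂, by omega, by omega, ?_, ?_, ?_⟩
  · exact hK₁ k (le_trans (le_max_right _ _) hkge)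
  · have heq := tail_eq (hcol k) (show N ≤ max (N + 1) N₂ by omega)
    have ht := hN₂ (max (N + 1) N₂) (le_max_right _ _)
    linarith
  · exact hN₂ _ (le_max_right _ _)

lemma glide {y : ℕ → c0} {δ : ℝ} (hδpos : 0 < δ)
    (hcol : ∀ k, Summable fun n => |y n k|)
    (hbig : ∀ N, ∃ k, δ < ∑' n, |y (n + N) k|) :
    ∃ Ns ks : ℕ → ℕ, StrictMono Ns ∧ StrictMono ks ∧ Ns 0 = 0 ∧
      ∀ j, (∑ n ∈ Finset.range (Ns j), |y n (ks j)|) ≤ δ / 8 ∧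
        δ / 2 ≤ (∑ n ∈ Finset.Ico (Ns j) (Ns (j + 1)), |y n (ks j)|) ∧
        (∑' n, |y (n + Ns (j + 1)) (ks j)|) ≤ δ / 8 := by
  choose kf Nf h1 h2 h3 h4 h5 using glide_step hδpos hcol hbig
  let F : ℕ → ℕ × ℕ := fun j => Nat.rec (0, 0) (fun _ p => (Nf p.1 p.2, kf p.1 p.2)) j
  have hF : ∀ j, F (j + 1) = (Nf (F j).1 (F j).2, kf (F j).1 (F j).2) := fun j => rfl
  refine ⟨fun j => (F j).1, fun j => kf (F j).1 (F j).2, ?_, ?_, rfl, ?_⟩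
  · refine strictMono_nat_of_lt_succ fun j => ?_
    rw [hF j]
    exact h2 (F j).1 (F j).2
  · refine strictMono_nat_of_lt_succ fun j => ?_
    calc kf (F j).1 (F j).2 = (F (j+1)).2 := by rw [hF j]
      _ < kf (F (j+1)).1 (F (j+1)).2 := h1 (F (j+1)).1 (F (j+1)).2
  · intro j
    refine ⟨h3 (F j).1 (F j).2, ?_, ?_⟩
    · have := h4 (F j).1 (F j).2
      rwa [← (show (F (j+1)).1 = Nf (F j).1 (F j).2 from by rw [hF j])] at this
    · have := h5 (F j).1 (F j).2
      rwa [← (show (F (j+1)).1 = Nf (F j).1 (F j).2 from by rw [hF j])] at this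

lemma sum_blocks {a : ℕ → ℝ} {Ns : ℕ → ℕ} (hm : Monotone Ns) (J : ℕ) :
    ∑ j ∈ Finset.range J, ∑ n ∈ Finset.Ico (Ns j) (Ns (j + 1)), a n
      = ∑ n ∈ Finset.Ico (Ns 0) (Ns J), a n := by
  induction J with
  | zero => simp
  | succ J ih =>
    rw [Finset.sum_range_succ, ih,
      Finset.sum_Ico_consecutive _ (hm (Nat.zero_le J)) (hm (Nat.le_succ J))]

lemma summable_blocks {a : ℕ → ℝ} (ha : ∀ n, 0 ≤ a n) (hs : Summable a)
    {Ns : ℕ → ℕ} (hm : Monotone Ns) :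
    Summable fun j => ∑ n ∈ Finset.Ico (Ns j) (Ns (j + 1)), a n := by
  refine summable_of_sum_range_le (c := ∑' n, a n)
    (fun j => Finset.sum_nonneg fun n _ => ha n) fun J => ?_
  rw [sum_blocks hm J]
  exact Summable.sum_le_tsum _ (fun n _ => ha n) hs

lemma sign_mul_self' (r : ℝ) : Real.sign r * r = |r| := by
  rcases lt_trichotomy r 0 with h | h | h
  · rw [Real.sign_of_neg h, abs_of_neg h]; ring
  · simp [h]
  · rw [Real.sign_of_pos h, abs_of_pos h]; ring

lemma abs_sign_le (r : ℝ) : |Real.sign r| ≤ 1 := by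
  rcases lt_trichotomy r 0 with h | h | h
  · rw [Real.sign_of_neg h]; norm_num
  · simp [h]
  · rw [Real.sign_of_pos h]; norm_num


@[simp] lemma Amap_apply (v : Fin 2 → c0) (m : ℕ) :
    Amap v m = v 0 (iIdx m) * v 1 (jIdx m) := rfl

/-- There is a continuous 2-homogeneous polynomial `P : c₀ → c₀` vanishing on the unit vector
basis which is nevertheless an Orlicz–Pettis polynomial. -/
theorem exists_orlicz_pettis_vanishing_on_basis :
    ∃ A : ContinuousMultilinearMap ℝ (fun _ : Fin 2 => c0) c0,
      (∀ n : ℕ, (A fun _ => e n) = 0) ∧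
      ∀ (Z : Type u) [NormedAddCommGroup Z] [NormedSpace ℝ Z] [CompleteSpace Z]
        (T : Z →L[ℝ] c0), UCPoly (fun z => A fun _ => T z) → UCOp ⇑T := by
  classical
  refine ⟨Amap, ?_, ?_⟩
  · intro n
    ext m
    have hne : iIdx m ≠ jIdx m := (iIdx_lt_jIdx m).ne
    show (e n) (iIdx m) * (e n) (jIdx m) = (0 : c0) m
    by_cases h : iIdx m = n
    · have h2 : jIdx m ≠ n := fun hc => hne (h.trans hc.symm)
      simp [e, h, h2]
    · simp [e, h]
  · intro Z _ _ _ T hP x hx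
    by_contra hns
    set y : ℕ → c0 := fun n => T (x n) with hy
    have hcol : ∀ k, Summable fun n => |y n k| := by
      intro k
      have := hx ((evalCLM k).comp T)
      simpa using this
    have hbigE : ∃ δ > (0:ℝ), ∀ N, ∃ k, δ < ∑' n, |y (n + N) k| := by
      by_contra hc
      push_neg at hc
      exact hns (summable_c0 hcol hc)
    obtain ⟨δ, hδpos, hbig⟩ := hbigE
    obtain ⟨Ns, ks, hNs, hks, hNs0, hprop⟩ := glide hδpos hcol hbig
    set x' : ℕ → Z := fun j =>
      ∑ n ∈ Finset.Ico (Ns j) (Ns (j + 1)), Real.sign (y n (ks j)) • x n with hx'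
    have hwuc : WUC x' := by
      intro φ
      have hb : ∀ j, |φ (x' j)| ≤ ∑ n ∈ Finset.Ico (Ns j) (Ns (j + 1)), |φ (x n)| := by
        intro j
        rw [hx']
        simp only [map_sum, map_smul, smul_eq_mul]
        refine le_trans (Finset.abs_sum_le_sum_abs _ _) (Finset.sum_le_sum fun n _ => ?_)
        rw [abs_mul]
        nlinarith [abs_sign_le (y n (ks j)), abs_nonneg (φ (x n))]
      exact Summable.of_nonneg_of_le (fun j => abs_nonneg _) hb
        (summable_blocks (fun n => abs_nonneg _) (hx φ) hNs.monotone)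
    obtain ⟨L, hL⟩ := hP x' hwuc
    -- coordinates of T applied to blocks
    have hTx' : ∀ j k, (T (x' j)) k
        = ∑ n ∈ Finset.Ico (Ns j) (Ns (j + 1)), Real.sign (y n (ks j)) * y n k := by
      intro j k
      rw [hx']
      rw [map_sum, ← evalCLM_apply, map_sum]
      refine Finset.sum_congr rfl fun n _ => ?_
      rw [map_smul, map_smul]
      simp [hy]
    have hw : ∀ m k, (T (∑ j ∈ Finset.range m, x' j)) k
        = ∑ j ∈ Finset.range m, (T (x' j)) k := by
      intro m k
      rw [map_sum, ← evalCLM_apply, map_sum]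
      rfl
    -- the key lower bound on coordinates of the partial sums
    have hkey : ∀ a m, a < m → δ / 4 ≤ (T (∑ j ∈ Finset.range m, x' j)) (ks a) := by
      intro a m ham
      rw [hw]
      set t : ℕ → ℝ := fun j => (T (x' j)) (ks a) with hts
      have hta : δ / 2 ≤ t a := by
        have : t a = ∑ n ∈ Finset.Ico (Ns a) (Ns (a + 1)), |y n (ks a)| := by
          rw [hts]
          simp only
          rw [hTx' a (ks a)]
          exact Finset.sum_congr rfl fun n _ => sign_mul_self' _
        rw [this]
        exact (hprop a).2.1
      have habs : ∀ j, |t j| ≤ ∑ n ∈ Finset.Ico (Ns j) (Ns (j + 1)), |y n (ks a)| := by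
        intro j
        rw [hts]
        simp only
        rw [hTx' j (ks a)]
        refine le_trans (Finset.abs_sum_le_sum_abs _ _) (Finset.sum_le_sum fun n _ => ?_)
        rw [abs_mul]
        nlinarith [abs_sign_le (y n (ks j)), abs_nonneg (y n (ks a))]
      have hsum1 : ∑ j ∈ Finset.range a, |t j| ≤ δ / 8 := by
        calc ∑ j ∈ Finset.range a, |t j|
            ≤ ∑ j ∈ Finset.range a, ∑ n ∈ Finset.Ico (Ns j) (Ns (j + 1)), |y n (ks a)| :=
              Finset.sum_le_sum fun j _ => habs j
          _ = ∑ n ∈ Finset.Ico (Ns 0) (Ns a), |y n (ks a)| := sum_blocks hNs.monotone a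
          _ ≤ δ / 8 := by
              rw [hNs0, ← Finset.range_eq_Ico]
              exact (hprop a).1
      have hsum2 : ∑ j ∈ Finset.Ico (a + 1) m, |t j| ≤ δ / 8 := by
        have hblocks2 : ∑ j ∈ Finset.Ico (a + 1) m, ∑ n ∈ Finset.Ico (Ns j) (Ns (j + 1)), |y n (ks a)|
            = ∑ n ∈ Finset.Ico (Ns (a + 1)) (Ns m), |y n (ks a)| := by
          have hmono : Monotone fun i => Ns (a + 1 + i) :=
            fun i i' hii => hNs.monotone (by omega)
          have := sum_blocks (a := fun n => |y n (ks a)|) hmono (m - (a + 1))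
          rw [Finset.sum_Ico_eq_sum_range]
          calc ∑ i ∈ Finset.range (m - (a + 1)),
                ∑ n ∈ Finset.Ico (Ns (a + 1 + i)) (Ns (a + 1 + i + 1)), |y n (ks a)|
              = ∑ i ∈ Finset.range (m - (a + 1)),
                ∑ n ∈ Finset.Ico (Ns (a + 1 + i)) (Ns (a + 1 + (i + 1))), |y n (ks a)| := rfl
            _ = ∑ n ∈ Finset.Ico (Ns (a + 1 + 0)) (Ns (a + 1 + (m - (a + 1)))), |y n (ks a)| :=
                this
            _ = ∑ n ∈ Finset.Ico (Ns (a + 1)) (Ns m), |y n (ks a)| := by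
                have harith : a + 1 + (m - (a + 1)) = m := by omega
                rw [harith]
        calc ∑ j ∈ Finset.Ico (a + 1) m, |t j|
            ≤ ∑ j ∈ Finset.Ico (a + 1) m, ∑ n ∈ Finset.Ico (Ns j) (Ns (j + 1)), |y n (ks a)| :=
              Finset.sum_le_sum fun j _ => habs j
          _ = ∑ n ∈ Finset.Ico (Ns (a + 1)) (Ns m), |y n (ks a)| := hblocks2
          _ ≤ ∑' n, |y (n + Ns (a + 1)) (ks a)| := by
              refine sum_le_tail (fun n => abs_nonneg _) (hcol (ks a)) fun n hn => ?_
              exact (Finset.mem_Ico.mp hn).1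
          _ ≤ δ / 8 := (hprop a).2.2
      have hsplit : ((Finset.range m).erase a) = Finset.range a ∪ Finset.Ico (a + 1) m := by
        ext j
        simp only [Finset.mem_erase, Finset.mem_range, Finset.mem_union, Finset.mem_Ico]
        omega
      have hdisj : Disjoint (Finset.range a) (Finset.Ico (a + 1) m) := by
        rw [Finset.disjoint_left]
        intro j hj1 hj2
        rw [Finset.mem_range] at hj1
        rw [Finset.mem_Ico] at hj2
        omega
      have hdecomp : ∑ j ∈ Finset.range m, t j
          = t a + ∑ j ∈ (Finset.range m).erase a, t j :=
        (Finset.add_sum_erase _ _ (Finset.mem_range.mpr ham)).symm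
      have herase : |∑ j ∈ (Finset.range m).erase a, t j| ≤ δ / 4 := by
        refine le_trans (Finset.abs_sum_le_sum_abs _ _) ?_
        rw [hsplit, Finset.sum_union hdisj]
        linarith
      have hnegabs := neg_abs_le (∑ j ∈ (Finset.range m).erase a, t j)
      rw [hdecomp]
      linarith
    -- coordinatewise convergence of the polynomial values
    have hcoord : ∀ c : ℕ, Tendsto (fun m => (T (∑ j ∈ Finset.range m, x' j)) (iIdx c) *
        (T (∑ j ∈ Finset.range m, x' j)) (jIdx c)) atTop (𝓝 (L c)) := by
      intro c
      have h1 := ((evalCLM c).continuous.tendsto L).comp hL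
      exact h1
    -- pick a far coordinate
    obtain ⟨C₀, hC₀⟩ := eventually_atTop.mp
      ((c0_tendsto L).eventually (eventually_abs_sub_lt 0 (show (0:ℝ) < δ^2/16 by positivity)))
    set b := C₀ + ks 0 + 1 with hb
    have hklt : ks 0 < ks b := hks (by omega)
    set c := mIdx (ks 0) (ks b) with hc
    have hi : iIdx c = ks 0 := iIdx_mIdx _ _
    have hj : jIdx c = ks b := jIdx_mIdx hklt
    have hcge : C₀ ≤ c := by
      have h1 : ks b - ks 0 - 1 ≤ c := Nat.right_le_pair _ _
      have h2 : b ≤ ks b := hks.le_apply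
      omega
    have hge : δ^2/16 ≤ L c := by
      refine ge_of_tendsto (hcoord c) (eventually_atTop.mpr ⟨b + 1, fun m hm => ?_⟩)
      rw [hi, hj]
      have h1 := hkey 0 m (by omega)
      have h2 := hkey b m (by omega)
      nlinarith
    have hlt := hC₀ c hcge
    simp only [sub_zero] at hlt
    have : L c ≤ |L c| := le_abs_self _
    linarith
end
end
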